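/- arXiv:1906.00103 — 7 statements merged into one kernel-verified Lean document; each statement's English description precedes it below -/
import Mathlib

section
/- For each n ≥ 1, the sum over all permutations σ of {1,...,n} of (1/2)^{(number of j in {2,...,n} that are not peaks)} equals the Euler number E_n. Equivalently, 2^{1-n} · Σ_{σ ∈ S_n} 2^{pk(σ)} = E_n. -/
open Finset

/-- The Euler numbers `E n`, defined as the Taylor coefficients (times `n!`)
of `tan x + sec x` at `0`, i.e. `E n = (d/dx)^n (tan x + sec x) |_{x=0}`. -/
noncomputable def eulerE (n : ℕ) : ℝ :=
  iteratedDeriv n (fun x : ℝ => Real.tan x + (Real.cos x)⁻¹) 0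

/-- The word `σ_1 ⋯ σ_n` extended by the boundary convention `σ_0 = σ_{n+1} = +∞`,
encoded with values in `{0, …, n-1}` and `n` playing the role of `+∞`. -/
def extWord (n : ℕ) (σ : Equiv.Perm (Fin n)) (j : ℕ) : ℕ :=
  if h : 1 ≤ j ∧ j - 1 < n then (σ ⟨j - 1, h.2⟩ : ℕ) else n

/-- number of peaks of `σ` (positions `j ∈ {1,…,n}` with `σ_{j-1} < σ_j > σ_{j+1}`). -/
def pk (n : ℕ) (σ : Equiv.Perm (Fin n)) : ℕ :=
  ((Finset.Icc 1 n).filter (fun j =>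
    extWord n σ (j-1) < extWord n σ j ∧ extWord n σ (j+1) < extWord n σ j)).card

/-- number of valleys of `σ` (positions `j ∈ {1,…,n}` with `σ_{j-1} > σ_j < σ_{j+1}`). -/
def valy (n : ℕ) (σ : Equiv.Perm (Fin n)) : ℕ :=
  ((Finset.Icc 1 n).filter (fun j =>
    extWord n σ j < extWord n σ (j-1) ∧ extWord n σ j < extWord n σ (j+1))).card

/-- number of double ascents of `σ` (positions `j ∈ {1,…,n}` with `σ_{j-1} < σ_j < σ_{j+1}`). -/
def da (n : ℕ) (σ : Equiv.Perm (Fin n)) : ℕ :=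
  ((Finset.Icc 1 n).filter (fun j =>
    extWord n σ (j-1) < extWord n σ j ∧ extWord n σ j < extWord n σ (j+1))).card

/-- number of peaks among positions `j ∈ {2,…,n}`. -/
def pk2 (n : ℕ) (σ : Equiv.Perm (Fin n)) : ℕ :=
  ((Finset.Icc 2 n).filter (fun j =>
    extWord n σ (j-1) < extWord n σ j ∧ extWord n σ (j+1) < extWord n σ j)).card

/-- number of double ascents among positions `j ∈ {2,…,n}`. -/
def da2 (n : ℕ) (σ : Equiv.Perm (Fin n)) : ℕ :=
  ((Finset.Icc 2 n).filter (fun j =>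
    extWord n σ (j-1) < extWord n σ j ∧ extWord n σ j < extWord n σ (j+1))).card

/-- number of ascents of `σ` among positions `1,…,n-1` (`σ_j < σ_{j+1}`). -/
def asc (n : ℕ) (σ : Equiv.Perm (Fin n)) : ℕ :=
  ((Finset.Icc 1 (n-1)).filter (fun j => extWord n σ j < extWord n σ (j+1))).card

/-- number of descents of `σ` among positions `1,…,n-1` (`σ_j > σ_{j+1}`). -/
def des (n : ℕ) (σ : Equiv.Perm (Fin n)) : ℕ :=
  ((Finset.Icc 1 (n-1)).filter (fun j => extWord n σ (j+1) < extWord n σ j)).card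

open Polynomial

noncomputable def myP : ℕ → Polynomial ℝ
  | 0 => X
  | (k+1) => Polynomial.C (1/2) * (1 + X^2) * (myP k).derivative

noncomputable abbrev myf : ℝ → ℝ := fun x : ℝ => Real.tan x + (Real.cos x)⁻¹

lemma myf_hasDeriv {x : ℝ} (hx : x ∈ Set.Ioo (-(Real.pi/2)) (Real.pi/2)) :
    HasDerivAt myf ((1 + (myf x)^2)/2) x := by
  have hc : Real.cos x ≠ 0 := ne_of_gt (Real.cos_pos_of_mem_Ioo hx)
  have h1 := Real.hasDerivAt_tan hc
  have h2 := (Real.hasDerivAt_cos x).inv hc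
  have h := h1.add h2
  have h' : HasDerivAt myf (1 / Real.cos x ^ 2 + - -Real.sin x / Real.cos x ^ 2) x := h
  convert h' using 1
  simp only [myf, Real.tan_eq_sin_div_cos]
  have hs : Real.sin x ^2 + Real.cos x ^2 = 1 := Real.sin_sq_add_cos_sq x
  field_simp
  ring_nf
  nlinarith [hs]

lemma iteratedDeriv_myf (k : ℕ) {x : ℝ} (hx : x ∈ Set.Ioo (-(Real.pi/2)) (Real.pi/2)) :
    iteratedDeriv k myf x = (myP k).eval (myf x) := by
  induction k generalizing x with
  | zero => simp [myP]
  | succ k ih =>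
    rw [iteratedDeriv_succ]
    have hev : (iteratedDeriv k myf) =ᶠ[nhds x] (fun y => (myP k).eval (myf y)) := by
      filter_upwards [isOpen_Ioo.mem_nhds hx] with y hy using ih hy
    rw [hev.deriv_eq]
    have hd : HasDerivAt (fun y => (myP k).eval (myf y))
        ((myP k).derivative.eval (myf x) * ((1 + (myf x)^2)/2)) x :=
      ((myP k).hasDerivAt (myf x)).comp x (myf_hasDeriv hx)
    rw [hd.deriv]
    simp [myP]
    ring

lemma eulerE_eq_evalP (n : ℕ) : eulerE n = (myP n).eval 1 := by
  have h0 : (0:ℝ) ∈ Set.Ioo (-(Real.pi/2)) (Real.pi/2) := by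
    have := Real.pi_pos
    constructor <;> [linarith; linarith]
  have := iteratedDeriv_myf n h0
  rw [eulerE]
  have hf0 : myf 0 = 1 := by simp [myf]
  rw [show (fun x : ℝ => Real.tan x + (Real.cos x)⁻¹) = myf from rfl, this, hf0]

abbrev PkP (n : ℕ) (σ : Equiv.Perm (Fin n)) (j : ℕ) : Prop :=
  extWord n σ (j-1) < extWord n σ j ∧ extWord n σ (j+1) < extWord n σ j

lemma pk_eq (n : ℕ) (σ : Equiv.Perm (Fin n)) :
    pk n σ = ((Finset.Icc 1 n).filter (PkP n σ)).card := rfl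

-- basic word facts
lemma w_lt (n : ℕ) (σ : Equiv.Perm (Fin n)) {j : ℕ} (h1 : 1 ≤ j) (h2 : j ≤ n) :
    extWord n σ j < n := by
  rw [extWord, dif_pos ⟨h1, by omega⟩]; exact (σ _).isLt

lemma w_big (n : ℕ) (σ : Equiv.Perm (Fin n)) {j : ℕ} (h : j = 0 ∨ n + 1 ≤ j) :
    extWord n σ j = n := by
  rw [extWord, dif_neg]; omega

-- the insertion function
def insFun (n : ℕ) (σ : Equiv.Perm (Fin n)) (p : Fin (n+1)) (j : Fin (n+1)) : Fin (n+1) :=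
  if h : (j : ℕ) < (p : ℕ) then (σ ⟨j, by omega⟩).castSucc
  else if h2 : (j : ℕ) = (p : ℕ) then Fin.last n
  else (σ ⟨(j : ℕ) - 1, by omega⟩).castSucc

lemma insFun_injective (n : ℕ) (σ : Equiv.Perm (Fin n)) (p : Fin (n+1)) :
    Function.Injective (insFun n σ p) := by
  intro a b hab
  have ha := a.isLt; have hb := b.isLt; have hp := p.isLt
  unfold insFun at hab
  split_ifs at hab with h1 h2 h3 h4 h5 h6 h7
  all_goals try (exact absurd hab (ne_of_lt (Fin.castSucc_lt_last _)))
  all_goals try (exact absurd hab.symm (ne_of_lt (Fin.castSucc_lt_last _)))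
  all_goals try (apply Fin.ext; omega)
  all_goals
    have h := congrArg Fin.val (σ.injective (Fin.castSucc_injective _ hab))
    simp only [] at h
    apply Fin.ext
    omega

noncomputable def ins (n : ℕ) (σ : Equiv.Perm (Fin n)) (p : Fin (n+1)) : Equiv.Perm (Fin (n+1)) :=
  Equiv.ofBijective (insFun n σ p)
    ((Finite.injective_iff_bijective).mp (insFun_injective n σ p))

lemma ins_apply (n : ℕ) (σ : Equiv.Perm (Fin n)) (p : Fin (n+1)) (j : Fin (n+1)) :
    ins n σ p j = insFun n σ p j := rfl

section values
variable (n : ℕ) (σ : Equiv.Perm (Fin n)) (p : Fin (n+1))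

lemma v_low {j : ℕ} (h1 : 1 ≤ j) (h2 : j ≤ (p : ℕ)) :
    extWord (n+1) (ins n σ p) j = extWord n σ j := by
  have hp := p.isLt
  rw [extWord, dif_pos ⟨h1, by omega⟩, extWord, dif_pos ⟨h1, by omega⟩]
  rw [ins_apply, insFun, dif_pos (show j - 1 < (p:ℕ) by omega)]
  simp

lemma v_mid : extWord (n+1) (ins n σ p) ((p : ℕ) + 1) = n := by
  have hp := p.isLt
  rw [extWord, dif_pos ⟨by omega, by omega⟩]
  rw [ins_apply, insFun]
  rw [dif_neg (by simp only [Fin.val_mk]; omega), dif_pos (by simp only [Fin.val_mk]; omega)]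
  simp

lemma v_high {j : ℕ} (h1 : (p : ℕ) + 2 ≤ j) (h2 : j ≤ n + 1) :
    extWord (n+1) (ins n σ p) j = extWord n σ (j - 1) := by
  have hp := p.isLt
  rw [extWord, dif_pos ⟨by omega, by omega⟩, extWord, dif_pos ⟨by omega, by omega⟩]
  rw [ins_apply, insFun, dif_neg (by simp only [Fin.val_mk]; omega), dif_neg (by simp only [Fin.val_mk]; omega)]
  simp

lemma v_big {j : ℕ} (h : j = 0 ∨ n + 2 ≤ j) :
    extWord (n+1) (ins n σ p) j = n + 1 := by
  rw [extWord, dif_neg]; omega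

end values

section peaks
variable (n : ℕ) (σ : Equiv.Perm (Fin n)) (p : Fin (n+1))

lemma peak_range (hn : 1 ≤ n) {q : ℕ} (h : PkP n σ q) : 2 ≤ q ∧ q ≤ n - 1 := by
  by_contra hc
  have e0 : extWord n σ 0 = n := w_big n σ (Or.inl rfl)
  rcases h with ⟨h1, h2⟩
  have hq : q = 0 ∨ q = 1 ∨ q = n ∨ n + 1 ≤ q := by omega
  rcases hq with h | h | h | hq
  · rw [h, show (0:ℕ) - 1 = 0 from rfl] at h1; omega
  · have := w_lt n σ (le_refl 1) hn
    rw [h, show (1:ℕ) - 1 = 0 from rfl] at h1; omega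
  · have h3 : extWord n σ (n+1) = n := w_big n σ (Or.inr le_rfl)
    have := w_lt n σ (j := n) hn le_rfl
    rw [h] at h1 h2
    omega
  · have h3 : extWord n σ q = n := w_big n σ (Or.inr hq)
    have h4 : extWord n σ (q+1) = n := w_big n σ (Or.inr (by omega))
    omega

lemma not_adjacent {q : ℕ} (h : PkP n σ q) : ¬ PkP n σ (q+1) := by
  intro h2
  have := h.2
  have := h2.1
  simp only [Nat.add_sub_cancel] at this
  omega

lemma pkN_low {j : ℕ} (h1 : 1 ≤ j) (h2 : j + 1 ≤ (p:ℕ)) :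
    PkP (n+1) (ins n σ p) j ↔ PkP n σ j := by
  have hp := p.isLt
  have hv2 : extWord (n+1) (ins n σ p) j = extWord n σ j := v_low n σ p h1 (by omega)
  have hv3 : extWord (n+1) (ins n σ p) (j+1) = extWord n σ (j+1) := v_low n σ p (by omega) (by omega)
  rcases Nat.eq_or_lt_of_le h1 with h | h
  · subst h
    have hb1 : extWord (n+1) (ins n σ p) 0 = n + 1 := v_big n σ p (Or.inl rfl)
    have hb2 : extWord n σ 0 = n := w_big n σ (Or.inl rfl)
    have hw : extWord n σ 1 < n := w_lt n σ le_rfl (by omega)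
    unfold PkP
    rw [show (1:ℕ) - 1 = 0 from rfl, hb1, hb2, hv2, hv3]
    omega
  · have hv1 : extWord (n+1) (ins n σ p) (j-1) = extWord n σ (j-1) :=
      v_low n σ p (by omega) (by omega)
    unfold PkP
    rw [hv1, hv2, hv3]

lemma pkN_at_p (hP : 1 ≤ (p:ℕ)) : ¬ PkP (n+1) (ins n σ p) (p:ℕ) := by
  have hp := p.isLt
  intro h
  have h2 := h.2
  have hm : extWord (n+1) (ins n σ p) ((p:ℕ)+1) = n := v_mid n σ p
  have hl : extWord (n+1) (ins n σ p) (p:ℕ) = extWord n σ (p:ℕ) := v_low n σ p hP le_rfl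
  have := w_lt n σ hP (by omega)
  omega

lemma pkN_at_p1 : PkP (n+1) (ins n σ p) ((p:ℕ)+1) ↔ (1 ≤ (p:ℕ) ∧ (p:ℕ) ≤ n - 1) := by
  have hp := p.isLt
  have hm : extWord (n+1) (ins n σ p) ((p:ℕ)+1) = n := v_mid n σ p
  unfold PkP
  rw [Nat.add_sub_cancel, hm]
  by_cases h0 : (p:ℕ) = 0
  · have hb : extWord (n+1) (ins n σ p) (p:ℕ) = n + 1 := v_big n σ p (Or.inl h0)
    rw [hb]; omega
  · have hl : extWord (n+1) (ins n σ p) (p:ℕ) = extWord n σ (p:ℕ) :=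
      v_low n σ p (by omega) le_rfl
    have hwp := w_lt n σ (j := (p:ℕ)) (by omega) (by omega)
    by_cases hn1 : (p:ℕ) = n
    · have hb2 : extWord (n+1) (ins n σ p) ((p:ℕ)+2) = n + 1 := v_big n σ p (Or.inr (by omega))
      rw [hb2, hl]; omega
    · have hh : extWord (n+1) (ins n σ p) ((p:ℕ)+2) = extWord n σ ((p:ℕ)+1) :=
        v_high n σ p le_rfl (by omega)
      have hw1 := w_lt n σ (j := (p:ℕ)+1) (by omega) (by omega)
      rw [hh, hl]; omega

lemma pkN_at_p2 (h : (p:ℕ) + 2 ≤ n + 1) : ¬ PkP (n+1) (ins n σ p) ((p:ℕ)+2) := by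
  intro hk
  have h1 := hk.1
  rw [show (p:ℕ) + 2 - 1 = (p:ℕ) + 1 from rfl] at h1
  have hm : extWord (n+1) (ins n σ p) ((p:ℕ)+1) = n := v_mid n σ p
  have hh : extWord (n+1) (ins n σ p) ((p:ℕ)+2) = extWord n σ ((p:ℕ)+1) :=
    v_high n σ p le_rfl h
  have := w_lt n σ (j := (p:ℕ)+1) (by omega) (by omega)
  omega

lemma pkN_high {j : ℕ} (h1 : (p:ℕ) + 3 ≤ j) (h2 : j ≤ n + 1) :
    PkP (n+1) (ins n σ p) j ↔ PkP n σ (j-1) := by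
  have hv1 : extWord (n+1) (ins n σ p) (j-1) = extWord n σ (j-1-1) := by
    rw [v_high n σ p (by omega) (by omega)]
  have hv2 : extWord (n+1) (ins n σ p) j = extWord n σ (j-1) := v_high n σ p (by omega) h2
  unfold PkP
  rw [hv1, hv2, show j - 1 + 1 = j by omega]
  rcases Nat.eq_or_lt_of_le h2 with h | h
  · have hb : extWord (n+1) (ins n σ p) (j+1) = n + 1 := v_big n σ p (Or.inr (by omega))
    have hb2 : extWord n σ j = n := w_big n σ (Or.inr (by omega))
    have hw := w_lt n σ (j := j-1) (by omega) (by omega)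
    rw [hb, hb2]
    omega
  · have hv3 : extWord (n+1) (ins n σ p) (j+1) = extWord n σ j := by
      rw [v_high n σ p (by omega) (by omega), Nat.add_sub_cancel]
    rw [hv3]

end peaks

section pkins
variable (n : ℕ) (σ : Equiv.Perm (Fin n)) (p : Fin (n+1))

lemma pk_ins (hn : 1 ≤ n) :
    pk (n+1) (ins n σ p) = pk n σ +
      (if 1 ≤ (p:ℕ) ∧ (p:ℕ) ≤ n - 1 ∧ ¬ PkP n σ (p:ℕ) ∧ ¬ PkP n σ ((p:ℕ)+1)
        then 1 else 0) := by
  classical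
  have hp : (p:ℕ) ≤ n := by have := p.isLt; omega
  set P := (p:ℕ) with hPdef
  set B := (Finset.Icc 1 n).filter (PkP n σ) with hB
  set A := (Finset.Icc 1 (n+1)).filter (PkP (n+1) (ins n σ p)) with hA
  set S : Finset ℕ := (if 1 ≤ P ∧ P ≤ n - 1 then {P+1} else ∅) with hS
  have hSmem : ∀ j, j ∈ S ↔ ((1 ≤ P ∧ P ≤ n - 1) ∧ j = P + 1) := by
    intro j; rw [hS]; split_ifs with h <;> simp [h]
  have hAeq : A = ((B.filter (fun q => q < P)) ∪
      ((B.filter (fun q => P + 2 ≤ q)).image (· + 1))) ∪ S := by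
    ext j
    simp only [hA, hB, Finset.mem_union, Finset.mem_filter, Finset.mem_Icc,
      Finset.mem_image, hSmem j]
    have hcase : (j = 0 ∨ n + 2 ≤ j) ∨ (1 ≤ j ∧ j + 1 ≤ P) ∨ (j = P ∧ 1 ≤ P)
        ∨ j = P + 1 ∨ (j = P + 2 ∧ P + 2 ≤ n + 1) ∨ (P + 3 ≤ j ∧ j ≤ n + 1) := by omega
    rcases hcase with h | h | h | h | h | h
    · constructor
      · rintro ⟨⟨h1, h2⟩, -⟩; omega
      · rintro ((⟨⟨⟨u1, u2⟩, -⟩, u3⟩ | ⟨x, ⟨⟨⟨x1, x2⟩, -⟩, x3⟩, hx⟩) | ⟨⟨g1, g2⟩, hj⟩) <;> omega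
    · rw [pkN_low n σ p h.1 h.2]
      constructor
      · rintro ⟨⟨h1, h2⟩, hPk⟩
        exact Or.inl (Or.inl ⟨⟨⟨h1, by omega⟩, hPk⟩, by omega⟩)
      · rintro ((⟨⟨⟨u1, u2⟩, hPk⟩, u3⟩ | ⟨x, ⟨⟨⟨x1, x2⟩, -⟩, x3⟩, hx⟩) | ⟨⟨g1, g2⟩, hj⟩)
        · exact ⟨⟨u1, by omega⟩, hPk⟩
        · omega
        · omega
    · constructor
      · rintro ⟨-, hPk⟩
        rw [h.1] at hPk
        exact absurd hPk (pkN_at_p n σ p h.2)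
      · rintro ((⟨⟨⟨u1, u2⟩, -⟩, u3⟩ | ⟨x, ⟨⟨⟨x1, x2⟩, -⟩, x3⟩, hx⟩) | ⟨⟨g1, g2⟩, hj⟩) <;> omega
    · subst h
      constructor
      · rintro ⟨-, hPk⟩
        exact Or.inr ⟨(pkN_at_p1 n σ p).mp hPk, rfl⟩
      · rintro ((⟨⟨⟨u1, u2⟩, -⟩, u3⟩ | ⟨x, ⟨⟨⟨x1, x2⟩, -⟩, x3⟩, hx⟩) | ⟨hg, -⟩)
        · omega
        · omega
        · exact ⟨⟨by omega, by omega⟩, (pkN_at_p1 n σ p).mpr hg⟩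
    · constructor
      · rintro ⟨-, hPk⟩
        rw [h.1] at hPk
        exact absurd hPk (pkN_at_p2 n σ p h.2)
      · rintro ((⟨⟨⟨u1, u2⟩, -⟩, u3⟩ | ⟨x, ⟨⟨⟨x1, x2⟩, -⟩, x3⟩, hx⟩) | ⟨⟨g1, g2⟩, hj⟩) <;> omega
    · rw [pkN_high n σ p h.1 h.2]
      constructor
      · rintro ⟨⟨h1, h2⟩, hPk⟩
        exact Or.inl (Or.inr ⟨j - 1, ⟨⟨⟨by omega, by omega⟩, hPk⟩, by omega⟩, by omega⟩)
      · rintro ((⟨⟨⟨u1, u2⟩, hPk⟩, u3⟩ | ⟨x, ⟨⟨⟨x1, x2⟩, hPk⟩, x3⟩, hx⟩) | ⟨⟨g1, g2⟩, hj⟩)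
        · omega
        · refine ⟨⟨by omega, by omega⟩, ?_⟩
          rw [show j - 1 = x by omega]; exact hPk
        · omega
  -- cards
  have hinj : Function.Injective (· + 1 : ℕ → ℕ) := fun a b hab => by
    have h : a + 1 = b + 1 := hab
    omega
  have d_f1_img : Disjoint (B.filter (fun q => q < P))
      ((B.filter (fun q => P + 2 ≤ q)).image (· + 1)) := by
    rw [Finset.disjoint_left]
    intro a ha hb
    rw [Finset.mem_filter] at ha
    rw [Finset.mem_image] at hb
    obtain ⟨x, hx, hxa⟩ := hb
    rw [Finset.mem_filter] at hx
    have hxa' : x + 1 = a := hxa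
    obtain ⟨-, hx2⟩ := hx
    obtain ⟨-, ha2⟩ := ha
    omega
  have d_S : Disjoint ((B.filter (fun q => q < P)) ∪
      ((B.filter (fun q => P + 2 ≤ q)).image (· + 1))) S := by
    rw [Finset.disjoint_left]
    intro a ha hb
    rw [hSmem a] at hb
    rw [Finset.mem_union] at ha
    obtain ⟨hb1, hb2⟩ := hb
    rcases ha with ha | ha
    · rw [Finset.mem_filter] at ha
      obtain ⟨-, ha2⟩ := ha
      omega
    · rw [Finset.mem_image] at ha
      obtain ⟨x, hx, hxa⟩ := ha
      rw [Finset.mem_filter] at hx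
      have hxa' : x + 1 = a := hxa
      obtain ⟨-, hx2⟩ := hx
      omega
  have hScard : S.card = (if 1 ≤ P ∧ P ≤ n - 1 then 1 else 0) := by
    rw [hS]; split_ifs <;> simp
  have hcard1 : A.card = (B.filter (fun q => q < P)).card
      + (B.filter (fun q => P + 2 ≤ q)).card + (if 1 ≤ P ∧ P ≤ n - 1 then 1 else 0) := by
    rw [hAeq, Finset.card_union_of_disjoint d_S, Finset.card_union_of_disjoint d_f1_img,
      Finset.card_image_of_injective _ hinj, hScard]
  -- B decomposition
  have hBeq : B = ((B.filter (fun q => q < P)) ∪ (B.filter (fun q => q = P)))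
      ∪ ((B.filter (fun q => q = P + 1)) ∪ (B.filter (fun q => P + 2 ≤ q))) := by
    ext j
    simp only [Finset.mem_union, Finset.mem_filter]
    by_cases hj : j ∈ B <;> simp [hj] <;> omega
  have hdisj : ∀ (c d : ℕ → Prop) (_ : DecidablePred c) (_ : DecidablePred d),
      (∀ x, c x → d x → False) →
      Disjoint (B.filter c) (B.filter d) := by
    intro c d _ _ hcd
    rw [Finset.disjoint_left]
    intro a ha hb
    rw [Finset.mem_filter] at ha hb
    exact hcd a ha.2 hb.2
  have d12 : Disjoint (B.filter (fun q => q < P)) (B.filter (fun q => q = P)) :=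
    hdisj _ _ _ _ (fun x h1 h2 => by omega)
  have d34 : Disjoint (B.filter (fun q => q = P + 1)) (B.filter (fun q => P + 2 ≤ q)) :=
    hdisj _ _ _ _ (fun x h1 h2 => by omega)
  have d1234 : Disjoint ((B.filter (fun q => q < P)) ∪ (B.filter (fun q => q = P)))
      ((B.filter (fun q => q = P + 1)) ∪ (B.filter (fun q => P + 2 ≤ q))) := by
    rw [Finset.disjoint_left]
    intro a ha hb
    simp only [Finset.mem_union, Finset.mem_filter] at ha hb
    rcases ha with ⟨-, ha⟩ | ⟨-, ha⟩ <;> rcases hb with ⟨-, hb⟩ | ⟨-, hb⟩ <;> omega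
  have hcard2 : B.card = (B.filter (fun q => q < P)).card + (B.filter (fun q => q = P)).card
      + ((B.filter (fun q => q = P + 1)).card + (B.filter (fun q => P + 2 ≤ q)).card) := by
    conv_lhs => rw [hBeq]
    rw [Finset.card_union_of_disjoint d1234, Finset.card_union_of_disjoint d12,
      Finset.card_union_of_disjoint d34]
  have hfP : (B.filter (fun q => q = P)).card = if P ∈ B then 1 else 0 := by
    rw [Finset.filter_eq']
    split_ifs <;> simp
  have hfP1 : (B.filter (fun q => q = P + 1)).card = if P + 1 ∈ B then 1 else 0 := by
    rw [Finset.filter_eq']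
    split_ifs <;> simp
  have hPkA : pk (n+1) (ins n σ p) = A.card := pk_eq (n+1) (ins n σ p)
  have hPkB : pk n σ = B.card := pk_eq n σ
  have hmemP : P ∈ B ↔ ((1 ≤ P ∧ P ≤ n) ∧ PkP n σ P) := by
    rw [hB, Finset.mem_filter, Finset.mem_Icc]
  have hmemP1 : P + 1 ∈ B ↔ ((1 ≤ P + 1 ∧ P + 1 ≤ n) ∧ PkP n σ (P+1)) := by
    rw [hB, Finset.mem_filter, Finset.mem_Icc]
  rw [hPkA, hPkB, hcard1, hcard2, hfP, hfP1]
  by_cases h1 : PkP n σ P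
  · have hb := peak_range n σ hn h1
    have hb2 := not_adjacent n σ h1
    rw [if_pos (hmemP.mpr ⟨⟨by omega, by omega⟩, h1⟩), if_neg (fun hc => hb2 (hmemP1.mp hc).2),
      if_pos (⟨by omega, by omega⟩ : 1 ≤ P ∧ P ≤ n - 1), if_neg (fun hc => hc.2.2.1 h1)]
    omega
  · rw [if_neg (fun hc => h1 (hmemP.mp hc).2)]
    by_cases h2 : PkP n σ (P+1)
    · have hb := peak_range n σ hn h2
      rw [if_pos (hmemP1.mpr ⟨⟨by omega, by omega⟩, h2⟩),
        if_pos (⟨by omega, by omega⟩ : 1 ≤ P ∧ P ≤ n - 1), if_neg (fun hc => hc.2.2.2 h2)]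
      omega
    · rw [if_neg (fun hc => h2 (hmemP1.mp hc).2)]
      by_cases h3 : 1 ≤ P ∧ P ≤ n - 1
      · rw [if_pos h3, if_pos ⟨h3.1, h3.2, h1, h2⟩]
        omega
      · rw [if_neg h3, if_neg (fun hc => h3 ⟨hc.1, hc.2.1⟩)]
        omega

end pkins

section counting
variable (n : ℕ) (σ : Equiv.Perm (Fin n))

lemma two_pk_aux (hn : 1 ≤ n) :
    (Finset.univ.filter (fun p : Fin (n+1) =>
      1 ≤ (p:ℕ) ∧ (p:ℕ) ≤ n - 1 ∧ ¬ PkP n σ (p:ℕ) ∧ ¬ PkP n σ ((p:ℕ)+1))).card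
      + 2 * pk n σ = n - 1 := by
  classical
  set G' := (Finset.Icc 1 (n-1)).filter (fun j => ¬ PkP n σ j ∧ ¬ PkP n σ (j+1)) with hG
  set B1 := (Finset.Icc 1 (n-1)).filter (fun j => PkP n σ j) with hB1
  set B2 := (Finset.Icc 1 (n-1)).filter (fun j => PkP n σ (j+1)) with hB2
  -- the Fin-filter has the same card as G'
  have hcardG : (Finset.univ.filter (fun p : Fin (n+1) =>
      1 ≤ (p:ℕ) ∧ (p:ℕ) ≤ n - 1 ∧ ¬ PkP n σ (p:ℕ) ∧ ¬ PkP n σ ((p:ℕ)+1))).card = G'.card := by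
    refine Finset.card_nbij' (fun p => (p : ℕ))
      (fun j => (⟨j % (n+1), Nat.mod_lt _ (Nat.succ_pos n)⟩ : Fin (n+1))) ?_ ?_ ?_ ?_
    · intro a ha
      simp only [Finset.mem_coe, Finset.mem_filter, Finset.mem_univ, true_and] at ha
      rw [hG, Finset.mem_coe, Finset.mem_filter, Finset.mem_Icc]
      exact ⟨⟨ha.1, ha.2.1⟩, ha.2.2⟩
    · intro j hj
      rw [hG, Finset.mem_coe, Finset.mem_filter, Finset.mem_Icc] at hj
      have hjn : j % (n+1) = j := Nat.mod_eq_of_lt (by omega)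
      simp only [Finset.mem_coe, Finset.mem_filter, Finset.mem_univ, true_and, hjn]
      exact ⟨hj.1.1, hj.1.2, hj.2⟩
    · intro a ha
      apply Fin.ext
      simp [Nat.mod_eq_of_lt a.isLt]
    · intro j hj
      rw [hG, Finset.mem_coe, Finset.mem_filter, Finset.mem_Icc] at hj
      simp [Nat.mod_eq_of_lt (show j < n + 1 by omega)]
  have hcardB1 : B1.card = pk n σ := by
    rw [pk_eq]
    congr 1
    ext q
    rw [hB1, Finset.mem_filter, Finset.mem_filter, Finset.mem_Icc, Finset.mem_Icc]
    constructor
    · rintro ⟨⟨h1, h2⟩, h3⟩; exact ⟨⟨h1, by omega⟩, h3⟩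
    · rintro ⟨⟨h1, h2⟩, h3⟩
      have := peak_range n σ hn h3
      exact ⟨⟨h1, by omega⟩, h3⟩
  have hcardB2 : B2.card = pk n σ := by
    rw [pk_eq]
    apply Finset.card_nbij' (fun j => j + 1) (fun j => j - 1)
    · intro a ha
      rw [hB2, Finset.mem_coe, Finset.mem_filter, Finset.mem_Icc] at ha
      beta_reduce
      rw [Finset.mem_coe, Finset.mem_filter, Finset.mem_Icc]
      exact ⟨⟨by omega, by omega⟩, ha.2⟩
    · intro a ha
      rw [Finset.mem_coe, Finset.mem_filter, Finset.mem_Icc] at ha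
      beta_reduce
      rw [hB2, Finset.mem_coe, Finset.mem_filter, Finset.mem_Icc]
      have hb := peak_range n σ hn ha.2
      refine ⟨⟨by omega, by omega⟩, ?_⟩
      rw [show a - 1 + 1 = a by omega]
      exact ha.2
    · intro a ha; beta_reduce; omega
    · intro a ha
      beta_reduce
      rw [Finset.mem_coe, Finset.mem_filter, Finset.mem_Icc] at ha
      have hb := peak_range n σ hn ha.2
      omega
  have hdisj12 : Disjoint B1 B2 := by
    rw [Finset.disjoint_left]
    intro a ha hb
    rw [hB1, Finset.mem_filter] at ha
    rw [hB2, Finset.mem_filter] at hb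
    exact not_adjacent n σ ha.2 hb.2
  have hdisjG : Disjoint G' (B1 ∪ B2) := by
    rw [Finset.disjoint_left]
    intro a ha hb
    rw [hG, Finset.mem_filter] at ha
    rw [Finset.mem_union, hB1, hB2, Finset.mem_filter, Finset.mem_filter] at hb
    rcases hb with hb | hb
    · exact ha.2.1 hb.2
    · exact ha.2.2 hb.2
  have hpart : Finset.Icc 1 (n-1) = G' ∪ (B1 ∪ B2) := by
    ext j
    simp only [hG, hB1, hB2, Finset.mem_union, Finset.mem_filter, Finset.mem_Icc]
    constructor
    · intro hj
      by_cases h1 : PkP n σ j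
      · exact Or.inr (Or.inl ⟨hj, h1⟩)
      · by_cases h2 : PkP n σ (j+1)
        · exact Or.inr (Or.inr ⟨hj, h2⟩)
        · exact Or.inl ⟨hj, h1, h2⟩
    · rintro (⟨hj, -⟩ | ⟨hj, -⟩ | ⟨hj, -⟩) <;> exact hj
  have hcards : (n : ℕ) - 1 = G'.card + (pk n σ + pk n σ) := by
    have := congrArg Finset.card hpart
    rw [Finset.card_union_of_disjoint hdisjG, Finset.card_union_of_disjoint hdisj12,
      hcardB1, hcardB2, Nat.card_Icc] at this
    omega
  rw [hcardG]
  omega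

lemma two_pk_le (hn : 1 ≤ n) : 2 * pk n σ ≤ n - 1 := by
  have := two_pk_aux n σ hn
  omega

end counting

section sumtransfer
variable (n : ℕ)

lemma ins_bijective :
    Function.Bijective (fun q : Equiv.Perm (Fin n) × Fin (n+1) => ins n q.1 q.2) := by
  rw [Fintype.bijective_iff_injective_and_card]
  constructor
  · rintro ⟨σ₁, p₁⟩ ⟨σ₂, p₂⟩ h
    simp only at h
    have hp1 : ins n σ₁ p₁ p₁ = Fin.last n := by
      rw [ins_apply, insFun, dif_neg (lt_irrefl _), dif_pos rfl]
    have hp2 : ins n σ₂ p₂ p₂ = Fin.last n := by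
      rw [ins_apply, insFun, dif_neg (lt_irrefl _), dif_pos rfl]
    have hpe : p₁ = p₂ := by
      apply (ins n σ₂ p₂).injective
      rw [hp2, ← h, hp1]
    subst hpe
    have hσ : σ₁ = σ₂ := by
      ext i
      have hi := i.isLt
      by_cases hip : (i : ℕ) < (p₁ : ℕ)
      · have e1 : ins n σ₁ p₁ i.castSucc = (σ₁ i).castSucc := by
          rw [ins_apply, insFun, dif_pos (by simpa using hip)]
          congr 1
        have e2 : ins n σ₂ p₁ i.castSucc = (σ₂ i).castSucc := by
          rw [ins_apply, insFun, dif_pos (by simpa using hip)]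
          congr 1
        have := e1.symm.trans (by rw [h, e2])
        have := Fin.castSucc_injective n this
        rw [this]
      · have e1 : ins n σ₁ p₁ i.succ = (σ₁ i).castSucc := by
          rw [ins_apply, insFun, dif_neg (by simp; omega), dif_neg (by simp; omega)]
          congr 1
        have e2 : ins n σ₂ p₁ i.succ = (σ₂ i).castSucc := by
          rw [ins_apply, insFun, dif_neg (by simp; omega), dif_neg (by simp; omega)]
          congr 1
        have := e1.symm.trans (by rw [h, e2])
        have := Fin.castSucc_injective n this
        rw [this]
    rw [hσ]
  · rw [Fintype.card_prod, Fintype.card_perm, Fintype.card_fin, Fintype.card_perm,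
      Fintype.card_fin, Nat.factorial_succ]
    ring

lemma sum_perm_succ {M : Type*} [AddCommMonoid M] (hn : 1 ≤ n) (F : ℕ → M) :
    ∑ τ : Equiv.Perm (Fin (n+1)), F (pk (n+1) τ)
      = ∑ σ : Equiv.Perm (Fin n),
          ((2 * pk n σ + 2) • F (pk n σ) + (n - 1 - 2 * pk n σ) • F (pk n σ + 1)) := by
  classical
  rw [← Fintype.sum_bijective _ (ins_bijective n)
    (fun q : Equiv.Perm (Fin n) × Fin (n+1) => F (pk (n+1) (ins n q.1 q.2)))
    (fun τ => F (pk (n+1) τ)) (fun q => rfl)]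
  rw [Fintype.sum_prod_type]
  apply Finset.sum_congr rfl
  intro σ _
  have hsum : ∀ p : Fin (n+1), F (pk (n+1) (ins n σ p)) =
      (if (1 ≤ (p:ℕ) ∧ (p:ℕ) ≤ n - 1 ∧ ¬ PkP n σ (p:ℕ) ∧ ¬ PkP n σ ((p:ℕ)+1))
        then F (pk n σ + 1) else F (pk n σ)) := by
    intro p
    rw [pk_ins n σ p hn]
    split_ifs <;> simp
  rw [Finset.sum_congr rfl (fun p _ => hsum p), Finset.sum_ite, Finset.sum_const,
    Finset.sum_const]
  have h1 := two_pk_aux n σ hn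
  have h2 : (Finset.univ.filter (fun p : Fin (n+1) =>
      ¬(1 ≤ (p:ℕ) ∧ (p:ℕ) ≤ n - 1 ∧ ¬ PkP n σ (p:ℕ) ∧ ¬ PkP n σ ((p:ℕ)+1)))).card
      = 2 * pk n σ + 2 := by
    have := Finset.card_filter_add_card_filter_not
      (s := (Finset.univ : Finset (Fin (n+1)))) (p := (fun p : Fin (n+1) =>
      1 ≤ (p:ℕ) ∧ (p:ℕ) ≤ n - 1 ∧ ¬ PkP n σ (p:ℕ) ∧ ¬ PkP n σ ((p:ℕ)+1)))
    rw [Finset.card_univ, Fintype.card_fin] at this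
    omega
  rw [h2, show (Finset.univ.filter (fun p : Fin (n+1) =>
      (1 ≤ (p:ℕ) ∧ (p:ℕ) ≤ n - 1 ∧ ¬ PkP n σ (p:ℕ) ∧ ¬ PkP n σ ((p:ℕ)+1)))).card
      = n - 1 - 2 * pk n σ by omega]
  rw [add_comm]

end sumtransfer


noncomputable def CPoly (n : ℕ) : Polynomial ℝ :=
  ∑ σ : Equiv.Perm (Fin n),
    (1 + Polynomial.X^2)^(pk n σ + 1) * Polynomial.X^(n - 1 - 2 * pk n σ)

lemma key_poly (k m : ℕ) :
    (2*k+2) • ((1 + (X : Polynomial ℝ)^2)^(k+1) * X^(m+1))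
      + m • ((1 + (X : Polynomial ℝ)^2)^(k+2) * X^(m-1))
      = (1 + X^2) * derivative ((1 + X^2)^(k+1) * X^m) := by
  have h1 : derivative ((1 + (X : Polynomial ℝ)^2)^(k+1))
      = ((k:Polynomial ℝ)+1) * (1+X^2)^k * (2*X) := by
    rw [derivative_pow]
    simp [Nat.add_sub_cancel, map_ofNat]
    norm_num
  cases m with
  | zero =>
    simp only [pow_zero, mul_one, zero_smul, add_zero, derivative_one]
    rw [h1, nsmul_eq_mul]
    push_cast
    ring
  | succ m' =>
    rw [derivative_mul, h1, derivative_X_pow, nsmul_eq_mul, nsmul_eq_mul]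
    simp only [Nat.add_sub_cancel, C_eq_natCast]
    push_cast
    ring

lemma pk_zero_of_one (σ : Equiv.Perm (Fin 1)) : pk 1 σ = 0 := by
  rw [pk_eq, Finset.card_eq_zero, Finset.filter_eq_empty_iff]
  intro x hx
  rw [Finset.mem_Icc] at hx
  have hx1 : x = 1 := by omega
  subst hx1
  have hb : extWord 1 σ 0 = 1 := w_big 1 σ (Or.inl rfl)
  have hl : extWord 1 σ 1 < 1 := w_lt 1 σ le_rfl le_rfl
  rintro ⟨h1, -⟩
  rw [show (1:ℕ) - 1 = 0 from rfl] at h1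
  omega

lemma CPoly_one : CPoly 1 = Polynomial.C ((2:ℝ)^1) * myP 1 := by
  rw [CPoly]
  have h : ∀ σ : Equiv.Perm (Fin 1),
      (1 + Polynomial.X^2 : Polynomial ℝ)^(pk 1 σ + 1) * Polynomial.X^(1 - 1 - 2*pk 1 σ)
        = 1 + Polynomial.X^2 := by
    intro σ; rw [pk_zero_of_one σ]; simp
  rw [Finset.sum_congr rfl (fun σ _ => h σ), Finset.sum_const, Finset.card_univ,
    Fintype.card_perm, Fintype.card_fin, Nat.factorial_one, one_smul]
  show (1 + Polynomial.X^2 : Polynomial ℝ)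
      = Polynomial.C ((2:ℝ)^1) * (Polynomial.C (1/2) * (1 + Polynomial.X^2) * derivative (myP 0))
  simp only [myP, Polynomial.derivative_X, mul_one]
  rw [← mul_assoc, ← Polynomial.C_mul]
  norm_num

lemma CPoly_succ (n : ℕ) (hn : 1 ≤ n) :
    CPoly (n+1) = (1 + Polynomial.X^2) * Polynomial.derivative (CPoly n) := by
  have hstep := sum_perm_succ n hn
    (fun j => (1 + Polynomial.X^2 : Polynomial ℝ)^(j+1) * Polynomial.X^(n + 1 - 1 - 2*j))
  have hL : CPoly (n+1) = ∑ τ : Equiv.Perm (Fin (n+1)),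
      (fun j => (1 + Polynomial.X^2 : Polynomial ℝ)^(j+1) * Polynomial.X^(n + 1 - 1 - 2*j))
        (pk (n+1) τ) := rfl
  rw [hL, hstep, CPoly, map_sum, Finset.mul_sum]
  apply Finset.sum_congr rfl
  intro σ _
  have hk := two_pk_le n σ hn
  have e1 : n + 1 - 1 - 2 * pk n σ = (n - 1 - 2 * pk n σ) + 1 := by omega
  have e2 : n + 1 - 1 - 2 * (pk n σ + 1) = (n - 1 - 2 * pk n σ) - 1 := by omega
  rw [e1, e2]
  exact key_poly (pk n σ) (n - 1 - 2 * pk n σ)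

lemma CPoly_eq (n : ℕ) (hn : 1 ≤ n) : CPoly n = Polynomial.C ((2:ℝ)^n) * myP n := by
  induction n, hn using Nat.le_induction with
  | base => exact CPoly_one
  | succ n hn ih =>
    rw [CPoly_succ n hn, ih, Polynomial.derivative_C_mul]
    have key : Polynomial.C ((2:ℝ)^(n+1)) * Polynomial.C (1/2:ℝ) = Polynomial.C ((2:ℝ)^n) := by
      rw [← Polynomial.C_mul]
      congr 1
      rw [pow_succ]
      ring
    show (1 + Polynomial.X^2) * (Polynomial.C ((2:ℝ)^n) * derivative (myP n))
      = Polynomial.C ((2:ℝ)^(n+1)) * (Polynomial.C (1/2) * (1 + Polynomial.X^2) * derivative (myP n))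
    rw [← key]
    ring

lemma card_np (n : ℕ) (hn : 1 ≤ n) (σ : Equiv.Perm (Fin n)) :
    ((Finset.Icc 2 n).filter (fun j =>
      ¬ (extWord n σ (j-1) < extWord n σ j ∧ extWord n σ (j+1) < extWord n σ j))).card
      = n - 1 - pk n σ := by
  have hpos : ((Finset.Icc 2 n).filter (fun j =>
      extWord n σ (j-1) < extWord n σ j ∧ extWord n σ (j+1) < extWord n σ j)).card = pk n σ := by
    rw [pk_eq]
    congr 1
    ext q
    rw [Finset.mem_filter, Finset.mem_filter, Finset.mem_Icc, Finset.mem_Icc]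
    constructor
    · rintro ⟨⟨h1, h2⟩, h3⟩; exact ⟨⟨by omega, h2⟩, h3⟩
    · rintro ⟨⟨h1, h2⟩, h3⟩
      have := peak_range n σ hn h3
      exact ⟨⟨by omega, h2⟩, h3⟩
  have hsplit := Finset.card_filter_add_card_filter_not
    (s := Finset.Icc 2 n) (p := fun j =>
      extWord n σ (j-1) < extWord n σ j ∧ extWord n σ (j+1) < extWord n σ j)
  rw [Nat.card_Icc] at hsplit
  omega

lemma pk_le (n : ℕ) (hn : 1 ≤ n) (σ : Equiv.Perm (Fin n)) : pk n σ + 1 ≤ n := by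
  have := two_pk_le n σ hn
  omega

theorem sum_W3_eq_euler (n : ℕ) (hn : 1 ≤ n) :
    ∑ σ : Equiv.Perm (Fin n),
      (1/2 : ℝ) ^ (((Finset.Icc 2 n).filter (fun j =>
        ¬ (extWord n σ (j-1) < extWord n σ j ∧
            extWord n σ (j+1) < extWord n σ j))).card)
      = eulerE n := by
  have hstep1 : ∀ σ : Equiv.Perm (Fin n),
      (1/2 : ℝ) ^ (((Finset.Icc 2 n).filter (fun j =>
        ¬ (extWord n σ (j-1) < extWord n σ j ∧
            extWord n σ (j+1) < extWord n σ j))).card)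
      = (2:ℝ)^(pk n σ + 1) / 2^n := by
    intro σ
    rw [card_np n hn σ]
    have hk := two_pk_le n σ hn
    have hmul : (2:ℝ)^(n - 1 - pk n σ) * 2^(pk n σ + 1) = 2^n := by
      rw [← pow_add]; congr 1; omega
    rw [div_pow, one_pow, ← hmul]
    have h1 : (2:ℝ)^(n - 1 - pk n σ) ≠ 0 := pow_ne_zero _ two_ne_zero
    have h2 : (2:ℝ)^(pk n σ + 1) ≠ 0 := pow_ne_zero _ two_ne_zero
    field_simp
  rw [Finset.sum_congr rfl (fun σ _ => hstep1 σ), ← Finset.sum_div]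
  have heval : ∑ σ : Equiv.Perm (Fin n), (2:ℝ)^(pk n σ + 1) = Polynomial.eval 1 (CPoly n) := by
    rw [CPoly, Polynomial.eval_finset_sum]
    apply Finset.sum_congr rfl
    intro σ _
    simp
    norm_num
  rw [heval, CPoly_eq n hn, Polynomial.eval_mul, Polynomial.eval_C, eulerE_eq_evalP,
    mul_comm, mul_div_assoc, div_self (by positivity), mul_one]
end

section
/- For each n ≥ 1, E_n = 2^{1−n} P_n(2,1), where P_n(t,s) = Σ_{σ∈S_n} t^{pk(σ)} s^{da(σ)} is the peak–double-ascent polynomial and E_n is the n-th Euler number. -/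
open Finset

set_option linter.unreachableTactic false
set_option linter.unusedTactic false
set_option linter.unnecessarySeqFocus false

/-- number of interior peaks of a word -/
def pkL : List ℕ → ℕ
  | a :: b :: c :: t => (if a < b ∧ c < b then 1 else 0) + pkL (b :: c :: t)
  | _ => 0

@[simp] lemma pkL_nil : pkL [] = 0 := rfl
@[simp] lemma pkL_single (a : ℕ) : pkL [a] = 0 := rfl
@[simp] lemma pkL_pair (a b : ℕ) : pkL [a, b] = 0 := rfl
lemma pkL_cons3 (a b c : ℕ) (t : List ℕ) :
    pkL (a :: b :: c :: t) = (if a < b ∧ c < b then 1 else 0) + pkL (b :: c :: t) := rfl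

/-- order-preserving relabeling invariance -/
lemma pkL_map (f : ℕ → ℕ) : ∀ (l : List ℕ),
    (∀ a ∈ l, ∀ b ∈ l, (a < b ↔ f a < f b)) → pkL (l.map f) = pkL l := by
  intro l
  induction l with
  | nil => intro _; rfl
  | cons a t ih =>
    intro h
    match t with
    | [] => rfl
    | [b] => rfl
    | b :: c :: t' =>
      have ht : ∀ x ∈ b :: c :: t', ∀ y ∈ b :: c :: t', (x < y ↔ f x < f y) := by
        intro x hx y hy
        exact h x (List.mem_cons_of_mem _ hx) y (List.mem_cons_of_mem _ hy)
      have ha : a ∈ a :: b :: c :: t' := List.mem_cons_self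
      have hb : b ∈ a :: b :: c :: t' := by simp
      have hc : c ∈ a :: b :: c :: t' := by simp
      simp only [List.map_cons, pkL_cons3]
      rw [show (f b :: f c :: List.map f t') = List.map f (b :: c :: t') by simp, ih ht]
      congr 1
      have h1 : a < b ↔ f a < f b := h a ha b hb
      have h2 : c < b ↔ f c < f b := h c hc b hb
      by_cases hab : a < b ∧ c < b
      · rw [if_pos hab, if_pos ⟨h1.1 hab.1, h2.1 hab.2⟩]
      · rw [if_neg hab, if_neg (by tauto)]

lemma pkL_top_cons (m : ℕ) : ∀ (R : List ℕ), (∀ x ∈ R, x < m) → pkL (m :: R) = pkL R := by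
  intro R hR
  match R with
  | [] => rfl
  | [b] => rfl
  | b :: c :: t =>
    rw [pkL_cons3, if_neg]
    · simp
    · rintro ⟨h1, -⟩
      exact absurd h1 (not_lt.2 (le_of_lt (hR b (by simp))))

/-- splitting a word at a maximal letter -/
lemma pkL_split (m : ℕ) : ∀ (L R : List ℕ), (∀ x ∈ L, x < m) → (∀ x ∈ R, x < m) →
    pkL (L ++ m :: R) = pkL L + pkL R + (if L ≠ [] ∧ R ≠ [] then 1 else 0) := by
  intro L
  induction L with
  | nil =>
    intro R _ hR
    simp [pkL_top_cons m R hR]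
  | cons a L' ih =>
    intro R hL hR
    have hL' : ∀ x ∈ L', x < m := fun x hx => hL x (List.mem_cons_of_mem _ hx)
    have ham : a < m := hL a (List.mem_cons_self)
    match L' with
    | [] =>
      match R with
      | [] => simp [pkL_cons3]
      | b :: t =>
        have hbm : b < m := hR b (List.mem_cons_self)
        simp only [List.nil_append, List.cons_append, pkL_cons3]
        rw [if_pos ⟨ham, hbm⟩, pkL_top_cons m (b :: t) hR]
        simp [Nat.add_comm]
    | b :: L'' =>
      have ihh := ih R hL' hR
      match L'' with
      | [] =>
        simp only [List.cons_append, List.nil_append, pkL_cons3] at ihh ⊢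
        rw [if_neg (by rintro ⟨-, h2⟩; exact absurd h2 (not_lt.2 (le_of_lt (hL b (by simp))))), ihh]
        by_cases hR0 : R = [] <;> simp [hR0] <;> omega
      | c :: L''' =>
        simp only [List.cons_append, pkL_cons3] at ihh ⊢
        rw [ihh]
        by_cases hR0 : R = [] <;> simp [hR0] <;> omega

def wordOf (n : ℕ) (σ : Equiv.Perm (Fin n)) : List ℕ := List.ofFn (fun i : Fin n => (σ i : ℕ))

@[simp] lemma wordOf_length (n : ℕ) (σ : Equiv.Perm (Fin n)) : (wordOf n σ).length = n := by
  simp [wordOf]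

lemma wordOf_getD (n : ℕ) (σ : Equiv.Perm (Fin n)) {j : ℕ} (h : j < n) :
    (wordOf n σ).getD j 0 = (σ ⟨j, h⟩ : ℕ) := by
  rw [List.getD_eq_getElem _ _ (by simpa [wordOf] using h)]
  simp [wordOf]

/-- the sum/card formulation of pkL -/
lemma pkL_eq_sum : ∀ l : List ℕ, pkL l =
    ∑ i ∈ range (l.length - 2),
      if l.getD i 0 < l.getD (i+1) 0 ∧ l.getD (i+2) 0 < l.getD (i+1) 0 then 1 else 0 := by
  intro l
  induction l with
  | nil => rfl
  | cons a t ih =>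
    match t with
    | [] => rfl
    | [b] => rfl
    | b :: c :: t' =>
      have hlen : (a :: b :: c :: t').length - 2 = (t'.length + 1) := by simp
      rw [pkL_cons3, hlen, Finset.sum_range_succ', Nat.add_comm (∑ _ ∈ _, _) _]
      have hlen2 : (b :: c :: t').length - 2 = t'.length := by simp
      rw [ih, hlen2]
      exact congrArg₂ (· + ·) rfl
        (Finset.sum_congr rfl (fun i _ => by simp [List.getD_cons_succ]))

lemma extWord_big (n : ℕ) (σ : Equiv.Perm (Fin n)) {j : ℕ} (h : ¬ (1 ≤ j ∧ j - 1 < n)) :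
    extWord n σ j = n := dif_neg h

lemma extWord_small (n : ℕ) (σ : Equiv.Perm (Fin n)) {j : ℕ} (h1 : 1 ≤ j) (h2 : j - 1 < n) :
    extWord n σ j = (wordOf n σ).getD (j-1) 0 := by
  rw [extWord, dif_pos ⟨h1, h2⟩, wordOf_getD n σ h2]

lemma extWord_lt (n : ℕ) (σ : Equiv.Perm (Fin n)) {j : ℕ} (h1 : 1 ≤ j) (h2 : j - 1 < n) :
    extWord n σ j < n := by
  rw [extWord, dif_pos ⟨h1, h2⟩]; exact (σ ⟨j-1, h2⟩).isLt

/-- `pk` is the interior-peak count of the word -/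
lemma pk_eq_pkL (n : ℕ) (σ : Equiv.Perm (Fin n)) : pk n σ = pkL (wordOf n σ) := by
  rw [pkL_eq_sum, wordOf_length]
  rw [show (∑ i ∈ range (n - 2),
      if (wordOf n σ).getD i 0 < (wordOf n σ).getD (i+1) 0 ∧
         (wordOf n σ).getD (i+2) 0 < (wordOf n σ).getD (i+1) 0 then 1 else 0) =
      ((range (n-2)).filter (fun i => (wordOf n σ).getD i 0 < (wordOf n σ).getD (i+1) 0 ∧
         (wordOf n σ).getD (i+2) 0 < (wordOf n σ).getD (i+1) 0)).card from
    (Finset.card_filter _ _).symm]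
  rw [pk]
  refine (Finset.card_nbij (fun i => i + 2) ?_ ?_ ?_).symm
  · -- maps filtered range into filtered Icc
    intro i hi
    simp only [Finset.mem_coe, Finset.mem_filter, Finset.mem_range] at hi
    obtain ⟨hi2, hQ1, hQ2⟩ := hi
    simp only [Finset.mem_coe, Finset.mem_filter, Finset.mem_Icc]
    refine ⟨⟨by omega, by omega⟩, ?_, ?_⟩
    · rw [extWord_small n σ (by omega : 1 ≤ i + 2 - 1) (by omega),
        extWord_small n σ (by omega : 1 ≤ i + 2) (by omega)]
      have e1 : i + 2 - 1 - 1 = i := by omega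
      have e2 : i + 2 - 1 = i + 1 := by omega
      rw [e1, e2]; exact hQ1
    · rw [extWord_small n σ (by omega : 1 ≤ i + 2 + 1) (by omega),
        extWord_small n σ (by omega : 1 ≤ i + 2) (by omega)]
      have e1 : i + 2 + 1 - 1 = i + 2 := by omega
      have e2 : i + 2 - 1 = i + 1 := by omega
      rw [e1, e2]; exact hQ2
  · intro a _ b _ h
    simp only [] at h
    omega
  · -- surjective onto filtered Icc
    intro j hj
    simp only [Finset.coe_filter, Set.mem_setOf_eq, Finset.mem_Icc] at hj
    obtain ⟨⟨hj1, hjn⟩, hP1, hP2⟩ := hj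
    have h2j : 2 ≤ j := by
      by_contra h
      rw [extWord_big n σ (by omega)] at hP1
      exact absurd hP1 (not_lt.2 (le_of_lt (extWord_lt n σ (by omega) (by omega))))
    have hjn1 : j ≤ n - 1 := by
      by_contra h
      rw [extWord_big n σ (by omega)] at hP2
      exact absurd hP2 (not_lt.2 (le_of_lt (extWord_lt n σ (by omega) (by omega))))
    refine ⟨j - 2, ?_, by simp only []; omega⟩
    simp only [Finset.coe_filter, Set.mem_setOf_eq, Finset.mem_range]
    refine ⟨by omega, ?_, ?_⟩
    · rw [extWord_small n σ (by omega : 1 ≤ j - 1) (by omega),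
        extWord_small n σ hj1 (by omega)] at hP1
      have e1 : j - 1 - 1 = j - 2 := by omega
      have e2 : j - 1 = j - 2 + 1 := by omega
      rw [e1, e2] at hP1; exact hP1
    · rw [extWord_small n σ (by omega : 1 ≤ j + 1) (by omega),
        extWord_small n σ hj1 (by omega)] at hP2
      have e1 : j + 1 - 1 = j - 2 + 2 := by omega
      have e2 : j - 1 = j - 2 + 1 := by omega
      rw [e1, e2] at hP2; exact hP2

/-- the finset of permutation-words of a finset of naturals -/
noncomputable def permsF (s : Finset ℕ) : Finset (List ℕ) := s.toList.permutations.toFinset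

lemma mem_permsF {s : Finset ℕ} {l : List ℕ} : l ∈ permsF s ↔ (l : Multiset ℕ) = s.val := by
  rw [permsF, List.mem_toFinset, List.mem_permutations, ← Multiset.coe_eq_coe,
    Finset.coe_toList]

/-- sum of `2^pkL` over all arrangements of a finset -/
noncomputable def Fs (s : Finset ℕ) : ℕ := ∑ l ∈ permsF s, 2 ^ pkL l

/-- sum over arrangements of `range k` -/
noncomputable def qs (k : ℕ) : ℕ := Fs (range k)

lemma nodup_of_mem_permsF {s : Finset ℕ} {l : List ℕ} (h : l ∈ permsF s) : l.Nodup := by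
  rw [mem_permsF] at h
  rw [← Multiset.coe_nodup, h]; exact s.nodup

lemma mem_of_mem_permsF {s : Finset ℕ} {l : List ℕ} (h : l ∈ permsF s) {x : ℕ} (hx : x ∈ l) :
    x ∈ s := by
  rw [mem_permsF] at h
  rw [← Finset.mem_val, ← h]; exact hx

/-- relabeling invariance of `Fs` -/
lemma Fs_image (s : Finset ℕ) (f : ℕ → ℕ) (hf : ∀ a ∈ s, ∀ b ∈ s, (a < b ↔ f a < f b)) :
    Fs (s.image f) = Fs s := by
  have hinj : Set.InjOn f ↑s := by
    intro a ha b hb hab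
    by_contra hne
    rcases Nat.lt_or_ge a b with h | h
    · exact absurd hab (ne_of_lt ((hf a ha b hb).1 h))
    · have : b < a := by omega
      exact absurd hab.symm (ne_of_lt ((hf b hb a ha).1 this))
  have himgval : (s.image f).val = Multiset.map f s.val := by
    rw [Finset.image_val, Multiset.dedup_eq_self.2]
    exact Multiset.Nodup.map_on (fun x hx y hy h => hinj hx hy h) s.nodup
  set g := Function.invFunOn f ↑s with hg
  refine (Finset.sum_nbij' (fun l => l.map f) (fun l => l.map g) ?_ ?_ ?_ ?_ ?_).symm
  · intro l hl
    rw [mem_permsF] at hl ⊢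
    rw [himgval, ← hl]
    simp [Multiset.map_coe]
  · intro m hm
    rw [mem_permsF] at hm ⊢
    rw [himgval] at hm
    have : (m.map g : Multiset ℕ) = Multiset.map g (Multiset.map f s.val) := by
      rw [← hm]; simp [Multiset.map_coe]
    rw [this, Multiset.map_map]
    exact Multiset.map_congr rfl (fun x hx => hinj.leftInvOn_invFunOn hx) |>.trans
      (Multiset.map_id s.val)
  · intro l hl
    rw [List.map_map]
    refine (List.map_congr_left (fun x hx => ?_)).trans (List.map_id l)
    exact hinj.leftInvOn_invFunOn (mem_of_mem_permsF hl hx)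
  · intro m hm
    rw [List.map_map]
    refine (List.map_congr_left (fun y hy => ?_)).trans (List.map_id m)
    have : y ∈ s.image f := by
      have := mem_of_mem_permsF hm hy
      exact this
    rw [Finset.mem_image] at this
    obtain ⟨x, hx, hfx⟩ := this
    exact Function.invFunOn_eq ⟨x, hx, hfx⟩
  · intro l hl
    rw [pkL_map f l (fun a ha b hb => hf a (mem_of_mem_permsF hl ha) b (mem_of_mem_permsF hl hb))]

/-- `Fs` depends only on the cardinality -/
lemma Fs_eq_qs (s : Finset ℕ) : Fs s = qs s.card := by
  classical
  set k := s.card with hk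
  set f : ℕ → ℕ := fun i => if h : i < k then (s.orderEmbOfFin hk.symm ⟨i, h⟩ : ℕ) else 0 with hfdef
  have himg : (range k).image f = s := by
    ext x
    simp only [Finset.mem_image, Finset.mem_range]
    constructor
    · rintro ⟨i, hi, rfl⟩
      rw [hfdef]; simp only [dif_pos hi]
      exact Finset.orderEmbOfFin_mem s hk.symm ⟨i, hi⟩
    · intro hx
      have : x ∈ Set.range (s.orderEmbOfFin hk.symm) := by
        rw [Finset.range_orderEmbOfFin]; exact hx
      obtain ⟨i, hi⟩ := this
      exact ⟨i.val, i.isLt, by rw [hfdef]; simp only [dif_pos i.isLt]; rw [← hi]⟩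
  have := Fs_image (range k) f ?_
  · rw [himg] at this; rw [this]; rfl
  · intro a ha b hb
    rw [Finset.mem_range] at ha hb
    rw [hfdef]; simp only [dif_pos ha, dif_pos hb]
    constructor
    · intro h
      exact (s.orderEmbOfFin hk.symm).strictMono (show (⟨a, ha⟩ : Fin k) < ⟨b, hb⟩ from h)
    · intro h
      have := (s.orderEmbOfFin hk.symm).lt_iff_lt.1 h
      exact this

/-- sum over `Equiv.Perm` equals the sum over arrangements -/
lemma sum_perm_eq_qs (n : ℕ) : ∑ σ : Equiv.Perm (Fin n), 2 ^ pk n σ = qs n := by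
  have hval : (range n).val = Multiset.map Fin.val (Finset.univ : Finset (Fin n)).val := by
    have := Fin.map_valEmbedding_univ (n := n)
    rw [← Finset.val_inj, Finset.map_val, Nat.Iio_eq_range] at this
    exact this.symm
  rw [qs, Fs]
  refine Finset.sum_bij (fun σ _ => wordOf n σ) ?_ ?_ ?_ ?_
  · intro σ _
    rw [mem_permsF, hval]
    have huniv : Multiset.map (⇑σ) (Finset.univ : Finset (Fin n)).val
        = (Finset.univ : Finset (Fin n)).val := by
      have := Finset.map_univ_equiv σ
      rw [← Finset.val_inj, Finset.map_val] at this
      exact this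
    rw [← huniv, Multiset.map_map]
    simp only [wordOf]
    rw [List.ofFn_eq_map]
    rw [Fin.univ_def]
    simp [Multiset.map_coe]
  · intro a _ b _ h
    simp only [wordOf] at h
    have := List.ofFn_injective h
    ext i
    exact congrFun this i ▸ rfl
  · intro l hl
    have hlen : l.length = n := by
      have := congrArg Multiset.card (mem_permsF.1 hl)
      simpa using this
    have hnd : l.Nodup := nodup_of_mem_permsF hl
    have hmem : ∀ i (h : i < l.length), l[i] < n := by
      intro i h
      have : l[i] ∈ l := List.getElem_mem h
      have := mem_of_mem_permsF hl this
      rwa [Finset.mem_range] at this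
    set g : Fin n → Fin n := fun i => ⟨l[i.val]'(by omega), hmem _ (by omega)⟩ with hgdef
    have hginj : Function.Injective g := by
      intro a b hab
      rw [hgdef] at hab
      simp only [Fin.mk.injEq] at hab
      have := List.nodup_iff_injective_get.1 hnd
        (show l.get ⟨a.val, by omega⟩ = l.get ⟨b.val, by omega⟩ by simpa using hab)
      have := congrArg Fin.val this
      exact Fin.ext (by simpa using this)
    refine ⟨Equiv.ofBijective g (Finite.injective_iff_bijective.1 hginj), Finset.mem_univ _, ?_⟩
    apply List.ext_getElem
    · simp [hlen]
    · intro i h1 h2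
      simp only [wordOf]
      rw [List.getElem_ofFn]
      rfl
  · intro σ _
    rw [pk_eq_pkL]

/-- the predicate `x ≠ n` as a Bool -/
def pne (n : ℕ) : ℕ → Bool := fun x => x != n

lemma pne_true {n x : ℕ} : pne n x = true ↔ x ≠ n := by simp [pne]
lemma pne_false {n x : ℕ} : pne n x = false ↔ x = n := by simp [pne]

lemma mset_add_cons (a : ℕ) (s t : Multiset ℕ) : s + a ::ₘ t = a ::ₘ (s + t) := by
  rw [add_comm, Multiset.cons_add, add_comm t s]

/-- the split-at-maximum decomposition of the peak sum -/
lemma qs_rec (n : ℕ) : qs (n+1) =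
    ∑ S ∈ (range n).powerset,
      (if S ≠ ∅ ∧ S ≠ range n then 2 else 1) * Fs S * Fs (range n \ S) := by
  classical
  have hval : (range (n+1)).val = n ::ₘ (range n).val := by
    rw [Finset.range_add_one, Finset.insert_val, Multiset.ndinsert_of_notMem (by simp)]
  have hsum : ∀ S ∈ (range n).powerset,
      (if S ≠ ∅ ∧ S ≠ range n then 2 else 1) * Fs S * Fs (range n \ S)
      = ∑ x ∈ (permsF S) ×ˢ (permsF (range n \ S)),
          ((if S ≠ ∅ ∧ S ≠ range n then 2 else 1) * 2 ^ pkL x.1 * 2 ^ pkL x.2) := by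
    intro S _
    rw [Finset.sum_product, Fs, Fs, mul_assoc, Finset.sum_mul_sum, Finset.mul_sum]
    refine Finset.sum_congr rfl (fun L _ => ?_)
    rw [Finset.mul_sum]
    exact Finset.sum_congr rfl (fun R _ => by ring)
  rw [Finset.sum_congr rfl hsum, ← Finset.sum_sigma ((range n).powerset)
    (fun S => (permsF S) ×ˢ (permsF (range n \ S)))
    (fun x => ((if x.1 ≠ ∅ ∧ x.1 ≠ range n then 2 else 1) * 2 ^ pkL x.2.1 * 2 ^ pkL x.2.2))]
  rw [qs, Fs]
  refine (Finset.sum_nbij' (fun (x : Σ _ : Finset ℕ, List ℕ × List ℕ) => x.2.1 ++ n :: x.2.2)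
      (fun l => ⟨(l.takeWhile (pne n)).toFinset,
        (l.takeWhile (pne n), (l.dropWhile (pne n)).tail)⟩)
      ?_ ?_ ?_ ?_ ?_).symm
  case refine_1 => -- sigma ↦ list membership
    rintro ⟨S, L, R⟩ hx
    simp only [Finset.mem_sigma, Finset.mem_powerset, Finset.mem_product] at hx
    obtain ⟨hS, hL, hR⟩ := hx
    rw [mem_permsF] at hL hR ⊢
    have hle : S.val ≤ (range n).val := Finset.val_le_iff.2 hS
    have hcoe : ((L ++ n :: R : List ℕ) : Multiset ℕ)
        = n ::ₘ ((L : Multiset ℕ) + (R : Multiset ℕ)) := by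
      have h0 : ((L ++ n :: R : List ℕ) : Multiset ℕ)
          = (L : Multiset ℕ) + (n ::ₘ (R : Multiset ℕ)) := by simp
      rw [h0, mset_add_cons]
    rw [hcoe, hL, hR, Finset.sdiff_val, add_tsub_cancel_of_le hle, hval]
  case refine_2 => -- list ↦ sigma membership
    intro l hl
    have hml := mem_permsF.1 hl
    have hnd : l.Nodup := nodup_of_mem_permsF hl
    have hnl : n ∈ l := by
      have : n ∈ (l : Multiset ℕ) := by rw [hml, hval]; simp
      exact this
    have hTmem : ∀ x ∈ l.takeWhile (pne n), x < n := by
      intro x hx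
      have hpx := pne_true.1 (List.mem_takeWhile_imp hx)
      have hxl : x ∈ l := List.Sublist.mem hx (List.takeWhile_sublist _)
      have hx2 : x ∈ (l : Multiset ℕ) := hxl
      rw [hml, hval] at hx2
      simp only [Multiset.mem_cons, Finset.mem_val, Finset.mem_range] at hx2
      rcases hx2 with h | h
      · exact absurd h hpx
      · exact h
    have hDne : l.dropWhile (pne n) ≠ [] := by
      intro h
      have h2 := List.takeWhile_append_dropWhile (p := pne n) (l := l)
      rw [h, List.append_nil] at h2
      rw [← h2] at hnl
      exact (pne_true.1 (List.mem_takeWhile_imp hnl)) rfl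
    have hhead : (l.dropWhile (pne n)).head hDne = n :=
      pne_false.1 (List.head_dropWhile_not (pne n) hDne)
    have hdec : l = l.takeWhile (pne n) ++ n :: (l.dropWhile (pne n)).tail := by
      conv_lhs => rw [← List.takeWhile_append_dropWhile (p := pne n) (l := l)]
      congr 1
      conv_lhs => rw [← List.cons_head_tail (l := l.dropWhile (pne n)) hDne]
      rw [hhead]
    have hTnd : (l.takeWhile (pne n)).Nodup :=
      List.Nodup.sublist (List.takeWhile_sublist _) hnd
    have hTval : ((l.takeWhile (pne n)).toFinset).val
        = ((l.takeWhile (pne n) : List ℕ) : Multiset ℕ) := by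
      rw [List.toFinset_val, List.dedup_eq_self.2 hTnd]
    have hsplit : ((l.takeWhile (pne n) : List ℕ) : Multiset ℕ)
        + (((l.dropWhile (pne n)).tail : List ℕ) : Multiset ℕ) = (range n).val := by
      have h1 : (l : Multiset ℕ) = ((l.takeWhile (pne n) : List ℕ) : Multiset ℕ)
          + (n ::ₘ (((l.dropWhile (pne n)).tail : List ℕ) : Multiset ℕ)) := by
        conv_lhs => rw [hdec]
        simp
      rw [hml, hval, mset_add_cons] at h1
      exact ((Multiset.cons_inj_right n).1 h1).symm
    simp only [Finset.mem_sigma, Finset.mem_powerset, Finset.mem_product]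
    refine ⟨?_, ?_, ?_⟩
    · intro x hx
      rw [Finset.mem_range]
      exact hTmem x (by rwa [List.mem_toFinset] at hx)
    · rw [mem_permsF, hTval]
    · rw [mem_permsF, Finset.sdiff_val, ← hsplit, hTval, add_tsub_cancel_left]
  case refine_4 => -- Φ (Ψ l) = l
    intro l hl
    have hml := mem_permsF.1 hl
    have hnl : n ∈ l := by
      have : n ∈ (l : Multiset ℕ) := by rw [hml, hval]; simp
      exact this
    have hDne : l.dropWhile (pne n) ≠ [] := by
      intro h
      have h2 := List.takeWhile_append_dropWhile (p := pne n) (l := l)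
      rw [h, List.append_nil] at h2
      rw [← h2] at hnl
      exact (pne_true.1 (List.mem_takeWhile_imp hnl)) rfl
    have hhead : (l.dropWhile (pne n)).head hDne = n :=
      pne_false.1 (List.head_dropWhile_not (pne n) hDne)
    simp only []
    conv_rhs => rw [← List.takeWhile_append_dropWhile (p := pne n) (l := l)]
    congr 1
    conv_rhs => rw [← List.cons_head_tail (l := l.dropWhile (pne n)) hDne]
    rw [hhead]
  case refine_3 => -- Ψ (Φ x) = x
    rintro ⟨S, L, R⟩ hx
    simp only [Finset.mem_sigma, Finset.mem_powerset, Finset.mem_product] at hx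
    obtain ⟨hS, hL, hR⟩ := hx
    rw [mem_permsF] at hL hR
    have hLn : ∀ a ∈ L, (pne n) a = true := by
      intro a ha
      have h1 : a ∈ S := by rw [← Finset.mem_val, ← hL]; exact ha
      have h2 := Finset.mem_range.1 (hS h1)
      exact pne_true.2 (Nat.ne_of_lt h2)
    have htake : (L ++ n :: R).takeWhile (pne n) = L := by
      rw [List.takeWhile_append_of_pos hLn,
        List.takeWhile_cons_of_neg (by simp [pne])]
      simp
    have hdrop : (L ++ n :: R).dropWhile (pne n) = n :: R := by
      have h2 := List.takeWhile_append_dropWhile (p := pne n) (l := L ++ n :: R)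
      rw [htake] at h2
      exact List.append_cancel_left h2
    have hLnd : L.Nodup := by rw [← Multiset.coe_nodup, hL]; exact S.nodup
    have hSfin : L.toFinset = S := by
      rw [← Finset.val_inj, List.toFinset_val, List.dedup_eq_self.2 hLnd, hL]
    simp only []
    rw [htake, hdrop]
    simp only [List.tail_cons]
    exact Sigma.ext hSfin (by rw [hSfin])
  case refine_5 => -- values
    rintro ⟨S, L, R⟩ hx
    simp only [Finset.mem_sigma, Finset.mem_powerset, Finset.mem_product] at hx
    obtain ⟨hS, hL, hR⟩ := hx
    rw [mem_permsF] at hL hR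
    have hLlt : ∀ x ∈ L, x < n := by
      intro x hxl
      have h1 : x ∈ S := by rw [← Finset.mem_val, ← hL]; exact hxl
      exact Finset.mem_range.1 (hS h1)
    have hRlt : ∀ x ∈ R, x < n := by
      intro x hxl
      have h1 : x ∈ range n \ S := by rw [← Finset.mem_val, ← hR]; exact hxl
      exact Finset.mem_range.1 (Finset.mem_sdiff.1 h1).1
    have hLiff : L = [] ↔ S = ∅ := by
      rw [← Multiset.coe_eq_zero, hL]
      exact Finset.val_eq_zero
    have hRiff : R = [] ↔ S = range n := by
      rw [← Multiset.coe_eq_zero, hR, Finset.val_eq_zero,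
        Finset.sdiff_eq_empty_iff_subset]
      constructor
      · intro h; exact Finset.Subset.antisymm hS h
      · intro h; rw [h]
    simp only []
    rw [pkL_split n L R hLlt hRlt, pow_add, pow_add]
    simp only [ne_eq, hLiff, hRiff]
    by_cases h1 : S = ∅ <;> by_cases h2 : S = range n <;> simp [h1, h2] <;> ring

/-- grouping subsets by cardinality -/
lemma qs_rec' (n : ℕ) : qs (n+1) =
    ∑ k ∈ range (n+1), (n.choose k) * ((if k ≠ 0 ∧ k ≠ n then 2 else 1) * qs k * qs (n-k)) := by
  rw [qs_rec]
  rw [Finset.sum_powerset (range n)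
    (fun S => (if S ≠ ∅ ∧ S ≠ range n then 2 else 1) * Fs S * Fs (range n \ S))]
  rw [Finset.card_range]
  refine Finset.sum_congr rfl (fun k hk => ?_)
  rw [Finset.mem_range] at hk
  have hconst : ∀ S ∈ Finset.powersetCard k (range n),
      (if S ≠ ∅ ∧ S ≠ range n then 2 else 1) * Fs S * Fs (range n \ S)
      = (if k ≠ 0 ∧ k ≠ n then 2 else 1) * qs k * qs (n-k) := by
    intro S hS
    rw [Finset.mem_powersetCard] at hS
    obtain ⟨hsub, hcard⟩ := hS
    have h1 : Fs S = qs k := by rw [Fs_eq_qs, hcard]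
    have h2 : Fs (range n \ S) = qs (n - k) := by
      rw [Fs_eq_qs, Finset.card_sdiff_of_subset hsub, Finset.card_range, hcard]
    have h3 : (S = ∅) ↔ k = 0 := by
      rw [← hcard]
      exact Finset.card_eq_zero.symm
    have h4 : (S = range n) ↔ k = n := by
      constructor
      · intro h; rw [← hcard, h, Finset.card_range]
      · intro h
        apply Finset.eq_of_subset_of_card_le hsub
        rw [Finset.card_range, hcard, h]
    rw [h1, h2]
    congr 1
    congr 1
    simp only [ne_eq, h3, h4]
  rw [Finset.sum_congr rfl hconst, Finset.sum_const, Finset.card_powersetCard,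
    Finset.card_range, smul_eq_mul]

lemma qs_zero : qs 0 = 1 := by
  have h := sum_perm_eq_qs 0
  rw [← h]
  rw [Finset.sum_eq_card_nsmul (b := 1) ?_]
  · simp
  · intro σ _
    rw [pk_eq_pkL, pkL_eq_sum]
    simp

lemma qs_one : qs 1 = 1 := by
  have h := sum_perm_eq_qs 1
  rw [← h]
  rw [Finset.sum_eq_card_nsmul (b := 1) ?_]
  · rw [Finset.card_univ]
    simp [Fintype.card_perm]
  · intro σ _
    rw [pk_eq_pkL, pkL_eq_sum]
    simp

section Anal

variable {U : Set ℝ}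

lemma contDiffOn_iteratedDeriv_of_isOpen {f : ℝ → ℝ} (hU : IsOpen U)
    (hf : ContDiffOn ℝ ((⊤:ℕ∞) : WithTop ℕ∞) f U) (n : ℕ) :
    ContDiffOn ℝ ((⊤:ℕ∞) : WithTop ℕ∞) (iteratedDeriv n f) U := by
  induction n with
  | zero => simpa [iteratedDeriv_zero] using hf
  | succ n ih =>
    rw [iteratedDeriv_succ]
    exact ih.deriv_of_isOpen hU (by simp)

lemma differentiableAt_iteratedDeriv_of_isOpen {f : ℝ → ℝ} (hU : IsOpen U)
    (hf : ContDiffOn ℝ ((⊤:ℕ∞) : WithTop ℕ∞) f U) (n : ℕ) {x : ℝ} (hx : x ∈ U) :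
    DifferentiableAt ℝ (iteratedDeriv n f) x := by
  have h := (contDiffOn_iteratedDeriv_of_isOpen hU hf n x hx).contDiffAt (hU.mem_nhds hx)
  exact h.differentiableAt (by simp)

lemma hasDerivAt_iteratedDeriv_of_isOpen {f : ℝ → ℝ} (hU : IsOpen U)
    (hf : ContDiffOn ℝ ((⊤:ℕ∞) : WithTop ℕ∞) f U) (n : ℕ) {x : ℝ} (hx : x ∈ U) :
    HasDerivAt (iteratedDeriv n f) (iteratedDeriv (n+1) f x) x := by
  have h := (differentiableAt_iteratedDeriv_of_isOpen hU hf n hx).hasDerivAt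
  rwa [← iteratedDeriv_succ] at h

lemma pascal_shuffle (A B : ℕ → ℝ) (n : ℕ) :
    ∑ k ∈ range (n+1), (n.choose k : ℝ) * (A (k+1) * B (n-k) + A k * B (n-k+1))
    = ∑ k ∈ range (n+2), ((n+1).choose k : ℝ) * (A k * B (n+1-k)) := by
  simp only [mul_add, Finset.sum_add_distrib]
  rw [Finset.sum_range_succ' (fun k => ((n+1).choose k : ℝ) * (A k * B (n+1-k))) (n+1)]
  have e1 : ∀ k ∈ range (n+1), ((n+1).choose (k+1) : ℝ) * (A (k+1) * B (n+1-(k+1)))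
      = (n.choose k : ℝ) * (A (k+1) * B (n-k)) + (n.choose (k+1) : ℝ) * (A (k+1) * B (n-k)) := by
    intro k hk
    rw [Finset.mem_range] at hk
    have : n + 1 - (k+1) = n - k := by omega
    rw [this, Nat.choose_succ_succ]
    push_cast
    ring
  rw [Finset.sum_congr rfl e1, Finset.sum_add_distrib]
  have e2 : ∑ k ∈ range (n+1), (n.choose k : ℝ) * (A k * B (n-k+1))
      = ∑ k ∈ range (n+1), (n.choose (k+1) : ℝ) * (A (k+1) * B (n-k)) + (A 0 * B (n+1)) := by
    rw [Finset.sum_range_succ (fun k => (n.choose (k+1) : ℝ) * (A (k+1) * B (n-k))) n]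
    rw [Nat.choose_succ_self]
    rw [Finset.sum_range_succ' (fun k => (n.choose k : ℝ) * (A k * B (n-k+1))) n]
    have e3 : ∀ k ∈ range n, (n.choose (k+1) : ℝ) * (A (k+1) * B (n-(k+1)+1))
        = (n.choose (k+1) : ℝ) * (A (k+1) * B (n-k)) := by
      intro k hk
      rw [Finset.mem_range] at hk
      have : n - (k+1) + 1 = n - k := by omega
      rw [this]
    rw [Finset.sum_congr rfl e3]
    simp
  rw [e2]
  push_cast
  ring_nf
  rw [Nat.choose_zero_right]
  push_cast
  ring

/-- local Leibniz rule for iterated derivatives -/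
lemma iteratedDeriv_mul_of_isOpen {f g : ℝ → ℝ} (hU : IsOpen U)
    (hf : ContDiffOn ℝ ((⊤:ℕ∞) : WithTop ℕ∞) f U)
    (hg : ContDiffOn ℝ ((⊤:ℕ∞) : WithTop ℕ∞) g U) :
    ∀ (n : ℕ), ∀ x ∈ U, iteratedDeriv n (fun y => f y * g y) x
      = ∑ k ∈ range (n+1), (n.choose k : ℝ) * (iteratedDeriv k f x * iteratedDeriv (n-k) g x) := by
  intro n
  induction n with
  | zero => intro x _; simp [iteratedDeriv_zero]
  | succ n ih =>
    intro x hx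
    rw [iteratedDeriv_succ]
    have hEq : Set.EqOn (iteratedDeriv n (fun y => f y * g y))
        (fun y => ∑ k ∈ range (n+1), (n.choose k : ℝ)
          * (iteratedDeriv k f y * iteratedDeriv (n-k) g y)) U := fun y hy => ih y hy
    rw [Filter.EventuallyEq.deriv_eq (hEq.eventuallyEq_of_mem (hU.mem_nhds hx))]
    have hD : HasDerivAt (fun y => ∑ k ∈ range (n+1), (n.choose k : ℝ)
          * (iteratedDeriv k f y * iteratedDeriv (n-k) g y))
        (∑ k ∈ range (n+1), (n.choose k : ℝ)
          * (iteratedDeriv (k+1) f x * iteratedDeriv (n-k) g x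
             + iteratedDeriv k f x * iteratedDeriv (n-k+1) g x)) x := by
      apply HasDerivAt.fun_sum
      intro k _
      exact (((hasDerivAt_iteratedDeriv_of_isOpen hU hf k hx).mul
        (hasDerivAt_iteratedDeriv_of_isOpen hU hg (n-k) hx)).const_mul _)
    rw [hD.deriv]
    exact pascal_shuffle (fun k => iteratedDeriv k f x) (fun k => iteratedDeriv k g x) n

/-- iterated derivative of an affine image -/
lemma iteratedDeriv_affine_of_isOpen {h : ℝ → ℝ} (hU : IsOpen U)
    (hh : ContDiffOn ℝ ((⊤:ℕ∞) : WithTop ℕ∞) h U) (a b : ℝ) :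
    ∀ (n : ℕ), ∀ x ∈ U, iteratedDeriv n (fun y => a + b * h y) x
      = (if n = 0 then a else 0) + b * iteratedDeriv n h x := by
  intro n
  induction n with
  | zero => intro x _; simp [iteratedDeriv_zero]
  | succ n ih =>
    intro x hx
    rw [iteratedDeriv_succ]
    have hEq : Set.EqOn (iteratedDeriv n (fun y => a + b * h y))
        (fun y => (if n = 0 then a else 0) + b * iteratedDeriv n h y) U := fun y hy => ih y hy
    rw [Filter.EventuallyEq.deriv_eq (hEq.eventuallyEq_of_mem (hU.mem_nhds hx))]
    have hD : HasDerivAt (fun y => (if n = 0 then a else 0) + b * iteratedDeriv n h y)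
        (b * iteratedDeriv (n+1) h x) x :=
      ((hasDerivAt_iteratedDeriv_of_isOpen hU hh n hx).const_mul b).const_add _
    rw [hD.deriv]
    simp

end Anal

section TanSec

def Usec : Set ℝ := {x : ℝ | Real.cos x ≠ 0}

lemma Usec_open : IsOpen Usec :=
  isOpen_compl_singleton.preimage Real.continuous_cos

lemma Usec_zero : (0:ℝ) ∈ Usec := by
  simp [Usec, Real.cos_zero]

lemma fsec_contDiffOn :
    ContDiffOn ℝ ((⊤:ℕ∞) : WithTop ℕ∞) (fun x : ℝ => Real.tan x + (Real.cos x)⁻¹) Usec := by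
  intro x hx
  have hcos : Real.cos x ≠ 0 := hx
  exact ((Real.contDiffAt_tan.2 hcos).add
    ((Real.contDiff_cos.contDiffAt).inv hcos)).contDiffWithinAt

lemma fsec_deriv : Set.EqOn (deriv (fun x : ℝ => Real.tan x + (Real.cos x)⁻¹))
    (fun x : ℝ => 1/2 + (1/2) * ((Real.tan x + (Real.cos x)⁻¹) * (Real.tan x + (Real.cos x)⁻¹)))
    Usec := by
  intro x hx
  have hcos : Real.cos x ≠ 0 := hx
  have hD : HasDerivAt (fun x : ℝ => Real.tan x + (Real.cos x)⁻¹)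
      (1 / Real.cos x ^ 2 + -(-Real.sin x) / Real.cos x ^ 2) x :=
    (Real.hasDerivAt_tan hcos).add ((Real.hasDerivAt_cos x).inv hcos)
  rw [hD.deriv]
  simp only [Real.tan_eq_sin_div_cos]
  have hs := Real.sin_sq_add_cos_sq x
  field_simp
  nlinarith [hs]

end TanSec

lemma eulerE_zero : eulerE 0 = 1 := by
  rw [eulerE, iteratedDeriv_zero]
  simp

lemma eulerE_rec (n : ℕ) : eulerE (n+1) = (if n = 0 then (1:ℝ)/2 else 0)
    + (1/2) * ∑ k ∈ range (n+1), (n.choose k : ℝ) * (eulerE k * eulerE (n-k)) := by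
  rw [show eulerE (n+1)
      = iteratedDeriv (n+1) (fun x : ℝ => Real.tan x + (Real.cos x)⁻¹) 0 from rfl]
  rw [iteratedDeriv_succ']
  rw [Set.EqOn.iteratedDeriv_of_isOpen fsec_deriv Usec_open n Usec_zero]
  rw [iteratedDeriv_affine_of_isOpen Usec_open (fsec_contDiffOn.mul fsec_contDiffOn)
    (1/2) (1/2) n 0 Usec_zero]
  rw [iteratedDeriv_mul_of_isOpen Usec_open fsec_contDiffOn fsec_contDiffOn n 0 Usec_zero]
  rfl

/-- the normalized peak-sum sequence -/
noncomputable def eulA (n : ℕ) : ℝ := if n = 0 then 1 else (2:ℝ)^((1:ℤ) - n) * (qs n : ℝ)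

lemma eulA_of_ne {m : ℕ} (hm : m ≠ 0) : eulA m = (2:ℝ)^((1:ℤ) - m) * (qs m : ℝ) := by
  rw [eulA, if_neg hm]

lemma eulA_rec (n : ℕ) : eulA (n+1) = (if n = 0 then (1:ℝ)/2 else 0)
    + (1/2) * ∑ k ∈ range (n+1), (n.choose k : ℝ) * (eulA k * eulA (n-k)) := by
  have h2 : (2:ℝ) ≠ 0 := two_ne_zero
  rcases Nat.eq_zero_or_pos n with hn | hn
  · subst hn
    rw [Finset.sum_range_one]
    norm_num [eulA, qs_one]
  · have hn' : n ≠ 0 := by omega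
    rw [eulA_of_ne (Nat.succ_ne_zero n)]
    have hc := congrArg (fun m : ℕ => (m:ℝ)) (qs_rec' n)
    push_cast at hc
    rw [hc, if_neg hn', zero_add, Finset.mul_sum, Finset.mul_sum]
    refine Finset.sum_congr rfl (fun k hk => ?_)
    rw [Finset.mem_range] at hk
    have hkn : k ≤ n := by omega
    by_cases hk0 : k = 0
    · subst hk0
      rw [show eulA 0 = 1 from rfl, Nat.sub_zero, eulA_of_ne hn']
      have key : (2:ℝ)^((1:ℤ) - ((n:ℕ)+1:ℕ)) = 1/2 * 2^((1:ℤ) - (n:ℕ)) := by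
        rw [show (1:ℝ)/2 = (2:ℝ)^(-1:ℤ) by norm_num, ← zpow_add₀ h2]
        congr 1
        push_cast
        ring
      simp only [ne_eq, not_true_eq_false, false_and, if_false, qs_zero, Nat.cast_one]
      push_cast [Nat.succ_eq_add_one]
      push_cast at key
      linear_combination ((n.choose 0 : ℝ) * (qs n : ℝ)) * key
    · by_cases hkn' : k = n
      · subst hkn'
        rw [Nat.sub_self, show eulA 0 = 1 from rfl, eulA_of_ne hn']
        have key : (2:ℝ)^((1:ℤ) - ((k:ℕ)+1:ℕ)) = 1/2 * 2^((1:ℤ) - (k:ℕ)) := by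
          rw [show (1:ℝ)/2 = (2:ℝ)^(-1:ℤ) by norm_num, ← zpow_add₀ h2]
          congr 1
          push_cast
          ring
        simp only [ne_eq, not_true_eq_false, and_false, if_false, qs_zero, Nat.cast_one]
        push_cast [Nat.succ_eq_add_one]
        push_cast at key
        linear_combination ((k.choose k : ℝ) * (qs k : ℝ)) * key
      · have hnk0 : n - k ≠ 0 := by omega
        rw [eulA_of_ne hk0, eulA_of_ne hnk0]
        have hcast : (((n - k : ℕ)) : ℤ) = (n:ℤ) - (k:ℤ) := by omega
        rw [hcast]
        have key : (2:ℝ)^((1:ℤ) - ((n:ℕ)+1:ℕ)) * 2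
            = 1/2 * ((2:ℝ)^((1:ℤ) - (k:ℕ)) * 2^((1:ℤ) - ((n:ℤ) - (k:ℤ)))) := by
          rw [show (2:ℝ)^((1:ℤ) - ((n:ℕ)+1:ℕ)) * 2 = 2^(((1:ℤ) - ((n:ℕ)+1:ℕ)) + 1) from
            (zpow_add_one₀ h2 _).symm]
          rw [show (1:ℝ)/2 = (2:ℝ)^(-1:ℤ) by norm_num, ← zpow_add₀ h2, ← zpow_add₀ h2]
          congr 1
          push_cast
          ring
        simp only [ne_eq, hk0, hkn', not_false_iff, and_self, if_true]
        push_cast [Nat.succ_eq_add_one]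
        push_cast at key
        linear_combination ((n.choose k : ℝ) * (qs k : ℝ) * (qs (n-k) : ℝ)) * key

lemma eulerE_eq_eulA : ∀ n, eulerE n = eulA n := by
  intro n
  induction n using Nat.strong_induction_on with
  | _ n ih =>
    match n with
    | 0 => rw [eulerE_zero]; rfl
    | Nat.succ n =>
      rw [eulerE_rec, eulA_rec]
      congr 1
      congr 1
      refine Finset.sum_congr rfl (fun k hk => ?_)
      rw [Finset.mem_range] at hk
      rw [ih k (by omega), ih (n-k) (by omega)]

theorem euler_eq_two_pow_peak (n : ℕ) (hn : 1 ≤ n) :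
    eulerE n = (2 : ℝ) ^ ((1 : ℤ) - n) *
      ∑ σ : Equiv.Perm (Fin n), (2 : ℝ) ^ pk n σ * (1 : ℝ) ^ da n σ := by
  rw [eulerE_eq_eulA n, eulA_of_ne (by omega)]
  congr 1
  have h := congrArg (fun m : ℕ => (m:ℝ)) (sum_perm_eq_qs n)
  push_cast at h
  rw [← h]
  exact Finset.sum_congr rfl (fun σ _ => by rw [one_pow, mul_one])
end

section
/- For each n ≥ 1, E_n = −i (1+i)^{1−n} A_n(i), where A_n(t) = Σ_{σ∈S_n} t^{1+des(σ)} is the Eulerian polynomial and i is the imaginary unit. -/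
open Finset

/-- descents of a list of naturals -/
def desL : List ℕ → ℕ
  | a :: b :: t => (if b < a then 1 else 0) + desL (b :: t)
  | _ => 0

lemma desL_nil : desL [] = 0 := rfl
lemma desL_single (a : ℕ) : desL [a] = 0 := rfl
lemma desL_cons_cons (a b : ℕ) (t : List ℕ) :
    desL (a :: b :: t) = (if b < a then 1 else 0) + desL (b :: t) := rfl

/-- splitting a list at a strict maximum -/
lemma desL_append_max {m : ℕ} (l₁ l₂ : List ℕ) (h₁ : ∀ x ∈ l₁, x < m) (h₂ : ∀ x ∈ l₂, x < m) :
    desL (l₁ ++ m :: l₂) = desL l₁ + desL l₂ + (if l₂ = [] then 0 else 1) := by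
  induction l₁ with
  | nil =>
    simp only [List.nil_append, desL_nil, Nat.zero_add]
    cases l₂ with
    | nil => simp [desL_single, desL_nil]
    | cons b t =>
      have hb : b < m := h₂ b (by simp)
      simp [desL_cons_cons, hb, Nat.add_comm]
  | cons a t ih =>
    have ha : a < m := h₁ a (by simp)
    cases t with
    | nil =>
      simp only [List.cons_append, List.nil_append, desL_cons_cons, desL_single]
      rw [if_neg (by omega)]
      cases l₂ with
      | nil => simp [desL_single, desL_nil]
      | cons b s =>
        have hb : b < m := h₂ b (by simp)
        simp [desL_cons_cons, hb, desL_nil]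
        omega
    | cons c s =>
      have ih' := ih (fun x hx => h₁ x (List.mem_cons_of_mem _ hx))
      simp only [List.cons_append] at ih' ⊢
      rw [desL_cons_cons, ih', desL_cons_cons]
      omega

/-- desL is invariant under relabeling by a function preserving order on the entries -/
lemma desL_map (f : ℕ → ℕ) (l : List ℕ) (h : ∀ a ∈ l, ∀ b ∈ l, (f b < f a ↔ b < a)) :
    desL (l.map f) = desL l := by
  induction l with
  | nil => rfl
  | cons a t ih =>
    cases t with
    | nil => rfl
    | cons b s =>
      have h' : ∀ x ∈ b :: s, ∀ y ∈ b :: s, (f y < f x ↔ y < x) := fun x hx y hy =>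
        h x (List.mem_cons_of_mem _ hx) y (List.mem_cons_of_mem _ hy)
      simp only [List.map_cons] at ih ⊢
      rw [desL_cons_cons, desL_cons_cons, ih h',
        if_congr (h a (by simp) b (by simp)) rfl rfl]

open Finset

/-- the finset of permutations (as lists) of the elements of `S` -/
def permsOf (S : Finset ℕ) : Finset (List ℕ) := (S.sort (· ≤ ·)).permutations.toFinset

lemma mem_permsOf {S : Finset ℕ} {l : List ℕ} : l ∈ permsOf S ↔ l.Perm (S.sort (· ≤ ·)) := by
  simp [permsOf, List.mem_permutations]

lemma mem_permsOf_iff {S : Finset ℕ} {l : List ℕ} :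
    l ∈ permsOf S ↔ l.Nodup ∧ l.toFinset = S := by
  constructor
  · intro h
    rw [mem_permsOf] at h
    refine ⟨h.nodup_iff.2 (S.sort_nodup _), ?_⟩
    ext x
    rw [List.mem_toFinset, h.mem_iff, Finset.mem_sort]
  · rintro ⟨h1, h2⟩
    rw [mem_permsOf]
    exact List.perm_of_nodup_nodup_toFinset_eq h1 (S.sort_nodup _)
      (by rw [h2, Finset.sort_toFinset])

lemma length_of_mem_permsOf {S : Finset ℕ} {l : List ℕ} (h : l ∈ permsOf S) :
    l.length = S.card := by
  rw [mem_permsOf] at h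
  rw [h.length_eq, Finset.length_sort]

lemma mem_of_mem_permsOf {S : Finset ℕ} {l : List ℕ} (h : l ∈ permsOf S) {x : ℕ} :
    x ∈ l ↔ x ∈ S := by
  rw [mem_permsOf] at h
  rw [h.mem_iff, Finset.mem_sort]

/-- the sum of `I ^ desL` over all permutations of `{0, …, k-1}` -/
noncomputable def sP (k : ℕ) : ℂ := ∑ l ∈ permsOf (Finset.range k), Complex.I ^ desL l

/-- standardization: the descent sum over permutations of any `k`-element set of naturals
equals the one over `{0,…,k-1}`. -/
lemma sum_permsOf_eq_sP (S : Finset ℕ) :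
    ∑ l ∈ permsOf S, Complex.I ^ desL l = sP S.card := by
  classical
  set w : List ℕ := S.sort (· ≤ ·) with hw
  have hlen : w.length = S.card := Finset.length_sort _
  have hnodup : w.Nodup := S.sort_nodup _
  have hmono : StrictMono w.get := (Finset.sortedLT_sort S).strictMono_get
  set g : ℕ → ℕ := fun m => w.getD m 0 with hg
  have hglt : ∀ {a b : ℕ}, a < S.card → b < S.card → (g a < g b ↔ a < b) := by
    intro a b ha hb
    rw [hg]
    simp only [List.getD_eq_getElem _ _ (by omega : a < w.length),
      List.getD_eq_getElem _ _ (by omega : b < w.length)]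
    constructor
    · intro h
      by_contra hab
      rcases Nat.lt_or_ge b a with h' | h'
      · have := hmono (show (⟨b, by omega⟩ : Fin w.length) < ⟨a, by omega⟩ from h')
        simp only [List.get_eq_getElem] at this; omega
      · have hba : a = b := by omega
        subst hba; omega
    · intro h
      have := hmono (show (⟨a, by omega⟩ : Fin w.length) < ⟨b, by omega⟩ from h)
      simpa using this
  rw [sP]
  symm
  refine Finset.sum_nbij' (fun l => l.map g) (fun m => m.map (fun x => w.idxOf x))
    ?_ ?_ ?_ ?_ ?_
  · -- maps into permsOf S
    intro l hl
    have hlt : ∀ x ∈ l, x < S.card := fun x hx => by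
      have := (mem_of_mem_permsOf hl).1 hx; simpa using this
    rw [mem_permsOf_iff] at hl ⊢
    constructor
    · refine hl.1.map_on ?_
      intro x hx y hy hxy
      have hx' := hlt x hx; have hy' := hlt y hy
      by_contra hne
      rcases Nat.lt_or_ge x y with h | h
      · have := (hglt hx' hy').2 h; omega
      · have : y < x := by omega
        have := (hglt hy' hx').2 this; omega
    · ext x
      simp only [List.mem_toFinset, List.mem_map]
      constructor
      · rintro ⟨a, ha, rfl⟩
        have ha' : a < w.length := by rw [hlen]; exact hlt a ha
        rw [hg]
        simp only [List.getD_eq_getElem _ _ ha']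
        have : w[a] ∈ w := List.getElem_mem _
        rwa [Finset.mem_sort] at this
      · intro hx
        have hxw : x ∈ w := by rwa [Finset.mem_sort]
        obtain ⟨i, hi, hix⟩ := List.mem_iff_getElem.1 hxw
        refine ⟨i, ?_, ?_⟩
        · have : i ∈ l.toFinset := by rw [hl.2]; simp; omega
          simpa using this
        · rw [hg]; simp only [List.getD_eq_getElem _ _ hi]; exact hix
  · -- inverse maps into permsOf (range S.card)
    intro m hm
    have hmw : ∀ x ∈ m, x ∈ w := fun x hx => by
      rw [Finset.mem_sort]; exact (mem_of_mem_permsOf hm).1 hx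
    rw [mem_permsOf_iff] at hm ⊢
    constructor
    · refine hm.1.map_on ?_
      intro x hx y hy hxy
      exact (List.idxOf_inj (hmw x hx)).1 hxy
    · ext j
      simp only [List.mem_toFinset, List.mem_map, Finset.mem_range]
      constructor
      · rintro ⟨a, ha, rfl⟩
        have := List.idxOf_lt_length_iff.2 (hmw a ha)
        omega
      · intro hj
        refine ⟨w[j]'(by omega), ?_, ?_⟩
        · have : w[j]'(by omega) ∈ w := List.getElem_mem _
          rw [Finset.mem_sort] at this
          rw [← List.mem_toFinset, hm.2]; exact this
        · exact List.Nodup.idxOf_getElem hnodup j (by omega)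
  · -- left inverse
    intro l hl
    have hlt : ∀ x ∈ l, x < S.card := fun x hx => by
      have := (mem_of_mem_permsOf hl).1 hx; simpa using this
    rw [List.map_map]
    conv_rhs => rw [← List.map_id l]
    rw [List.map_inj_left]
    intro a ha
    have ha' : a < w.length := by rw [hlen]; exact hlt a ha
    simp only [Function.comp_apply, hg, List.getD_eq_getElem _ _ ha', id_eq]
    exact List.Nodup.idxOf_getElem hnodup a ha'
  · -- right inverse
    intro m hm
    have hmw : ∀ x ∈ m, x ∈ w := fun x hx => by
      rw [Finset.mem_sort]; exact (mem_of_mem_permsOf hm).1 hx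
    rw [List.map_map]
    conv_rhs => rw [← List.map_id m]
    rw [List.map_inj_left]
    intro a ha
    have h1 : w.idxOf a < w.length := List.idxOf_lt_length_iff.2 (hmw a ha)
    simp only [Function.comp_apply, hg, List.getD_eq_getElem _ _ h1, id_eq]
    exact List.getElem_idxOf h1
  · -- statistic preserved
    intro l hl
    have hlt : ∀ x ∈ l, x < S.card := fun x hx => by
      have := (mem_of_mem_permsOf hl).1 hx; simpa using this
    rw [desL_map]
    intro a ha b hb
    exact hglt (hlt b hb) (hlt a ha)

lemma takeWhile_middle {α : Type*} (p : α → Bool) (a : α) (l₁ l₂ : List α)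
    (h₁ : ∀ x ∈ l₁, p x = true) (h₂ : p a = false) :
    (l₁ ++ a :: l₂).takeWhile p = l₁ ∧ (l₁ ++ a :: l₂).dropWhile p = a :: l₂ := by
  induction l₁ with
  | nil => simp [List.takeWhile, List.dropWhile, h₂]
  | cons b t ih =>
    have hb : p b = true := h₁ b (by simp)
    have ih' := ih (fun x hx => h₁ x (List.mem_cons_of_mem _ hx))
    simp [List.takeWhile, List.dropWhile, hb, ih'.1, ih'.2]

lemma sP_succ (n : ℕ) : sP (n + 1) =
    ∑ k ∈ Finset.range (n + 1),
      (n.choose k : ℂ) * (sP k * sP (n - k) * (if k = n then 1 else Complex.I)) := by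
  classical
  set p : ℕ → Bool := fun x => x != n with hp
  have hT : sP (n+1) = ∑ x ∈ ((Finset.range n).powerset).sigma
      (fun A => (permsOf A) ×ˢ (permsOf (Finset.range n \ A))),
      Complex.I ^ (desL x.2.1 + desL x.2.2 + if x.2.2 = [] then 0 else 1) := by
    rw [sP]
    refine Finset.sum_nbij' (fun l => ⟨(l.takeWhile p).toFinset,
        (l.takeWhile p, (l.dropWhile p).tail)⟩) (fun x => x.2.1 ++ n :: x.2.2) ?_ ?_ ?_ ?_ ?_
    · -- forward membership
      intro l hl
      have hmem : ∀ x, x ∈ l ↔ x < n + 1 := fun x => by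
        rw [mem_of_mem_permsOf hl, Finset.mem_range]
      have hnd : l.Nodup := (mem_permsOf_iff.1 hl).1
      have hnl : n ∈ l := (hmem n).2 (by omega)
      -- split l
      have hdne : l.dropWhile p ≠ [] := by
        intro h
        have := List.dropWhile_eq_nil_iff.1 h n hnl
        simp [hp] at this
      have hhead : (l.dropWhile p).head hdne = n := by
        have := List.head_dropWhile_not p hdne
        simpa [hp] using this
      have hsplit : l = l.takeWhile p ++ n :: (l.dropWhile p).tail := by
        nth_rewrite 1 [← (List.takeWhile_append_dropWhile : l.takeWhile p ++ l.dropWhile p = l)]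
        congr 1
        rw [← hhead]
        exact (List.cons_head_tail hdne).symm
      set l₁ := l.takeWhile p
      set l₂ := (l.dropWhile p).tail
      have h1lt : ∀ x ∈ l₁, x < n := by
        intro x hx
        have hxp := List.mem_takeWhile_imp hx
        have hxl : x ∈ l := (List.takeWhile_sublist p).mem hx
        have := (hmem x).1 hxl
        simp only [hp, bne_iff_ne, ne_eq] at hxp
        omega
      have hndsplit := hsplit ▸ hnd
      have hnd2 := List.nodup_middle.1 hndsplit
      have h2lt : ∀ x ∈ l₂, x < n := by
        intro x hx
        have hxl : x ∈ l := by rw [hsplit]; simp [hx]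
        have := (hmem x).1 hxl
        have hxn : x ≠ n := by
          rintro rfl
          exact (List.nodup_cons.1 hnd2).1 (by simp [hx])
        omega
      have hdisj : ∀ x ∈ l₁, x ∉ l₂ := by
        intro x hx hx2
        have := (List.nodup_cons.1 hnd2).2
        exact (List.nodup_append.1 this).2.2 x hx x hx2 rfl
      simp only [Finset.mem_sigma, Finset.mem_powerset, Finset.mem_product]
      refine ⟨?_, ?_, ?_⟩
      · intro x hx
        rw [List.mem_toFinset] at hx
        rw [Finset.mem_range]
        exact h1lt x hx
      · rw [mem_permsOf_iff]
        exact ⟨(List.nodup_append.1 hnd2.of_cons).1, rfl⟩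
      · rw [mem_permsOf_iff]
        refine ⟨?_, ?_⟩
        · exact hnd.sublist ((List.tail_sublist _).trans (List.dropWhile_sublist p))
        · ext x
          simp only [List.mem_toFinset, Finset.mem_sdiff, Finset.mem_range]
          constructor
          · intro hx
            exact ⟨h2lt x hx, fun hc => hdisj x (by simpa using hc) hx⟩
          · rintro ⟨hxn, hxA⟩
            have hxl : x ∈ l := (hmem x).2 (by omega)
            rw [hsplit] at hxl
            rcases List.mem_append.1 hxl with h | h
            · exact absurd h hxA
            · rcases List.mem_cons.1 h with h | h
              · omega
              · exact h
    · -- backward membership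
      intro x hx
      simp only [Finset.mem_sigma, Finset.mem_powerset, Finset.mem_product] at hx
      obtain ⟨hA, h1, h2⟩ := hx
      obtain ⟨l₁nd, l₁fin⟩ := mem_permsOf_iff.1 h1
      obtain ⟨l₂nd, l₂fin⟩ := mem_permsOf_iff.1 h2
      have h1lt : ∀ y ∈ x.2.1, y < n := by
        intro y hy
        have : y ∈ x.1 := by rw [← l₁fin]; exact List.mem_toFinset.2 hy
        have := hA this; rwa [Finset.mem_range] at this
      have h2lt : ∀ y ∈ x.2.2, y < n := by
        intro y hy
        have : y ∈ Finset.range n \ x.1 := by rw [← l₂fin]; exact List.mem_toFinset.2 hy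
        have := (Finset.mem_sdiff.1 this).1; rwa [Finset.mem_range] at this
      rw [mem_permsOf_iff]
      constructor
      · rw [List.nodup_middle, List.nodup_cons, List.nodup_append]
        refine ⟨?_, l₁nd, l₂nd, ?_⟩
        · intro hc
          rcases List.mem_append.1 hc with h | h
          · exact absurd (h1lt n h) (by omega)
          · exact absurd (h2lt n h) (by omega)
        · intro y hy1 z hy2 hyz
          rw [← hyz] at hy2
          have hy1' : y ∈ x.1 := by rw [← l₁fin]; exact List.mem_toFinset.2 hy1
          have hy2' : y ∈ Finset.range n \ x.1 := by rw [← l₂fin]; exact List.mem_toFinset.2 hy2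
          exact (Finset.mem_sdiff.1 hy2').2 hy1'
      · ext y
        simp only [List.toFinset_append, List.toFinset_cons, Finset.mem_union, Finset.mem_insert,
          List.mem_toFinset, Finset.mem_range]
        constructor
        · rintro (h | h | h)
          · have := h1lt y h; omega
          · omega
          · have := h2lt y h; omega
        · intro hy
          by_cases hyn : y = n
          · exact Or.inr (Or.inl hyn)
          · have hylt : y < n := by omega
            by_cases hyA : y ∈ x.1
            · left; rw [← List.mem_toFinset, l₁fin]; exact hyA
            · right; right; rw [← List.mem_toFinset, l₂fin]
              exact Finset.mem_sdiff.2 ⟨Finset.mem_range.2 hylt, hyA⟩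
    · -- left inverse
      intro l hl
      have hmem : ∀ x, x ∈ l ↔ x < n + 1 := fun x => by
        rw [mem_of_mem_permsOf hl, Finset.mem_range]
      have hnl : n ∈ l := (hmem n).2 (by omega)
      have hdne : l.dropWhile p ≠ [] := by
        intro h
        have := List.dropWhile_eq_nil_iff.1 h n hnl
        simp [hp] at this
      have hhead : (l.dropWhile p).head hdne = n := by
        have := List.head_dropWhile_not p hdne
        simpa [hp] using this
      dsimp only
      nth_rewrite 3 [← (List.takeWhile_append_dropWhile : l.takeWhile p ++ l.dropWhile p = l)]
      congr 1
      rw [← hhead]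
      exact List.cons_head_tail hdne
    · -- right inverse
      rintro ⟨A, l₁, l₂⟩ hx
      simp only [Finset.mem_sigma, Finset.mem_powerset, Finset.mem_product] at hx
      obtain ⟨hA, h1, h2⟩ := hx
      have h1lt : ∀ y ∈ l₁, y < n := by
        intro y hy
        have : y ∈ A := by
          rw [← (mem_permsOf_iff.1 h1).2]; exact List.mem_toFinset.2 hy
        have := hA this; rwa [Finset.mem_range] at this
      have htw := takeWhile_middle p n l₁ l₂
        (fun y hy => by have := h1lt y hy; simp only [hp, bne_iff_ne, ne_eq, decide_eq_true_eq]; omega)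
        (by simp [hp])
      have htake : (l₁ ++ n :: l₂).takeWhile p = l₁ := htw.1
      have hdrop : (l₁ ++ n :: l₂).dropWhile p = n :: l₂ := htw.2
      dsimp only
      rw [htake, hdrop, (mem_permsOf_iff.1 h1).2]
      rfl
    · -- statistic
      intro l hl
      have hmem : ∀ x, x ∈ l ↔ x < n + 1 := fun x => by
        rw [mem_of_mem_permsOf hl, Finset.mem_range]
      have hnd : l.Nodup := (mem_permsOf_iff.1 hl).1
      have hnl : n ∈ l := (hmem n).2 (by omega)
      have hdne : l.dropWhile p ≠ [] := by
        intro h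
        have := List.dropWhile_eq_nil_iff.1 h n hnl
        simp [hp] at this
      have hhead : (l.dropWhile p).head hdne = n := by
        have := List.head_dropWhile_not p hdne
        simpa [hp] using this
      have hsplit : l = l.takeWhile p ++ n :: (l.dropWhile p).tail := by
        nth_rewrite 1 [← (List.takeWhile_append_dropWhile : l.takeWhile p ++ l.dropWhile p = l)]
        congr 1
        rw [← hhead]
        exact (List.cons_head_tail hdne).symm
      have h1lt : ∀ x ∈ l.takeWhile p, x < n := by
        intro x hx
        have hxp := List.mem_takeWhile_imp hx
        have hxl : x ∈ l := (List.takeWhile_sublist p).mem hx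
        have := (hmem x).1 hxl
        simp only [hp, bne_iff_ne, ne_eq] at hxp
        omega
      have hndsplit := hsplit ▸ hnd
      have hnd2 := List.nodup_middle.1 hndsplit
      have h2lt : ∀ x ∈ (l.dropWhile p).tail, x < n := by
        intro x hx
        have hxl : x ∈ l := by rw [hsplit]; simp [hx]
        have := (hmem x).1 hxl
        have hxn : x ≠ n := by
          rintro rfl
          exact (List.nodup_cons.1 hnd2).1 (by simp [hx])
        omega
      dsimp only
      congr 1
      nth_rewrite 1 [hsplit]
      rw [desL_append_max _ _ h1lt h2lt]
  rw [hT, Finset.sum_sigma]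
  have hstep : ∀ A ∈ (Finset.range n).powerset,
      (∑ q ∈ (permsOf A) ×ˢ (permsOf (Finset.range n \ A)),
        Complex.I ^ (desL q.1 + desL q.2 + if q.2 = [] then 0 else 1))
      = sP A.card * sP (n - A.card) * (if A.card = n then 1 else Complex.I) := by
    intro A hA
    rw [Finset.mem_powerset] at hA
    have hAcard : A.card ≤ n := by
      have := Finset.card_le_card hA; rwa [Finset.card_range] at this
    have hcard : (Finset.range n \ A).card = n - A.card := by
      rw [Finset.card_sdiff_of_subset hA, Finset.card_range]
    have hind : ∀ l₂ ∈ permsOf (Finset.range n \ A), ((l₂ = []) ↔ (A.card = n)) := by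
      intro l₂ h2
      have hlen := length_of_mem_permsOf h2
      rw [hcard] at hlen
      constructor
      · intro h; rw [h] at hlen; simp at hlen; omega
      · intro h
        have : l₂.length = 0 := by omega
        exact List.length_eq_zero_iff.1 this
    rw [Finset.sum_product]
    calc ∑ l₁ ∈ permsOf A, ∑ l₂ ∈ permsOf (Finset.range n \ A),
          Complex.I ^ (desL l₁ + desL l₂ + if l₂ = [] then 0 else 1)
        = ∑ l₁ ∈ permsOf A, ∑ l₂ ∈ permsOf (Finset.range n \ A),
          (Complex.I ^ desL l₁ * Complex.I ^ desL l₂) * (if A.card = n then 1 else Complex.I) := by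
          refine Finset.sum_congr rfl fun l₁ _ => Finset.sum_congr rfl fun l₂ h2 => ?_
          rw [pow_add, pow_add]
          congr 1
          by_cases h : l₂ = []
          · rw [if_pos h, if_pos ((hind l₂ h2).1 h), pow_zero]
          · rw [if_neg h, if_neg (fun hc => h ((hind l₂ h2).2 hc)), pow_one]
      _ = ((∑ l₁ ∈ permsOf A, Complex.I ^ desL l₁) *
            (∑ l₂ ∈ permsOf (Finset.range n \ A), Complex.I ^ desL l₂)) *
            (if A.card = n then 1 else Complex.I) := by
          rw [Finset.sum_mul_sum, Finset.sum_mul]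
          refine Finset.sum_congr rfl fun l₁ _ => ?_
          rw [Finset.sum_mul]
      _ = sP A.card * sP (n - A.card) * (if A.card = n then 1 else Complex.I) := by
          rw [sum_permsOf_eq_sP, sum_permsOf_eq_sP, hcard]
  rw [Finset.sum_congr rfl hstep, Finset.sum_powerset]
  refine Finset.sum_congr (by rw [Finset.card_range]) ?_
  intro j hj
  rw [Finset.sum_powersetCard j (Finset.range n)
    (fun k => sP k * sP (n - k) * (if k = n then 1 else Complex.I)), Finset.card_range,
    nsmul_eq_mul, mul_assoc]

lemma desL_eq_sum (l : List ℕ) :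
    desL l = ∑ j ∈ Finset.range (l.length - 1),
      (if l.getD (j+1) 0 < l.getD j 0 then 1 else 0) := by
  induction l with
  | nil => simp [desL]
  | cons a t ih =>
    cases t with
    | nil => simp [desL]
    | cons b s =>
      rw [desL_cons_cons, ih]
      have hlen : (a :: b :: s).length - 1 = ((b :: s).length - 1) + 1 := by
        simp
      rw [hlen, Finset.sum_range_succ']
      simp only [List.getD_cons_succ, List.getD_cons_zero]
      omega

/-- the word of a permutation as a list of naturals -/
def word (n : ℕ) (σ : Equiv.Perm (Fin n)) : List ℕ :=
  (List.finRange n).map (fun j => (σ j : ℕ))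

lemma word_length (n : ℕ) (σ : Equiv.Perm (Fin n)) : (word n σ).length = n := by
  simp [word]

lemma word_getElem (n : ℕ) (σ : Equiv.Perm (Fin n)) (j : ℕ) (h : j < n) :
    (word n σ).getD j 0 = (σ ⟨j, h⟩ : ℕ) := by
  have h' : j < (word n σ).length := by rw [word_length]; exact h
  rw [List.getD_eq_getElem _ _ h']
  simp only [word, List.getElem_map, List.getElem_finRange]
  congr 1

lemma des_eq_desL (n : ℕ) (σ : Equiv.Perm (Fin n)) : des n σ = desL (word n σ) := by
  rw [des, desL_eq_sum, Finset.card_filter, word_length]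
  have hIcc : Finset.Icc 1 (n-1) = Finset.Ico 1 n := by
    ext j; simp only [Finset.mem_Icc, Finset.mem_Ico]; omega
  rw [hIcc, Finset.sum_Ico_eq_sum_range]
  refine Finset.sum_congr rfl ?_
  intro j hj
  rw [Finset.mem_range] at hj
  have hj1 : j < n := by omega
  have hj2 : j + 1 < n := by omega
  have e1 : extWord n σ (1 + j) = (σ ⟨j, hj1⟩ : ℕ) := by
    rw [extWord, dif_pos (⟨by omega, by omega⟩ : 1 ≤ 1 + j ∧ 1 + j - 1 < n)]
    have h : (⟨1 + j - 1, by omega⟩ : Fin n) = ⟨j, hj1⟩ := by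
      apply Fin.ext; simp
    rw [h]
  have e2 : extWord n σ (1 + j + 1) = (σ ⟨j + 1, hj2⟩ : ℕ) := by
    rw [extWord, dif_pos (⟨by omega, by omega⟩ : 1 ≤ 1 + j + 1 ∧ 1 + j + 1 - 1 < n)]
    have h : (⟨1 + j + 1 - 1, by omega⟩ : Fin n) = ⟨j + 1, hj2⟩ := by
      apply Fin.ext; simp; omega
    rw [h]
  rw [e1, e2, word_getElem n σ j hj1, word_getElem n σ (j+1) hj2]

lemma sum_perm_eq_sP (n : ℕ) :
    ∑ σ : Equiv.Perm (Fin n), Complex.I ^ des n σ = sP n := by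
  classical
  rw [sP]
  refine Finset.sum_bij (fun σ _ => word n σ) ?_ ?_ ?_ ?_
  · intro σ _
    rw [mem_permsOf_iff]
    constructor
    · exact (List.nodup_finRange n).map
        (fun a b hab => (Equiv.injective σ) (Fin.val_injective hab))
    · ext x
      simp only [List.mem_toFinset, word, List.mem_map, List.mem_finRange, Finset.mem_range]
      constructor
      · rintro ⟨j, _, rfl⟩; exact (σ j).isLt
      · intro hx; exact ⟨σ.symm ⟨x, hx⟩, by simp⟩
  · intro σ _ τ _ h
    simp only [word] at h
    rw [List.map_inj_left] at h
    ext j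
    exact h j (List.mem_finRange j)
  · intro l hl
    have hlen : l.length = n := by rw [length_of_mem_permsOf hl, Finset.card_range]
    have hnd : l.Nodup := (mem_permsOf_iff.1 hl).1
    have hlt : ∀ x ∈ l, x < n := fun x hx => by
      have := (mem_of_mem_permsOf hl).1 hx
      rwa [Finset.mem_range] at this
    set g : Fin n → Fin n := fun j =>
      ⟨l.get (Fin.cast hlen.symm j), hlt _ (l.get_mem _)⟩ with hg
    have hginj : Function.Injective g := by
      intro a b hab
      have h2 : l.get (Fin.cast hlen.symm a) = l.get (Fin.cast hlen.symm b) :=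
        congrArg Fin.val hab
      have := List.nodup_iff_injective_get.1 hnd h2
      exact Fin.cast_injective _ this
    set τ : Equiv.Perm (Fin n) := Equiv.ofBijective g (Finite.injective_iff_bijective.1 hginj)
      with hτ
    refine ⟨τ, Finset.mem_univ _, ?_⟩
    refine List.ext_getElem (by rw [word_length, hlen]) (fun j h1 h2 => ?_)
    have h1n : j < n := by rw [word_length] at h1; exact h1
    have hval : (word n τ).getD j 0 = l[j] := by
      rw [word_getElem n τ j h1n]
      show (g ⟨j, h1n⟩ : ℕ) = l[j]
      simp [hg, List.get_eq_getElem]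
    rw [List.getD_eq_getElem _ _ (by rw [word_length]; exact h1n)] at hval
    exact hval
  · intro σ _
    rw [des_eq_desL]


/-- the derivation `p ↦ (1+X²)/2 · p'` -/
noncomputable def Dop (p : Polynomial ℝ) : Polynomial ℝ :=
  Polynomial.C (1/2 : ℝ) * ((1 + Polynomial.X ^ 2) * p.derivative)

/-- the polynomials expressing the iterated derivatives of `tan + sec` -/
noncomputable def Ppoly : ℕ → Polynomial ℝ
  | 0 => Polynomial.X
  | n + 1 => Dop (Ppoly n)

lemma Dop_mul (p q : Polynomial ℝ) : Dop (p * q) = Dop p * q + p * Dop q := by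
  unfold Dop
  rw [Polynomial.derivative_mul]
  ring

lemma Dop_smul (k : ℕ) (p : Polynomial ℝ) : Dop (k • p) = k • Dop p := by
  unfold Dop
  rw [Polynomial.derivative_smul, mul_smul_comm, mul_smul_comm]

lemma hasDerivAt_secTan {x : ℝ} (hx : Real.cos x ≠ 0) :
    HasDerivAt (fun y : ℝ => Real.tan y + (Real.cos y)⁻¹)
      ((1 + (Real.tan x + (Real.cos x)⁻¹) ^ 2) / 2) x := by
  have h1 := Real.hasDerivAt_tan hx
  have h2 : HasDerivAt (fun y : ℝ => (Real.cos y)⁻¹)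
      (Real.sin x / Real.cos x ^ 2) x := by
    have h3 := (Real.hasDerivAt_cos x).inv hx
    refine h3.congr_deriv ?_
    ring
  have h4 := h1.add h2
  refine h4.congr_deriv ?_
  symm
  have hs : Real.sin x ^ 2 + Real.cos x ^ 2 = 1 := Real.sin_sq_add_cos_sq x
  rw [Real.tan_eq_sin_div_cos]
  field_simp
  ring_nf
  nlinarith [hs]

lemma iteratedDeriv_secTan (n : ℕ) :
    ∀ x : ℝ, Real.cos x ≠ 0 →
      iteratedDeriv n (fun y : ℝ => Real.tan y + (Real.cos y)⁻¹) x
        = (Ppoly n).eval (Real.tan x + (Real.cos x)⁻¹) := by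
  induction n with
  | zero => intro x hx; simp [Ppoly]
  | succ n ih =>
    intro x hx
    rw [iteratedDeriv_succ]
    have hopen : IsOpen {y : ℝ | Real.cos y ≠ 0} := by
      have : {y : ℝ | Real.cos y ≠ 0} = Real.cos ⁻¹' {0}ᶜ := rfl
      rw [this]
      exact Real.continuous_cos.isOpen_preimage _ isOpen_compl_singleton
    have hev : iteratedDeriv n (fun y : ℝ => Real.tan y + (Real.cos y)⁻¹)
        =ᶠ[nhds x] fun y => (Ppoly n).eval (Real.tan y + (Real.cos y)⁻¹) := by
      filter_upwards [hopen.mem_nhds hx] with y hy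
      exact ih y hy
    rw [hev.deriv_eq]
    have hD : HasDerivAt (fun y : ℝ => (Ppoly n).eval (Real.tan y + (Real.cos y)⁻¹))
        ((Ppoly n).derivative.eval (Real.tan x + (Real.cos x)⁻¹) *
          ((1 + (Real.tan x + (Real.cos x)⁻¹) ^ 2) / 2)) x :=
      (Polynomial.hasDerivAt (Ppoly n) _).comp x (hasDerivAt_secTan hx)
    rw [hD.deriv]
    show _ = (Dop (Ppoly n)).eval _
    unfold Dop
    simp only [Polynomial.eval_mul, Polynomial.eval_C, Polynomial.eval_add,
      Polynomial.eval_one, Polynomial.eval_pow, Polynomial.eval_X]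
    ring

lemma Dop_sum {ι : Type*} (s : Finset ι) (f : ι → Polynomial ℝ) :
    Dop (∑ i ∈ s, f i) = ∑ i ∈ s, Dop (f i) := by
  unfold Dop
  rw [Polynomial.derivative_sum, Finset.mul_sum, Finset.mul_sum]

lemma Ppoly_leibniz : ∀ n : ℕ, 1 ≤ n →
    2 • Ppoly (n+1) = ∑ ij ∈ Finset.HasAntidiagonal.antidiagonal n, n.choose ij.1 • (Ppoly ij.1 * Ppoly ij.2) := by
  intro n hn
  induction n, hn using Nat.le_induction with
  | base =>
    rw [Finset.Nat.sum_antidiagonal_eq_sum_range_succ (fun a b => Nat.choose 1 a • (Ppoly a * Ppoly b))]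
    rw [Finset.sum_range_succ, Finset.sum_range_one]
    show 2 • Ppoly 2 = _
    simp only [Nat.choose_zero_right, Nat.choose_one_right, one_smul]
    show 2 • Dop (Dop Polynomial.X) = Ppoly 0 * Ppoly 1 + Ppoly 1 * Ppoly 0
    show 2 • Dop (Dop Polynomial.X) =
      Polynomial.X * Dop Polynomial.X + Dop Polynomial.X * Polynomial.X
    unfold Dop
    simp only [Polynomial.derivative_X, mul_one, Polynomial.derivative_mul,
      Polynomial.derivative_C, Polynomial.derivative_add, Polynomial.derivative_one,
      Polynomial.derivative_pow, Polynomial.derivative_X_pow]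
    ring_nf
    simp only [← map_pow, ← map_mul]
    have h14 : Polynomial.C (((1:ℝ)/2) ^ 2) * Polynomial.C (2 : ℝ) = Polynomial.C ((1:ℝ)/2) := by
      rw [← map_mul]; norm_num
    calc Polynomial.C (((1:ℝ)/2) ^ 2) * Polynomial.X * Polynomial.C 2 * 2 +
          Polynomial.C (((1:ℝ)/2) ^ 2) * Polynomial.X ^ 3 * Polynomial.C 2 * 2
        = (Polynomial.C (((1:ℝ)/2) ^ 2) * Polynomial.C 2) * Polynomial.X * 2 +
          (Polynomial.C (((1:ℝ)/2) ^ 2) * Polynomial.C 2) * Polynomial.X ^ 3 * 2 := by ring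
      _ = _ := by rw [h14]
  | succ n hn ih =>
    have h1 : Ppoly (n+2) = Dop (Ppoly (n+1)) := rfl
    rw [h1, ← Dop_smul, ih, Dop_sum]
    have h2 : ∀ ij ∈ Finset.HasAntidiagonal.antidiagonal n,
        Dop (n.choose ij.1 • (Ppoly ij.1 * Ppoly ij.2)) =
          n.choose ij.1 • (Ppoly (ij.1+1) * Ppoly ij.2)
          + n.choose ij.1 • (Ppoly ij.1 * Ppoly (ij.2+1)) := by
      intro ij _
      rw [Dop_smul, Dop_mul, smul_add]
      rfl
    rw [Finset.sum_congr rfl h2, Finset.sum_add_distrib]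
    rw [Finset.sum_antidiagonal_choose_succ_nsmul (fun a b => Ppoly a * Ppoly b) n]
    rw [add_comm]
    congr 1
    refine Finset.sum_congr rfl fun ij hij => ?_
    have : ij.1 + ij.2 = n := Finset.HasAntidiagonal.mem_antidiagonal.1 hij
    rw [Nat.choose_symm_of_eq_add (by omega : n = ij.2 + ij.1)]

lemma e_rec (n : ℕ) (hn : 1 ≤ n) :
    2 * (Ppoly (n+1)).eval 1 = ∑ ij ∈ Finset.HasAntidiagonal.antidiagonal n,
      (n.choose ij.1 : ℝ) * ((Ppoly ij.1).eval 1 * (Ppoly ij.2).eval 1) := by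
  have h := congrArg (Polynomial.eval (1 : ℝ)) (Ppoly_leibniz n hn)
  simp only [Polynomial.eval_smul, Polynomial.eval_finset_sum, Polynomial.eval_mul,
    smul_eq_mul, nsmul_eq_mul, Polynomial.eval_ofNat, Polynomial.eval_natCast] at h
  push_cast at h ⊢
  convert h using 2


noncomputable def eC (k : ℕ) : ℂ := ((Ppoly k).eval 1 : ℝ)

lemma eC_zero : eC 0 = 1 := by simp [eC, Ppoly]

lemma eC_one : eC 1 = 1 := by
  show (((Dop Polynomial.X).eval 1 : ℝ) : ℂ) = 1
  unfold Dop
  simp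
  norm_num

lemma sP_zero : sP 0 = 1 := by
  have h : permsOf (Finset.range 0) = {[]} := by
    rw [permsOf]
    norm_num [Finset.sort_empty]
  rw [sP, h, Finset.sum_singleton]
  rfl

lemma sP_one : sP 1 = 1 := by
  have h := sP_succ 0
  rw [Finset.sum_range_one] at h
  simpa [sP_zero] using h

/-- the complex-form recurrence for `eC`, coming from `2f' = 1 + f²`. -/
lemma eC_rec (n : ℕ) (hn : 1 ≤ n) :
    (2 : ℂ) * eC (n+1) = ∑ k ∈ Finset.range (n+1),
      (n.choose k : ℂ) * (eC k * eC (n - k)) := by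
  have h := e_rec n hn
  rw [Finset.Nat.sum_antidiagonal_eq_sum_range_succ
    (fun a b => (n.choose a : ℝ) * ((Ppoly a).eval 1 * (Ppoly b).eval 1))] at h
  have h2 := congrArg (fun r : ℝ => (r : ℂ)) h
  push_cast at h2
  convert h2 using 1 <;> rfl

lemma key_lemma : ∀ n : ℕ, 1 ≤ n → 2 * Complex.I * sP n = (1 + Complex.I) ^ (n + 1) * eC n := by
  intro n
  induction n using Nat.strong_induction_on with
  | _ n IH =>
    intro hn
    match n, hn with
    | 1, _ =>
      rw [sP_one, eC_one]
      linear_combination (-1 : ℂ) * Complex.I_sq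
    | (m+2), _ =>
      set z : ℂ := 1 + Complex.I with hzdef
      have H : ∀ k, 1 ≤ k → k ≤ m+1 → 2*Complex.I*sP k = z^(k+1) * eC k :=
        fun k h1 h2 => IH k (by omega) h1
      have hS := sP_succ (m+1)
      rw [Finset.sum_range_succ, Finset.sum_range_succ'] at hS
      have hE := eC_rec (m+1) (by omega)
      rw [Finset.sum_range_succ, Finset.sum_range_succ'] at hE
      simp only [Nat.choose_zero_right, Nat.choose_self, Nat.sub_zero, Nat.sub_self,
        Nat.cast_one, one_mul, sP_zero, eC_zero, mul_one, if_pos] at hS hE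
      rw [if_neg (show ¬ ((0:ℕ) = m+1) by omega)] at hS
      have hm1 := H (m+1) (by omega) (le_refl _)
      have hmidsum : (-4 : ℂ) * (∑ k ∈ Finset.range m, (((m+1).choose (k+1) : ℂ) *
            (sP (k+1) * sP (m+1-(k+1)) * if k+1 = m+1 then 1 else Complex.I)))
          = Complex.I * z^(m+3) * (∑ k ∈ Finset.range m, (((m+1).choose (k+1) : ℂ) *
            (eC (k+1) * eC (m+1-(k+1))))) := by
        rw [Finset.mul_sum, Finset.mul_sum]
        refine Finset.sum_congr rfl fun k hk => ?_
        rw [Finset.mem_range] at hk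
        rw [if_neg (show ¬ (k+1 = m+1) by omega)]
        have hsub : m + 1 - (k+1) = m - k := by omega
        rw [hsub]
        have ha := H (k+1) (by omega) (by omega)
        have hb := H (m-k) (by omega) (by omega)
        have hzz : z^(k+1+1) * z^(m-k+1) = z^(m+3) := by
          rw [← pow_add]; congr 1; omega
        calc (-4 : ℂ) * (((m+1).choose (k+1) : ℂ) * (sP (k+1) * sP (m-k) * Complex.I))
            = ((m+1).choose (k+1) : ℂ) *
              ((2*Complex.I*sP (k+1)) * (2*Complex.I*sP (m-k)) * Complex.I) := by
              linear_combination ((-4 : ℂ) * (((m+1).choose (k+1) : ℂ)) * sP (k+1) *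
                sP (m-k) * Complex.I) * Complex.I_sq
          _ = ((m+1).choose (k+1) : ℂ) *
              ((z^(k+1+1) * eC (k+1)) * (z^(m-k+1) * eC (m-k)) * Complex.I) := by
              rw [ha, hb]
          _ = (z^(k+1+1) * z^(m-k+1)) * (((m+1).choose (k+1) : ℂ) *
              (eC (k+1) * eC (m-k) * Complex.I)) := by ring
          _ = Complex.I * z^(m+3) * (((m+1).choose (k+1) : ℂ) * (eC (k+1) * eC (m-k))) := by
              rw [hzz]; ring
      linear_combination (2*Complex.I) * hS + (-(z^(m+3))/2) * hE + (-(Complex.I)/2) * hmidsum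
        + z * hm1 + (-(z^(m+3)) * (∑ k ∈ Finset.range m, (((m+1).choose (k+1) : ℂ) *
            (eC (k+1) * eC (m+1-(k+1))))) / 2) * Complex.I_sq

lemma eulerE_eq (n : ℕ) : eulerE n = (Ppoly n).eval 1 := by
  rw [eulerE]
  have h := iteratedDeriv_secTan n 0 (by rw [Real.cos_zero]; norm_num)
  rw [h, Real.tan_zero, Real.cos_zero]
  norm_num

theorem euler_eq_eulerian_at_i (n : ℕ) (hn : 1 ≤ n) :
    (eulerE n : ℂ) = -Complex.I * (1 + Complex.I) ^ ((1 : ℤ) - n) *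
      ∑ σ : Equiv.Perm (Fin n), Complex.I ^ (1 + des n σ) := by
  have hsum : (∑ σ : Equiv.Perm (Fin n), Complex.I ^ (1 + des n σ)) = Complex.I * sP n := by
    simp only [pow_add, pow_one]
    rw [← Finset.mul_sum, sum_perm_eq_sP]
  rw [hsum]
  have hz : (1 + Complex.I) ≠ 0 := by
    intro h
    have := congrArg Complex.im h
    simp at this
  have hkey := key_lemma n hn
  have hcast : (eulerE n : ℂ) = eC n := by rw [eulerE_eq]; rfl
  rw [hcast]
  have hzp : (1+Complex.I)^((1:ℤ)-n) * (1+Complex.I)^((n:ℤ)+1) = 2 * Complex.I := by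
    rw [← zpow_add₀ hz]
    have he : (1:ℤ) - n + (n+1) = 2 := by ring
    rw [he]
    have h2 : ((1:ℂ)+Complex.I)^(2:ℤ) = ((1:ℂ)+Complex.I)*((1:ℂ)+Complex.I) := zpow_two _
    rw [h2]
    linear_combination Complex.I_sq
  have h2I : (2 * Complex.I) ≠ 0 := by simp [Complex.I_ne_zero]
  apply mul_left_cancel₀ h2I
  calc 2 * Complex.I * eC n
      = (1+Complex.I)^((1:ℤ)-n) * (1+Complex.I)^((n:ℤ)+1) * eC n := by rw [hzp]
    _ = (1+Complex.I)^((1:ℤ)-n) * ((1+Complex.I)^(n+1) * eC n) := by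
        rw [← zpow_natCast (1+Complex.I) (n+1)]
        push_cast
        ring
    _ = (1+Complex.I)^((1:ℤ)-n) * (2 * Complex.I * sP n) := by rw [← hkey]
    _ = 2 * Complex.I * (-Complex.I * (1+Complex.I)^((1:ℤ)-n) * (Complex.I * sP n)) := by
        linear_combination (2*Complex.I*(1+Complex.I)^((1:ℤ)-n)*sP n) * Complex.I_sq
end

section
/- The Hankel determinants of the sequence (E_0, 0, E_2, 0, E_4, 0, ...) of interleaved secant numbers are H_n = Π_{k=1}^{n−1} (k!)². -/
open Finset

noncomputable def Sc : ℕ → ℕ → ℝ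
  | 0, k => if k = 0 then 1 else 0
  | n+1, k => ((k:ℝ)+1) * Sc n (k+1) + (match k with | 0 => (0:ℝ) | j+1 => ((j:ℝ)+1) * Sc n j)

lemma Sc_zero (k : ℕ) : Sc 0 k = if k = 0 then 1 else 0 := by simp [Sc]
lemma Sc_succ_zero (n : ℕ) : Sc (n+1) 0 = Sc n 1 := by simp [Sc]
lemma Sc_succ_succ (n j : ℕ) :
    Sc (n+1) (j+1) = ((j:ℝ)+2) * Sc n (j+2) + ((j:ℝ)+1) * Sc n j := by
  simp only [Sc]; push_cast; ring_nf

lemma Sc_vanish : ∀ (n k : ℕ), n < k → Sc n k = 0 := by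
  intro n
  induction n with
  | zero => intro k hk; rw [Sc_zero]; simp; omega
  | succ n ih =>
    intro k hk
    obtain ⟨j, rfl⟩ : ∃ j, k = j+1 := ⟨k-1, by omega⟩
    rw [Sc_succ_succ, ih _ (by omega), ih _ (by omega)]; ring

lemma sum_pad (f : ℕ → ℝ) {M N : ℕ} (h : M ≤ N) (hz : ∀ k, M ≤ k → f k = 0) :
    ∑ k ∈ range M, f k = ∑ k ∈ range N, f k :=
  Finset.sum_subset (Finset.range_subset_range.2 h) (fun x _ hx => hz x (by simpa using hx))

lemma keyA (n : ℕ) (u : ℝ) :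
    ∑ k ∈ range (n+2), Sc (n+1) k * u^k
      = u * ∑ k ∈ range (n+1), Sc n k * u^k
        + ∑ k ∈ range (n+1), Sc n k * ((k:ℝ) * u^(k-1) * (1+u^2)) := by
  have hL : ∑ k ∈ range (n+2), Sc (n+1) k * u^k
      = (∑ i ∈ range (n+2), ((i:ℝ)+2) * Sc n (i+2) * u^(i+1))
        + ((∑ i ∈ range (n+2), ((i:ℝ)+1) * Sc n i * u^(i+1)) + Sc n 1) := by
    rw [sum_pad (fun k => Sc (n+1) k * u^k) (by omega : n+2 ≤ n+3)
      (fun k hk => by show Sc (n+1) k * u^k = 0; rw [Sc_vanish (n+1) k (by omega), zero_mul])]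
    rw [Finset.sum_range_succ']
    rw [Sc_succ_zero, pow_zero, mul_one]
    have : ∀ i ∈ range (n+2), Sc (n+1) (i+1) * u^(i+1)
        = ((i:ℝ)+2) * Sc n (i+2) * u^(i+1) + ((i:ℝ)+1) * Sc n i * u^(i+1) := by
      intro i _
      rw [Sc_succ_succ]; ring
    rw [Finset.sum_congr rfl this, Finset.sum_add_distrib]
    ring
  have hB1 : ∑ k ∈ range (n+1), Sc n k * ((k:ℝ) * u^(k-1))
      = (∑ i ∈ range (n+2), ((i:ℝ)+2) * Sc n (i+2) * u^(i+1)) + Sc n 1 := by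
    rw [sum_pad (fun k => Sc n k * ((k:ℝ) * u^(k-1))) (by omega : n+1 ≤ n+4)
      (fun k hk => by show Sc n k * ((k:ℝ) * u^(k-1)) = 0; rw [Sc_vanish n k (by omega), zero_mul])]
    rw [Finset.sum_range_succ']
    simp only [Nat.cast_zero, zero_mul, mul_zero, add_zero]
    rw [Finset.sum_range_succ']
    simp only [Nat.add_sub_cancel]
    push_cast
    congr 1
    · apply Finset.sum_congr rfl
      intro i _
      ring
    · simp
  calc ∑ k ∈ range (n+2), Sc (n+1) k * u^k
      = (∑ i ∈ range (n+2), ((i:ℝ)+2) * Sc n (i+2) * u^(i+1))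
        + ((∑ i ∈ range (n+2), ((i:ℝ)+1) * Sc n i * u^(i+1)) + Sc n 1) := hL
    _ = u * ∑ k ∈ range (n+1), Sc n k * u^k
        + ∑ k ∈ range (n+1), Sc n k * ((k:ℝ) * u^(k-1) * (1+u^2)) := by
        have e2 : ∑ i ∈ range (n+2), ((i:ℝ)+1) * Sc n i * u^(i+1)
            = u * ∑ k ∈ range (n+1), Sc n k * u^k
              + ∑ k ∈ range (n+1), Sc n k * ((k:ℝ) * u^(k+1)) := by
          rw [Finset.mul_sum, ← Finset.sum_add_distrib]
          rw [← sum_pad (fun i => ((i:ℝ)+1) * Sc n i * u^(i+1)) (by omega : n+1 ≤ n+2)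
            (fun k hk => by show ((k:ℝ)+1) * Sc n k * u^(k+1) = 0; rw [Sc_vanish n k (by omega)]; ring)]
          apply Finset.sum_congr rfl
          intro i _
          ring
        have e3 : ∑ k ∈ range (n+1), Sc n k * ((k:ℝ) * u^(k-1) * (1+u^2))
            = ∑ k ∈ range (n+1), Sc n k * ((k:ℝ) * u^(k-1))
              + ∑ k ∈ range (n+1), Sc n k * ((k:ℝ) * u^(k+1)) := by
          rw [← Finset.sum_add_distrib]
          apply Finset.sum_congr rfl
          intro k _
          cases k with
          | zero => simp
          | succ j =>
            simp only [Nat.add_sub_cancel]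
            rw [pow_succ, pow_succ, pow_succ]
            ring
        rw [e2, e3, hB1]
        ring

noncomputable def Rc : ℕ → ℕ → ℝ
  | 0, k => if k = 1 then 1 else 0
  | n+1, k => ((k:ℝ)+1) * Rc n (k+1) + (match k with | 0 => (0:ℝ) | j+1 => (j:ℝ) * Rc n j)

lemma Rc_zero (k : ℕ) : Rc 0 k = if k = 1 then 1 else 0 := by simp [Rc]
lemma Rc_succ_zero (n : ℕ) : Rc (n+1) 0 = Rc n 1 := by simp [Rc]
lemma Rc_succ_succ (n j : ℕ) :
    Rc (n+1) (j+1) = ((j:ℝ)+2) * Rc n (j+2) + (j:ℝ) * Rc n j := by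
  simp only [Rc]; push_cast; ring_nf

lemma Rc_vanish : ∀ (n k : ℕ), n + 1 < k → Rc n k = 0 := by
  intro n
  induction n with
  | zero => intro k hk; rw [Rc_zero]; simp; omega
  | succ n ih =>
    intro k hk
    obtain ⟨j, rfl⟩ : ∃ j, k = j+1 := ⟨k-1, by omega⟩
    rw [Rc_succ_succ, ih _ (by omega), ih _ (by omega)]; ring


lemma keyB (n : ℕ) (u : ℝ) :
    ∑ k ∈ range (n+3), Rc (n+1) k * u^k
      = ∑ k ∈ range (n+2), Rc n k * ((k:ℝ) * u^(k-1) * (1+u^2)) := by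
  have hL : ∑ k ∈ range (n+3), Rc (n+1) k * u^k
      = (∑ i ∈ range (n+3), ((i:ℝ)+2) * Rc n (i+2) * u^(i+1))
        + ((∑ i ∈ range (n+3), (i:ℝ) * Rc n i * u^(i+1)) + Rc n 1) := by
    rw [sum_pad (fun k => Rc (n+1) k * u^k) (by omega : n+3 ≤ n+4)
      (fun k hk => by show Rc (n+1) k * u^k = 0; rw [Rc_vanish (n+1) k (by omega), zero_mul])]
    rw [Finset.sum_range_succ']
    rw [Rc_succ_zero, pow_zero, mul_one]
    have : ∀ i ∈ range (n+3), Rc (n+1) (i+1) * u^(i+1)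
        = ((i:ℝ)+2) * Rc n (i+2) * u^(i+1) + (i:ℝ) * Rc n i * u^(i+1) := by
      intro i _
      rw [Rc_succ_succ]; ring
    rw [Finset.sum_congr rfl this, Finset.sum_add_distrib]
    ring
  have hB1 : ∑ k ∈ range (n+2), Rc n k * ((k:ℝ) * u^(k-1))
      = (∑ i ∈ range (n+3), ((i:ℝ)+2) * Rc n (i+2) * u^(i+1)) + Rc n 1 := by
    rw [sum_pad (fun k => Rc n k * ((k:ℝ) * u^(k-1))) (by omega : n+2 ≤ n+5)
      (fun k hk => by show Rc n k * ((k:ℝ) * u^(k-1)) = 0; rw [Rc_vanish n k (by omega), zero_mul])]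
    rw [Finset.sum_range_succ']
    simp only [Nat.cast_zero, zero_mul, mul_zero, add_zero]
    rw [Finset.sum_range_succ']
    simp only [Nat.add_sub_cancel]
    push_cast
    congr 1
    · apply Finset.sum_congr rfl
      intro i _
      ring
    · simp
  have e3 : ∑ k ∈ range (n+2), Rc n k * ((k:ℝ) * u^(k-1) * (1+u^2))
      = ∑ k ∈ range (n+2), Rc n k * ((k:ℝ) * u^(k-1))
        + ∑ k ∈ range (n+2), Rc n k * ((k:ℝ) * u^(k+1)) := by
    rw [← Finset.sum_add_distrib]
    apply Finset.sum_congr rfl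
    intro k _
    cases k with
    | zero => simp
    | succ j =>
      simp only [Nat.add_sub_cancel]
      rw [pow_succ, pow_succ, pow_succ]
      ring
  have e2 : ∑ k ∈ range (n+2), Rc n k * ((k:ℝ) * u^(k+1))
      = ∑ i ∈ range (n+3), (i:ℝ) * Rc n i * u^(i+1) := by
    rw [sum_pad (fun k => Rc n k * ((k:ℝ) * u^(k+1))) (by omega : n+2 ≤ n+3)
      (fun k hk => by show Rc n k * ((k:ℝ) * u^(k+1)) = 0; rw [Rc_vanish n k (by omega), zero_mul])]
    apply Finset.sum_congr rfl
    intro i _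
    ring
  rw [hL, e3, hB1, e2]
  ring

lemma Sc_parity : ∀ (n k : ℕ), (n + k) % 2 = 1 → Sc n k = 0 := by
  intro n
  induction n with
  | zero => intro k hk; rw [Sc_zero]; simp; omega
  | succ n ih =>
    intro k hk
    cases k with
    | zero => rw [Sc_succ_zero]; exact ih 1 (by omega)
    | succ j => rw [Sc_succ_succ, ih _ (by omega), ih _ (by omega)]; ring

lemma Rc_parity : ∀ (n k : ℕ), (n + k) % 2 = 0 → Rc n k = 0 := by
  intro n
  induction n with
  | zero => intro k hk; rw [Rc_zero]; simp; omega
  | succ n ih =>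
    intro k hk
    cases k with
    | zero => rw [Rc_succ_zero]; exact ih 1 (by omega)
    | succ j => rw [Rc_succ_succ, ih _ (by omega), ih _ (by omega)]; ring

lemma Sc_diag : ∀ n : ℕ, Sc n n = (Nat.factorial n : ℝ) := by
  intro n
  induction n with
  | zero => simp [Sc_zero]
  | succ n ih =>
    rw [Sc_succ_succ, Sc_vanish n (n+2) (by omega), ih, Nat.factorial_succ]
    push_cast; ring

lemma iterderiv (n : ℕ) : ∀ x : ℝ, Real.cos x ≠ 0 →
    iteratedDeriv n (fun x : ℝ => Real.tan x + (Real.cos x)⁻¹) x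
      = (Real.cos x)⁻¹ * (∑ k ∈ range (n+1), Sc n k * Real.tan x ^ k)
        + ∑ k ∈ range (n+2), Rc n k * Real.tan x ^ k := by
  induction n with
  | zero =>
    intro x hx
    rw [iteratedDeriv_zero]
    simp [Sc_zero, Rc_zero, Finset.sum_range_succ]
    ring
  | succ n ih =>
    intro x hx
    rw [iteratedDeriv_succ]
    have hopen : IsOpen {y : ℝ | Real.cos y ≠ 0} :=
      isOpen_compl_singleton.preimage Real.continuous_cos
    have hev : iteratedDeriv n (fun x : ℝ => Real.tan x + (Real.cos x)⁻¹)
        =ᶠ[nhds x] (fun y => (Real.cos y)⁻¹ * (∑ k ∈ range (n+1), Sc n k * Real.tan y ^ k)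
          + ∑ k ∈ range (n+2), Rc n k * Real.tan y ^ k) := by
      filter_upwards [hopen.mem_nhds hx] with y hy using ih y hy
    rw [hev.deriv_eq]
    have ht : HasDerivAt Real.tan (1 + Real.tan x ^ 2) x := by
      have h := Real.hasDerivAt_tan hx
      rwa [one_div, ← Real.inv_one_add_tan_sq hx, inv_inv] at h
    have hy : HasDerivAt (fun y : ℝ => (Real.cos y)⁻¹)
        (Real.tan x * (Real.cos x)⁻¹) x := by
      have h := (Real.hasDerivAt_cos x).inv hx
      rw [show Real.tan x * (Real.cos x)⁻¹ = - -Real.sin x / Real.cos x ^ 2 by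
        rw [neg_neg, Real.tan_eq_sin_div_cos, sq]
        field_simp]
      exact h
    have hsum1 : HasDerivAt (fun y : ℝ => ∑ k ∈ range (n+1), Sc n k * Real.tan y ^ k)
        (∑ k ∈ range (n+1), Sc n k * ((k:ℝ) * Real.tan x ^ (k-1) * (1 + Real.tan x ^ 2))) x :=
      HasDerivAt.fun_sum (fun k _ => (ht.pow k).const_mul _)
    have hsum2 : HasDerivAt (fun y : ℝ => ∑ k ∈ range (n+2), Rc n k * Real.tan y ^ k)
        (∑ k ∈ range (n+2), Rc n k * ((k:ℝ) * Real.tan x ^ (k-1) * (1 + Real.tan x ^ 2))) x :=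
      HasDerivAt.fun_sum (fun k _ => (ht.pow k).const_mul _)
    have hG := (hy.fun_mul hsum1).fun_add hsum2
    rw [hG.deriv]
    rw [keyA n (Real.tan x), keyB n (Real.tan x)]
    ring


lemma sum_pow_zero (f : ℕ → ℝ) (N : ℕ) : ∑ k ∈ range (N+1), f k * (0:ℝ)^k = f 0 := by
  rw [Finset.sum_eq_single_of_mem 0 (by simp)]
  · simp
  · intro b _ hb
    rw [zero_pow hb, mul_zero]

lemma eulerE_val (n : ℕ) : eulerE n = Sc n 0 + Rc n 0 := by
  show iteratedDeriv n (fun x : ℝ => Real.tan x + (Real.cos x)⁻¹) 0 = Sc n 0 + Rc n 0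
  rw [iterderiv n 0 (by simp)]
  rw [Real.tan_zero, Real.cos_zero, inv_one, one_mul]
  rw [sum_pow_zero (fun k => Sc n k) n, sum_pow_zero (fun k => Rc n k) (n+1)]

lemma eulerE_even (n : ℕ) (hn : n % 2 = 0) : eulerE n = Sc n 0 := by
  rw [eulerE_val, Rc_parity n 0 (by omega), add_zero]

lemma swapS (n m M : ℕ) (hn : n ≤ M) (hm : m ≤ M) :
    ∑ k ∈ range (M+2), Sc (n+1) k * Sc m k = ∑ k ∈ range (M+2), Sc n k * Sc (m+1) k := by
  rw [Finset.sum_range_succ' (fun k => Sc (n+1) k * Sc m k) (M+1)]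
  rw [Finset.sum_range_succ' (fun k => Sc n k * Sc (m+1) k) (M+1)]
  simp only [Sc_succ_zero, Sc_succ_succ]
  have hL : ∀ i ∈ range (M+1), (((i:ℝ)+2) * Sc n (i+2) + ((i:ℝ)+1) * Sc n i) * Sc m (i+1)
      = ((i:ℝ)+2) * Sc n (i+2) * Sc m (i+1) + ((i:ℝ)+1) * Sc n i * Sc m (i+1) := by
    intro i _; ring
  have hR : ∀ i ∈ range (M+1), Sc n (i+1) * (((i:ℝ)+2) * Sc m (i+2) + ((i:ℝ)+1) * Sc m i)
      = ((i:ℝ)+2) * Sc n (i+1) * Sc m (i+2) + ((i:ℝ)+1) * Sc n (i+1) * Sc m i := by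
    intro i _; ring
  rw [Finset.sum_congr rfl hL, Finset.sum_congr rfl hR,
    Finset.sum_add_distrib, Finset.sum_add_distrib]
  have e1 : ∑ i ∈ range (M+1), ((i:ℝ)+2) * Sc n (i+2) * Sc m (i+1) + Sc n 1 * Sc m 0
      = ∑ i ∈ range (M+1), ((i:ℝ)+1) * Sc n (i+1) * Sc m i := by
    rw [Finset.sum_range_succ' (fun i => ((i:ℝ)+1) * Sc n (i+1) * Sc m i) M]
    rw [Finset.sum_range_succ (fun i => ((i:ℝ)+2) * Sc n (i+2) * Sc m (i+1)) M]
    rw [Sc_vanish n (M+2) (by omega)]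
    simp only [show ∀ p:ℕ, p+1+1 = p+2 from fun p => rfl]
    push_cast
    simp only [add_assoc, one_add_one_eq_two]
    ring
  have e2 : ∑ i ∈ range (M+1), ((i:ℝ)+1) * Sc n i * Sc m (i+1)
      = ∑ i ∈ range (M+1), ((i:ℝ)+2) * Sc n (i+1) * Sc m (i+2) + Sc n 0 * Sc m 1 := by
    rw [Finset.sum_range_succ' (fun i => ((i:ℝ)+1) * Sc n i * Sc m (i+1)) M]
    rw [Finset.sum_range_succ (fun i => ((i:ℝ)+2) * Sc n (i+1) * Sc m (i+2)) M]
    rw [Sc_vanish m (M+2) (by omega)]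
    simp only [show ∀ p:ℕ, p+1+1 = p+2 from fun p => rfl]
    push_cast
    simp only [add_assoc, one_add_one_eq_two]
    ring
  calc ∑ i ∈ range (M+1), ((i:ℝ)+2) * Sc n (i+2) * Sc m (i+1)
        + ∑ i ∈ range (M+1), ((i:ℝ)+1) * Sc n i * Sc m (i+1) + Sc n 1 * Sc m 0
      = (∑ i ∈ range (M+1), ((i:ℝ)+2) * Sc n (i+2) * Sc m (i+1) + Sc n 1 * Sc m 0)
        + ∑ i ∈ range (M+1), ((i:ℝ)+1) * Sc n i * Sc m (i+1) := by ring
    _ = ∑ i ∈ range (M+1), ((i:ℝ)+1) * Sc n (i+1) * Sc m i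
        + (∑ i ∈ range (M+1), ((i:ℝ)+2) * Sc n (i+1) * Sc m (i+2) + Sc n 0 * Sc m 1) := by
        rw [e1, e2]
    _ = _ := by ring

lemma keySS : ∀ (n m N : ℕ), n + m ≤ N → ∑ k ∈ range (N+1), Sc n k * Sc m k = Sc (n+m) 0 := by
  intro n
  induction n with
  | zero =>
    intro m N h
    rw [Finset.sum_eq_single_of_mem 0 (by simp)]
    · rw [Sc_zero]; simp
    · intro b _ hb
      rw [Sc_zero]; simp [hb]
  | succ n ih =>
    intro m N h
    obtain ⟨M, rfl⟩ : ∃ M, N = M+1 := ⟨N-1, by omega⟩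
    rw [swapS n m M (by omega) (by omega), ih (m+1) (M+1) (by omega)]
    congr 1
    omega

lemma sumSS (a b N : ℕ) (ha : a < N) :
    ∑ k ∈ range N, Sc a k * Sc b k = Sc (a+b) 0 := by
  have hz : ∀ k, a+1 ≤ k → Sc a k * Sc b k = 0 := by
    intro k hk
    rw [Sc_vanish a k (by omega), zero_mul]
  calc ∑ k ∈ range N, Sc a k * Sc b k
      = ∑ k ∈ range (a+1), Sc a k * Sc b k :=
        (sum_pad (fun k => Sc a k * Sc b k) (by omega) hz).symm
    _ = ∑ k ∈ range (a+b+1), Sc a k * Sc b k :=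
        sum_pad (fun k => Sc a k * Sc b k) (by omega) hz
    _ = Sc (a+b) 0 := keySS a b (a+b) le_rfl

theorem hankel_interleaved_secant (n : ℕ) :
    Matrix.det (fun i j : Fin n =>
        if Even ((i : ℕ) + (j : ℕ)) then eulerE ((i : ℕ) + (j : ℕ)) else 0)
      = ∏ k ∈ Finset.Icc 1 (n-1), (Nat.factorial (k) : ℝ)^2 := by
  rcases Nat.eq_zero_or_pos n with hn | hn
  · subst hn
    exact (Matrix.det_isEmpty).trans (by rw [Finset.Icc_eq_empty (by omega), Finset.prod_empty])
  · set L : Matrix (Fin n) (Fin n) ℝ := Matrix.of (fun i k : Fin n => Sc i k) with hLdef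
    have hM : (fun i j : Fin n =>
        if Even ((i : ℕ) + (j : ℕ)) then eulerE ((i : ℕ) + (j : ℕ)) else 0) = L * L.transpose := by
      funext i j
      rw [Matrix.mul_apply]
      simp only [Matrix.transpose_apply, hLdef, Matrix.of_apply]
      rw [Fin.sum_univ_eq_sum_range (fun k => Sc i k * Sc j k) n]
      rw [sumSS i j n i.isLt]
      by_cases h : Even ((i:ℕ)+(j:ℕ))
      · rw [if_pos h, eulerE_even _ (Nat.even_iff.mp h)]
      · rw [if_neg h, Sc_parity _ 0 (by have := Nat.not_even_iff.mp h; omega)]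
    rw [hM, Matrix.det_mul, Matrix.det_transpose]
    have hdet : L.det = ∏ i : Fin n, (Nat.factorial i : ℝ) := by
      rw [Matrix.det_of_lowerTriangular L (fun i j hij => by
        simp only [hLdef, Matrix.of_apply]
        exact Sc_vanish i j hij)]
      apply Finset.prod_congr rfl
      intro i _
      simp only [hLdef, Matrix.of_apply]
      exact Sc_diag i
    rw [hdet, ← Finset.prod_mul_distrib]
    have : ∀ i : Fin n, (Nat.factorial i : ℝ) * (Nat.factorial i : ℝ)
        = ((Nat.factorial i : ℝ))^2 := fun i => (sq _).symm
    rw [Finset.prod_congr rfl (fun i _ => this i)]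
    rw [Fin.prod_univ_eq_prod_range (fun k => ((Nat.factorial k : ℝ))^2) n]
    have hins : range n = insert 0 (Finset.Icc 1 (n-1)) := by
      ext k
      simp only [Finset.mem_range, Finset.mem_insert, Finset.mem_Icc]
      omega
    rw [hins, Finset.prod_insert (by simp)]
    simp
end

section
/- The Hankel determinants of the sequence (E_2, E_4, E_6, ...) are H_n = Π_{k=1}^{n−1} ((2k+1)!)². -/
open Finset

/-- moments table: `S n m = iteratedDeriv m (n! tan^n sec) 0`. -/
def seqS : ℕ → ℕ → ℝ
  | n, 0 => if n = 0 then 1 else 0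
  | n, m+1 => seqS (n+1) m + (n:ℝ)^2 * seqS (n-1) m
  termination_by n m => m

/-- coefficients of the monic OPs `q_n`, `q_{n+1} = x q_n - n² q_{n-1}`. -/
def qc : ℕ → ℕ → ℝ
  | 0, k => if k = 0 then 1 else 0
  | 1, k => if k = 1 then 1 else 0
  | n+2, k => (if k = 0 then 0 else qc (n+1) (k-1)) - ((n:ℝ)+1)^2 * qc n k
  termination_by n k => n

lemma qc_zero {n k : ℕ} (h : n < k) : qc n k = 0 := by
  induction n using Nat.strong_induction_on generalizing k with
  | _ n ih =>
    match n with
    | 0 => rw [qc, if_neg (by omega)]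
    | 1 => rw [qc, if_neg (by omega)]
    | (n+2) =>
      rw [qc, ih (n+1) (by omega) (by omega), ih n (by omega) (by omega)]
      simp

lemma qc_diag (n : ℕ) : qc n n = 1 := by
  induction n using Nat.strong_induction_on with
  | _ n ih =>
    match n with
    | 0 => simp [qc]
    | 1 => simp [qc]
    | (n+2) =>
      rw [qc, if_neg (show ¬(n+2 = 0) by omega), qc_zero (show n < n + 2 by omega)]
      have h1 : n + 2 - 1 = n + 1 := by omega
      rw [h1, ih (n+1) (by omega)]
      simp

lemma qc_parity {n k : ℕ} (h : n % 2 ≠ k % 2) : qc n k = 0 := by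
  induction n using Nat.strong_induction_on generalizing k with
  | _ n ih =>
    match n with
    | 0 => rw [qc, if_neg (by omega)]
    | 1 => rw [qc, if_neg (by omega)]
    | (n+2) =>
      rw [qc, ih n (by omega) (by omega : n % 2 ≠ k % 2)]
      rcases Nat.eq_zero_or_pos k with rfl | hk
      · simp
      · rw [if_neg (by omega), ih (n+1) (by omega) (by omega : (n+1) % 2 ≠ (k-1) % 2)]
        simp

lemma seqS_zero : ∀ m n, m < n → seqS n m = 0 := by
  intro m
  induction m with
  | zero => intro n h; rw [seqS, if_neg (by omega)]
  | succ m ih =>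
    intro n h
    rw [seqS, ih (n+1) (by omega), ih (n-1) (by omega)]
    simp

lemma seqS_diag (n : ℕ) : seqS n n = (n.factorial : ℝ)^2 := by
  induction n with
  | zero => simp [seqS]
  | succ n ih =>
    rw [seqS, seqS_zero n (n+2) (by omega)]
    simp only [Nat.add_sub_cancel]
    rw [ih, Nat.factorial_succ]
    push_cast
    ring

/-- the key expansion: `S n m = Σ_k qc n k · S 0 (k+m)`. -/
lemma seqS_expand : ∀ n m, seqS n m = ∑ k ∈ range (n+1), qc n k * seqS 0 (k+m) := by
  intro n
  induction n using Nat.strong_induction_on with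
  | _ n ih =>
    match n with
    | 0 => intro m; simp [qc]
    | 1 =>
      intro m
      have h0 : seqS 1 m = seqS 0 (m+1) := by
        rw [seqS]; simp
      rw [h0]
      simp [qc, Finset.sum_range_succ, Nat.add_comm]
    | (n+2) =>
      intro m
      have hrec : seqS (n+2) m = seqS (n+1) (m+1) - ((n:ℝ)+1)^2 * seqS n m := by
        have : seqS (n+1) (m+1) = seqS (n+2) m + ((n+1:ℕ):ℝ)^2 * seqS n m := by
          rw [seqS]; norm_num
        push_cast at this
        linarith [this]
      rw [hrec, ih (n+1) (by omega) (m+1), ih n (by omega) m]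
      have hL : ∑ k ∈ range (n+3), (if k = 0 then (0:ℝ) else qc (n+1) (k-1)) * seqS 0 (k+m)
          = ∑ k ∈ range (n+2), qc (n+1) k * seqS 0 (k+(m+1)) := by
        rw [Finset.sum_range_succ']
        have hc : ∀ k ∈ range (n+2),
            (if k+1 = 0 then (0:ℝ) else qc (n+1) (k+1-1)) * seqS 0 (k+1+m)
              = qc (n+1) k * seqS 0 (k+(m+1)) := by
          intro k _
          rw [if_neg (Nat.succ_ne_zero k), Nat.add_sub_cancel,
            show k+1+m = k+(m+1) by omega]
        rw [Finset.sum_congr rfl hc]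
        simp
      have hR : ∑ k ∈ range (n+3), ((n:ℝ)+1)^2 * qc n k * seqS 0 (k+m)
          = ((n:ℝ)+1)^2 * ∑ k ∈ range (n+1), qc n k * seqS 0 (k+m) := by
        rw [Finset.sum_range_succ, Finset.sum_range_succ,
          qc_zero (show n < n+2 by omega), qc_zero (show n < n+1 by omega), Finset.mul_sum]
        simp [mul_assoc]
      calc ∑ k ∈ range (n+2), qc (n+1) k * seqS 0 (k+(m+1))
            - ((n:ℝ)+1)^2 * ∑ k ∈ range (n+1), qc n k * seqS 0 (k+m)
          = ∑ k ∈ range (n+3), ((if k = 0 then (0:ℝ) else qc (n+1) (k-1))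
              - ((n:ℝ)+1)^2 * qc n k) * seqS 0 (k+m) := by
            simp only [sub_mul, Finset.sum_sub_distrib, mul_assoc]
            rw [← hL, ← hR]
            simp [mul_assoc]
        _ = ∑ k ∈ range (n+3), qc (n+2) k * seqS 0 (k+m) := by
            apply Finset.sum_congr rfl
            intro k _
            rw [qc]

open Real Topology

noncomputable def gg (n : ℕ) : ℝ → ℝ := fun x => (n.factorial : ℝ) * (Real.tan x ^ n * (Real.cos x)⁻¹)

lemma cos_ne_zero_Ioo {x : ℝ} (hx : x ∈ Set.Ioo (-1:ℝ) 1) : Real.cos x ≠ 0 := by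
  have := Real.cos_pos_of_mem_Ioo (show x ∈ Set.Ioo (-(π/2)) (π/2) by
    constructor <;> [nlinarith [Real.pi_gt_three, hx.1]; nlinarith [Real.pi_gt_three, hx.2]])
  positivity

lemma iteratedDeriv_eq_within {m : ℕ} {f : ℝ → ℝ} {s : Set ℝ} (hs : IsOpen s) {x : ℝ}
    (hx : x ∈ s) : iteratedDeriv m f x = iteratedDerivWithin m f s x := by
  rw [iteratedDeriv_eq_iteratedFDeriv, iteratedDerivWithin_eq_iteratedFDerivWithin,
    iteratedFDerivWithin_of_isOpen m hs hx]

lemma gg_contDiffOn (n m : ℕ) : ContDiffOn ℝ m (gg n) (Set.Ioo (-1:ℝ) 1) := by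
  intro x hx
  apply ContDiffAt.contDiffWithinAt
  have hc := cos_ne_zero_Ioo hx
  exact (contDiffAt_const.mul
    (((Real.contDiffAt_tan.2 hc).pow n).mul ((Real.contDiff_cos.contDiffAt).inv hc)))

lemma gg_hasDerivAt (n : ℕ) {x : ℝ} (hc : Real.cos x ≠ 0) :
    HasDerivAt (gg n) (gg (n+1) x + (n:ℝ)^2 * gg (n-1) x) x := by
  have htan : HasDerivAt Real.tan (1 / Real.cos x ^ 2) x := Real.hasDerivAt_tan hc
  have hpow : HasDerivAt (fun y => Real.tan y ^ n)
      ((n:ℝ) * Real.tan x ^ (n-1) * (1 / Real.cos x ^ 2)) x := htan.pow n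
  have hinv : HasDerivAt (fun y => (Real.cos y)⁻¹)
      (-(-Real.sin x) / Real.cos x ^ 2) x := (Real.hasDerivAt_cos x).inv hc
  have h := ((hpow.mul hinv).const_mul ((n.factorial : ℝ)))
  refine h.congr_deriv ?_; symm
  rcases n with _ | k
  · simp [gg, Real.tan_eq_sin_div_cos]
    field_simp
  · have hfac1 : ((k+1+1).factorial : ℝ) = ((k+2):ℝ) * ((k+1):ℝ) * (k.factorial : ℝ) := by
      rw [Nat.factorial_succ, Nat.factorial_succ]; push_cast; ring
    have hfac2 : ((k+1).factorial : ℝ) = ((k+1):ℝ) * (k.factorial : ℝ) := by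
      rw [Nat.factorial_succ]; push_cast; ring
    have hs2 : Real.sin x ^ 2 = 1 - Real.cos x ^ 2 := by
      nlinarith [Real.sin_sq_add_cos_sq x]
    simp only [gg, Nat.add_sub_cancel, Real.tan_eq_sin_div_cos, hfac1, hfac2]
    have hpowrw : ∀ r : ℕ, (Real.sin x / Real.cos x) ^ (r+1)
        = (Real.sin x / Real.cos x) ^ r * (Real.sin x / Real.cos x) := fun r => pow_succ _ r
    rw [hpowrw (k+1), hpowrw k]
    push_cast
    set t := (Real.sin x / Real.cos x) ^ k with ht
    field_simp
    ring_nf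
    rw [hs2]
    ring

lemma zero_mem_Ioo : (0:ℝ) ∈ Set.Ioo (-1:ℝ) 1 := by norm_num

lemma gg_iter (m : ℕ) : ∀ n, iteratedDeriv m (gg n) 0 = seqS n m := by
  induction m with
  | zero =>
    intro n
    rw [iteratedDeriv_zero, seqS]
    rcases n with _ | n
    · simp [gg]
    · simp [gg, Real.tan_zero]
  | succ m ih =>
    intro n
    rw [iteratedDeriv_succ']
    have hev : deriv (gg n) =ᶠ[𝓝 (0:ℝ)]
        (fun x => gg (n+1) x + (n:ℝ)^2 * gg (n-1) x) := by
      filter_upwards [Ioo_mem_nhds (by norm_num : (-1:ℝ) < 0) (by norm_num : (0:ℝ) < 1)]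
        with x hx
      exact (gg_hasDerivAt n (cos_ne_zero_Ioo hx)).deriv
    rw [Filter.EventuallyEq.iteratedDeriv_eq m hev,
      iteratedDeriv_eq_within isOpen_Ioo zero_mem_Ioo,
      show (fun x => gg (n+1) x + (n:ℝ)^2 * gg (n-1) x)
        = (gg (n+1) + fun x => (n:ℝ)^2 * gg (n-1) x) from rfl,
      iteratedDerivWithin_add zero_mem_Ioo isOpen_Ioo.uniqueDiffOn
        (gg_contDiffOn (n+1) m 0 zero_mem_Ioo) (contDiffOn_const.mul (gg_contDiffOn (n-1) m) 0 zero_mem_Ioo),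
      iteratedDerivWithin_const_mul zero_mem_Ioo isOpen_Ioo.uniqueDiffOn _
        (gg_contDiffOn (n-1) m 0 zero_mem_Ioo),
      ← iteratedDeriv_eq_within isOpen_Ioo zero_mem_Ioo,
      ← iteratedDeriv_eq_within isOpen_Ioo zero_mem_Ioo,
      ih (n+1), ih (n-1), seqS]

lemma tan_even_deriv {m : ℕ} (hm : Even m) : iteratedDeriv m Real.tan 0 = 0 := by
  have h1 : (fun x : ℝ => Real.tan (-x)) = -Real.tan :=
    funext fun x => Real.tan_neg x
  have h2 := iteratedDeriv_comp_neg m Real.tan 0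
  rw [h1, neg_zero, iteratedDeriv_neg, hm.neg_one_pow, one_smul] at h2
  linarith

lemma eulerE_eq_s12 (m : ℕ) : eulerE (2*m+2) = seqS 0 (2*m+2) := by
  have hsec : ContDiffOn ℝ (2*m+2 : ℕ) (fun x : ℝ => (Real.cos x)⁻¹) (Set.Ioo (-1:ℝ) 1) :=
    fun x hx => ((Real.contDiff_cos.contDiffAt).inv (cos_ne_zero_Ioo hx)).contDiffWithinAt
  have htan : ContDiffOn ℝ (2*m+2 : ℕ) Real.tan (Set.Ioo (-1:ℝ) 1) :=
    fun x hx => (Real.contDiffAt_tan.2 (cos_ne_zero_Ioo hx)).contDiffWithinAt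
  have hgg0 : gg 0 = fun x : ℝ => (Real.cos x)⁻¹ := by
    funext x; simp [gg]
  rw [eulerE,
    iteratedDeriv_eq_within isOpen_Ioo zero_mem_Ioo,
    show (fun x : ℝ => Real.tan x + (Real.cos x)⁻¹)
      = (Real.tan + fun x : ℝ => (Real.cos x)⁻¹) from rfl,
    iteratedDerivWithin_add zero_mem_Ioo isOpen_Ioo.uniqueDiffOn (htan 0 zero_mem_Ioo) (hsec 0 zero_mem_Ioo),
    ← iteratedDeriv_eq_within isOpen_Ioo zero_mem_Ioo,
    ← iteratedDeriv_eq_within isOpen_Ioo zero_mem_Ioo,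
    tan_even_deriv (by exact ⟨m+1, by ring⟩), ← hgg0, gg_iter]
  ring

lemma sum_odd_part {f : ℕ → ℝ} (hf : ∀ k, k % 2 = 0 → f k = 0) (j : ℕ) :
    ∑ k ∈ range (2*j+2), f k = ∑ l ∈ range (j+1), f (2*l+1) := by
  induction j with
  | zero =>
    rw [show 2*0+2 = 2 by norm_num]
    rw [Finset.sum_range_succ, Finset.sum_range_succ, Finset.sum_range_succ]
    simp [hf 0 rfl]
  | succ j ih =>
    rw [show 2*(j+1)+2 = (2*j+2)+1+1 by ring, Finset.sum_range_succ, Finset.sum_range_succ,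
      ih, hf (2*j+2) (by omega)]
    simp only [Finset.sum_range_succ]
    rw [show 2*(j+1)+1 = 2*j+3 from by ring]
    ring

lemma innerSumQS (n : ℕ) (j : Fin n) (m : ℕ) :
    ∑ l : Fin n, qc (2*(j:ℕ)+1) (2*(l:ℕ)+1) * seqS 0 ((2*(l:ℕ)+1)+m)
      = seqS (2*(j:ℕ)+1) m := by
  rw [seqS_expand (2*(j:ℕ)+1) m,
    show 2*(j:ℕ)+1+1 = 2*(j:ℕ)+2 by ring,
    sum_odd_part (f := fun k => qc (2*(j:ℕ)+1) k * seqS 0 (k+m))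
      (fun k hk => by
        show qc (2*(j:ℕ)+1) k * seqS 0 (k+m) = 0
        rw [qc_parity (by omega)]; simp) (j:ℕ),
    Fin.sum_univ_eq_sum_range (fun l => qc (2*(j:ℕ)+1) (2*l+1) * seqS 0 ((2*l+1)+m)) n]
  exact (Finset.sum_subset (Finset.range_subset_range.2 (by omega : (j:ℕ)+1 ≤ n))
    (fun x _ hx => by
      rw [qc_zero (show 2*(j:ℕ)+1 < 2*x+1 by simp [Finset.mem_range] at hx; omega)]
      simp)).symm

open Matrix in
lemma hankel_S (n : ℕ) :
    Matrix.det (Matrix.of fun k l : Fin n => seqS 0 (2*((k:ℕ)+(l:ℕ))+2))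
      = ∏ i : Fin n, (((2*(i:ℕ)+1).factorial : ℝ))^2 := by
  set B : Matrix (Fin n) (Fin n) ℝ :=
    Matrix.of (fun i k : Fin n => qc (2*(i:ℕ)+1) (2*(k:ℕ)+1)) with hBdef
  set H : Matrix (Fin n) (Fin n) ℝ :=
    Matrix.of (fun k l : Fin n => seqS 0 (2*((k:ℕ)+(l:ℕ))+2)) with hHdef
  have hBtri : B.BlockTriangular OrderDual.toDual := by
    intro i j hij
    have hij' : (i:ℕ) < (j:ℕ) := Fin.lt_def.mp (OrderDual.toDual_lt_toDual.mp hij)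
    exact qc_zero (show 2*(i:ℕ)+1 < 2*(j:ℕ)+1 by omega)
  have hdetB : B.det = 1 := by
    rw [Matrix.det_of_lowerTriangular B hBtri]
    exact Finset.prod_eq_one (fun i _ => qc_diag _)
  have inner : ∀ (i k : Fin n),
      ∑ l : Fin n, qc (2*(i:ℕ)+1) (2*(l:ℕ)+1) * seqS 0 (2*((l:ℕ)+(k:ℕ))+2)
        = seqS (2*(i:ℕ)+1) (2*(k:ℕ)+1) := by
    intro i k
    rw [← innerSumQS n i (2*(k:ℕ)+1)]
    apply Finset.sum_congr rfl
    intro l _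
    rw [show 2*((l:ℕ)+(k:ℕ))+2 = (2*(l:ℕ)+1)+(2*(k:ℕ)+1) by omega]
  have hentry : ∀ i j : Fin n, (B * H * Bᵀ) i j
      = ∑ k : Fin n, qc (2*(j:ℕ)+1) (2*(k:ℕ)+1) * seqS (2*(i:ℕ)+1) (2*(k:ℕ)+1) := by
    intro i j
    calc (B * H * Bᵀ) i j
        = ∑ k : Fin n, (∑ l : Fin n,
            qc (2*(i:ℕ)+1) (2*(l:ℕ)+1) * seqS 0 (2*((l:ℕ)+(k:ℕ))+2))
              * qc (2*(j:ℕ)+1) (2*(k:ℕ)+1) := by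
          simp only [Matrix.mul_apply, Matrix.transpose_apply, hBdef, hHdef, Matrix.of_apply]
      _ = ∑ k : Fin n, seqS (2*(i:ℕ)+1) (2*(k:ℕ)+1) * qc (2*(j:ℕ)+1) (2*(k:ℕ)+1) := by
          exact Finset.sum_congr rfl (fun k _ => by rw [inner i k])
      _ = ∑ k : Fin n, qc (2*(j:ℕ)+1) (2*(k:ℕ)+1) * seqS (2*(i:ℕ)+1) (2*(k:ℕ)+1) := by
          exact Finset.sum_congr rfl (fun k _ => mul_comm _ _)
  have hsymM : (B * H * Bᵀ)ᵀ = B * H * Bᵀ := by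
    have hH : Hᵀ = H := by
      ext k l
      simp only [Matrix.transpose_apply, hHdef, Matrix.of_apply]
      congr 1
      omega
    rw [Matrix.transpose_mul, Matrix.transpose_mul, Matrix.transpose_transpose, hH,
      Matrix.mul_assoc]
  have offdiag : ∀ i j : Fin n, j < i → (B * H * Bᵀ) i j = 0 := by
    intro i j hlt
    rw [hentry i j]
    apply Finset.sum_eq_zero
    intro k _
    rcases le_or_gt (k:ℕ) (j:ℕ) with hk | hk
    · rw [seqS_zero _ _ (show 2*(k:ℕ)+1 < 2*(i:ℕ)+1 by
        have := Fin.lt_def.mp hlt; omega)]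
      ring
    · rw [qc_zero (show 2*(j:ℕ)+1 < 2*(k:ℕ)+1 by omega)]
      ring
  have hdiagval : ∀ i : Fin n, (B * H * Bᵀ) i i = (((2*(i:ℕ)+1).factorial : ℝ))^2 := by
    intro i
    rw [hentry i i]
    rw [Finset.sum_eq_single i]
    · rw [qc_diag, seqS_diag, one_mul]
    · intro k _ hk
      rcases lt_or_gt_of_ne (fun h : (k:ℕ) = (i:ℕ) => hk (Fin.ext h)) with hlt | hgt
      · rw [seqS_zero _ _ (show 2*(k:ℕ)+1 < 2*(i:ℕ)+1 by omega)]
        ring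
      · rw [qc_zero (show 2*(i:ℕ)+1 < 2*(k:ℕ)+1 by omega)]
        ring
    · intro h
      exact absurd (Finset.mem_univ i) h
  have hdiag : B * H * Bᵀ
      = Matrix.diagonal (fun i : Fin n => (((2*(i:ℕ)+1).factorial : ℝ))^2) := by
    ext i j
    rcases lt_trichotomy i j with hij | rfl | hij
    · rw [Matrix.diagonal_apply_ne _ (ne_of_lt hij)]
      have : (B * H * Bᵀ) i j = (B * H * Bᵀ) j i := by
        conv_lhs => rw [← hsymM, Matrix.transpose_apply]
      rw [this]
      exact offdiag j i hij
    · rw [Matrix.diagonal_apply_eq]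
      exact hdiagval i
    · rw [Matrix.diagonal_apply_ne _ (ne_of_gt hij)]
      exact offdiag i j hij
  have hdet := congrArg Matrix.det hdiag
  rw [Matrix.det_mul, Matrix.det_mul, Matrix.det_transpose, hdetB, Matrix.det_diagonal] at hdet
  simpa using hdet


theorem hankel_secant_shifted (n : ℕ) :
    Matrix.det (fun i j : Fin n => eulerE (2 * ((i : ℕ) + (j : ℕ)) + 2))
      = ∏ k ∈ Finset.Icc 1 (n-1), (Nat.factorial (2*k+1) : ℝ)^2 := by
  have hfun : (fun i j : Fin n => eulerE (2 * ((i : ℕ) + (j : ℕ)) + 2))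
      = Matrix.of fun k l : Fin n => seqS 0 (2*((k:ℕ)+(l:ℕ))+2) := by
    funext i j
    exact eulerE_eq_s12 _
  rw [hfun, hankel_S,
    Fin.prod_univ_eq_prod_range (fun i => (((2*i+1).factorial : ℝ))^2) n]
  symm
  apply Finset.prod_subset
  · intro x hx
    simp only [Finset.mem_Icc, Finset.mem_range] at *
    omega
  · intro x hx hnx
    simp only [Finset.mem_Icc, Finset.mem_range] at hx hnx
    have hx0 : x = 0 := by omega
    subst hx0
    norm_num [Nat.factorial]
end

section
/- The Hankel determinants of the sequence (E_1, 0, E_3, 0, E_5, ...) of interleaved tangent numbers are H_n = n! · Π_{k=1}^{n−1} (k!)². -/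
open Finset

open Matrix Polynomial


noncomputable def mo : ℕ → ℕ → ℝ
  | 0, 0 => 1
  | 0, _+1 => 0
  | n+1, 0 => 2 * mo n 1
  | n+1, k+1 => mo n k + ((k:ℝ)+2)*((k:ℝ)+3) * mo n (k+2)

noncomputable def hw (k : ℕ) : ℝ := (Nat.factorial k : ℝ) * (Nat.factorial (k+1) : ℝ)

lemma hw_succ (k : ℕ) : hw (k+1) = ((k:ℝ)+1)*((k:ℝ)+2) * hw k := by
  simp [hw, Nat.factorial_succ]; push_cast; ring

lemma hw_zero : hw 0 = 1 := by simp [hw]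

lemma hw_one : hw 1 = 2 := by simp [hw]

lemma mo_eq_zero_of_lt {n k : ℕ} (h : n < k) : mo n k = 0 := by
  induction n generalizing k with
  | zero =>
    obtain ⟨j, rfl⟩ : ∃ j, k = j + 1 := ⟨k-1, by omega⟩
    simp [mo]
  | succ n ih =>
    obtain ⟨j, rfl⟩ : ∃ j, k = j + 1 := ⟨k-1, by omega⟩
    rw [mo, ih (by omega), ih (by omega)]
    ring

lemma mo_diag (n : ℕ) : mo n n = 1 := by
  induction n with
  | zero => rfl
  | succ n ih =>
    rw [mo, ih, mo_eq_zero_of_lt (by omega)]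
    ring

lemma mo_parity {n k : ℕ} (h : Odd (n + k)) : mo n k = 0 := by
  induction n generalizing k with
  | zero =>
    obtain ⟨j, rfl⟩ : ∃ j, k = j + 1 := ⟨k-1, by rcases h with ⟨m, hm⟩; omega⟩
    simp [mo]
  | succ n ih =>
    cases k with
    | zero =>
      rw [mo, ih (by rcases h with ⟨m,hm⟩; exact ⟨m, by omega⟩)]
      ring
    | succ k =>
      rw [mo, ih (by rcases h with ⟨m,hm⟩; exact ⟨m-1, by omega⟩),
        ih (by rcases h with ⟨m,hm⟩; exact ⟨m, by omega⟩)]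
      ring

lemma half (M a b : ℕ) (ha : a ≤ M) :
    ∑ k ∈ range (M+1), mo (a+1) k * mo b k * hw k
      = ∑ k ∈ range M, mo a k * mo b (k+1) * hw (k+1)
        + ∑ k ∈ range M, mo a (k+1) * mo b k * hw (k+1) := by
  rw [Finset.sum_range_succ']
  have e1 : ∀ k, mo (a+1) (k+1) * mo b (k+1) * hw (k+1)
      = mo a k * mo b (k+1) * hw (k+1) + mo a (k+2) * mo b (k+1) * hw (k+2) := by
    intro k
    rw [mo, hw_succ (k+1)]
    push_cast
    ring
  rw [Finset.sum_congr rfl (fun k _ => e1 k), Finset.sum_add_distrib]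
  have e2 : ∑ k ∈ range M, mo a (k+2) * mo b (k+1) * hw (k+2)
        + mo (a+1) 0 * mo b 0 * hw 0
      = ∑ k ∈ range M, mo a (k+1) * mo b k * hw (k+1) := by
    have e3 : mo (a+1) 0 * mo b 0 * hw 0 = mo a (0+1) * mo b 0 * hw (0+1) := by
      rw [mo, hw_zero, hw_one]
      ring
    rw [e3, ← Finset.sum_range_succ' (fun k => mo a (k+1) * mo b k * hw (k+1)) M,
      Finset.sum_range_succ, mo_eq_zero_of_lt (by omega : a < M + 1)]
    ring
  rw [add_assoc, e2]

lemma key (i : ℕ) : ∀ j M : ℕ, i + j ≤ M →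
    ∑ k ∈ range (M+1), mo i k * mo j k * hw k = mo (i+j) 0 := by
  induction i with
  | zero =>
    intro j M h
    rw [Finset.sum_eq_single_of_mem 0 (by simp)]
    · simp [mo, hw_zero]
    · intro k _ hk
      obtain ⟨l, rfl⟩ : ∃ l, k = l + 1 := ⟨k-1, by omega⟩
      simp [mo]
  | succ i ih =>
    intro j M h
    have h1 : ∑ k ∈ range (M+1), mo (i+1) k * mo j k * hw k
        = ∑ k ∈ range (M+1), mo i k * mo (j+1) k * hw k := by
      rw [half M i j (by omega)]
      have h2 : ∑ k ∈ range (M+1), mo i k * mo (j+1) k * hw k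
          = ∑ k ∈ range (M+1), mo (j+1) k * mo i k * hw k :=
        Finset.sum_congr rfl (fun k _ => by ring)
      rw [h2, half M j i (by omega), add_comm]
      congr 1 <;> exact Finset.sum_congr rfl (fun k _ => by ring)
    rw [h1, ih (j+1) M (by omega), show i + (j+1) = i+1+j by omega]

lemma key' (i j N : ℕ) (hi : i < N) :
    ∑ k ∈ range N, mo i k * mo j k * hw k = mo (i+j) 0 := by
  have hext : ∀ N₁ N₂ : ℕ, i < N₁ → N₁ ≤ N₂ →
      ∑ k ∈ range N₁, mo i k * mo j k * hw k
        = ∑ k ∈ range N₂, mo i k * mo j k * hw k := by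
    intro N₁ N₂ h1 h2
    refine Finset.sum_subset (Finset.range_subset_range.2 h2) ?_
    intro k hk hk'
    rw [mo_eq_zero_of_lt (show i < k by simp at hk'; omega)]
    ring
  rw [hext N (N + (i+j+1)) hi (by omega), ← hext (i+j+1) (N + (i+j+1)) (by omega) (by omega),
    key i j (i+j) (le_refl _)]

lemma det_mo (n : ℕ) :
    Matrix.det (fun i j : Fin n => mo ((i:ℕ)+(j:ℕ)) 0) = ∏ k ∈ range n, hw k := by
  have hL : Matrix.det (Matrix.of fun i k : Fin n => mo i k) = 1 := by
    rw [Matrix.det_of_lowerTriangular (Matrix.of fun i k : Fin n => mo i k)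
      (fun i j hij => mo_eq_zero_of_lt (show (i:ℕ) < (j:ℕ) from hij))]
    simp [mo_diag]
  have hfact : (fun i j : Fin n => mo ((i:ℕ)+(j:ℕ)) 0)
      = (Matrix.of fun i k : Fin n => mo i k) * Matrix.diagonal (fun k : Fin n => hw k)
        * (Matrix.of fun i k : Fin n => mo i k)ᵀ := by
    funext i j
    rw [Matrix.mul_assoc]
    rw [Matrix.mul_apply]
    have : ∀ k : Fin n, ((Matrix.diagonal (fun k : Fin n => hw k)) *
        (Matrix.of fun i k : Fin n => mo i k)ᵀ) k j = hw k * mo j k := by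
      intro k; rw [Matrix.diagonal_mul]; rfl
    simp only [this, Matrix.of_apply]
    rw [← key' (i:ℕ) (j:ℕ) n i.isLt, ← Fin.sum_univ_eq_sum_range
      (fun k => mo i k * mo j k * hw k) n]
    apply Finset.sum_congr rfl
    intro k _; ring
  rw [hfact, Matrix.det_mul, Matrix.det_mul, hL, Matrix.det_transpose, hL,
    Matrix.det_diagonal, one_mul, mul_one]
  exact Fin.prod_univ_eq_prod_range hw n

lemma prod_hw (n : ℕ) : ∏ k ∈ range n, hw k
    = (Nat.factorial n : ℝ) * ∏ k ∈ Finset.Icc 1 (n-1), (Nat.factorial k : ℝ)^2 := by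
  induction n with
  | zero => simp
  | succ n ih =>
    rw [Finset.prod_range_succ, ih]
    cases n with
    | zero => simp [hw]
    | succ m =>
      rw [show m + 1 + 1 - 1 = m + 1 from rfl,
        Finset.prod_Icc_succ_top (by omega : 1 ≤ m + 1)]
      simp only [hw, Nat.factorial_succ]
      push_cast
      ring

noncomputable def Pt : ℕ → Polynomial ℝ
  | 0 => Polynomial.X
  | n+1 => (1 + Polynomial.X^2) * (Pt n).derivative

noncomputable def Qt : ℕ → Polynomial ℝ
  | 0 => 1
  | n+1 => Polynomial.X * Qt n + (1 + Polynomial.X^2) * (Qt n).derivative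

lemma iter_deriv_tan_sec (n : ℕ) :
    ∀ x ∈ Set.Ioo (-(Real.pi/2)) (Real.pi/2),
      iteratedDeriv n (fun x : ℝ => Real.tan x + (Real.cos x)⁻¹) x
        = (Pt n).eval (Real.tan x) + (Real.cos x)⁻¹ * (Qt n).eval (Real.tan x) := by
  induction n with
  | zero =>
    intro x _
    simp [Pt, Qt]
  | succ n ih =>
    intro x hx
    have hc : Real.cos x ≠ 0 := (Real.cos_pos_of_mem_Ioo hx).ne'
    rw [iteratedDeriv_succ]
    have hev : iteratedDeriv n (fun x : ℝ => Real.tan x + (Real.cos x)⁻¹)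
        =ᶠ[nhds x] fun y => (Pt n).eval (Real.tan y) + (Real.cos y)⁻¹ * (Qt n).eval (Real.tan y) :=
      Filter.eventuallyEq_of_mem (isOpen_Ioo.mem_nhds hx) ih
    rw [hev.deriv_eq]
    have ht : HasDerivAt Real.tan (1 / Real.cos x ^ 2) x := Real.hasDerivAt_tan hc
    have h1 : HasDerivAt (fun y => (Pt n).eval (Real.tan y))
        ((Pt n).derivative.eval (Real.tan x) * (1 / Real.cos x ^ 2)) x :=
      ((Pt n).hasDerivAt (Real.tan x)).comp x ht
    have h3 : HasDerivAt (fun y => (Qt n).eval (Real.tan y))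
        ((Qt n).derivative.eval (Real.tan x) * (1 / Real.cos x ^ 2)) x :=
      ((Qt n).hasDerivAt (Real.tan x)).comp x ht
    have h2 : HasDerivAt (fun y => (Real.cos y)⁻¹) (Real.sin x / Real.cos x ^ 2) x := by
      have := (Real.hasDerivAt_cos x).inv hc
      simp at this
      exact this
    have h4 := (h2.mul h3).const_add ((Pt n).derivative.eval (Real.tan x) * (1 / Real.cos x ^ 2))
    have htot : HasDerivAt (fun y => (Pt n).eval (Real.tan y) + (Real.cos y)⁻¹ * (Qt n).eval (Real.tan y)) _ x := h1.add (h2.mul h3)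
    rw [htot.deriv]
    have hsin : Real.sin x = Real.tan x * Real.cos x := by
      rw [Real.tan_eq_sin_div_cos]; field_simp
    have hsq : 1 / Real.cos x ^ 2 = 1 + Real.tan x ^ 2 := by
      rw [Real.tan_eq_sin_div_cos]
      field_simp
      linarith [Real.sin_sq_add_cos_sq x]
    show _ = (Pt (n+1)).eval (Real.tan x) + (Real.cos x)⁻¹ * (Qt (n+1)).eval (Real.tan x)
    rw [Pt, Qt]
    simp only [Polynomial.eval_mul, Polynomial.eval_add, Polynomial.eval_one,
      Polynomial.eval_pow, Polynomial.eval_X]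
    rw [hsq, hsin]
    have hci : (Real.cos x)⁻¹ * Real.cos x = 1 := inv_mul_cancel₀ hc
    field_simp

lemma coeff_X_sq_mul (p : Polynomial ℝ) (k : ℕ) :
    (Polynomial.X^2 * p).coeff k = if 2 ≤ k then p.coeff (k-2) else 0 := by
  rw [mul_comm, Polynomial.coeff_mul_X_pow']

lemma Pt_coeff (n : ℕ) : ∀ k, (Pt n).coeff (k+1) = mo n k * (Nat.factorial k : ℝ) := by
  induction n with
  | zero =>
    intro k
    cases k with
    | zero => simp [Pt, mo]
    | succ j => simp [Pt, mo, Polynomial.coeff_X]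
  | succ n ih =>
    intro k
    rw [Pt, add_mul, one_mul, Polynomial.coeff_add, coeff_X_sq_mul,
      Polynomial.coeff_derivative, ih (k+1)]
    cases k with
    | zero =>
      rw [if_neg (by omega), mo]
      push_cast [Nat.factorial]
      ring
    | succ j =>
      rw [if_pos (by omega), show j+1+1-2 = j from rfl, Polynomial.coeff_derivative, ih j, mo]
      push_cast [Nat.factorial_succ]
      ring

lemma Pt_coeff_zero (n : ℕ) : (Pt (n+1)).coeff 0 = mo n 0 := by
  rw [Pt, add_mul, one_mul, Polynomial.coeff_add, coeff_X_sq_mul, if_neg (by omega),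
    Polynomial.coeff_derivative, Pt_coeff n 0]
  simp

lemma Qt_parity (n : ℕ) : ∀ k, Odd (n + k) → (Qt n).coeff k = 0 := by
  induction n with
  | zero =>
    intro k h
    have : k ≠ 0 := by rintro rfl; exact (Nat.not_odd_zero) h
    simp [Qt, Polynomial.coeff_one, this]
  | succ n ih =>
    intro k h
    rw [Qt, add_mul, one_mul, Polynomial.coeff_add, Polynomial.coeff_add, coeff_X_sq_mul,
      Polynomial.coeff_derivative, ih (k+1) (by rcases h with ⟨m,hm⟩; exact ⟨m, by omega⟩)]
    cases k with
    | zero =>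
      rw [if_neg (by omega)]
      simp
    | succ j =>
      rw [Polynomial.coeff_X_mul, ih j (by rcases h with ⟨m,hm⟩; exact ⟨m-1, by omega⟩)]
      rcases Nat.lt_or_ge (j+1) 2 with hj | hj
      · rw [if_neg (by omega)]
        simp
      · obtain ⟨i, rfl⟩ : ∃ i, j = i + 1 := ⟨j-1, by omega⟩
        rw [if_pos (by omega), show i+1+1-2 = i from rfl, Polynomial.coeff_derivative,
          ih (i+1) (by rcases h with ⟨m,hm⟩; exact ⟨m-1, by omega⟩)]
        simp

lemma eulerE_succ_even (m : ℕ) (hm : Even m) : eulerE (m+1) = mo m 0 := by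
  have hpi := Real.pi_pos
  have h0 : (0:ℝ) ∈ Set.Ioo (-(Real.pi/2)) (Real.pi/2) := by
    constructor <;> [linarith; linarith]
  rw [eulerE, iter_deriv_tan_sec (m+1) 0 h0, Real.tan_zero, Real.cos_zero, inv_one, one_mul,
    ← Polynomial.coeff_zero_eq_eval_zero, ← Polynomial.coeff_zero_eq_eval_zero,
    Pt_coeff_zero, Qt_parity (m+1) 0 (by rcases hm with ⟨r,hr⟩; exact ⟨r, by omega⟩), add_zero]

theorem hankel_interleaved_tangent (n : ℕ) :
    Matrix.det (fun i j : Fin n =>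
        if Even ((i : ℕ) + (j : ℕ)) then eulerE ((i : ℕ) + (j : ℕ) + 1) else 0)
      = (Nat.factorial n : ℝ) * ∏ k ∈ Finset.Icc 1 (n-1), (Nat.factorial (k) : ℝ)^2 := by
  have hentry : (fun i j : Fin n =>
      if Even ((i : ℕ) + (j : ℕ)) then eulerE ((i : ℕ) + (j : ℕ) + 1) else 0)
      = fun i j : Fin n => mo ((i:ℕ)+(j:ℕ)) 0 := by
    funext i j
    by_cases h : Even ((i:ℕ)+(j:ℕ))
    · rw [if_pos h, eulerE_succ_even _ h]
    · rw [if_neg h]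
      exact (mo_parity (k := 0) (by simpa using Nat.not_even_iff_odd.mp h)).symm
  rw [hentry, det_mo, prod_hw]
end

section
/- The Hankel determinants of the sequence of tangent numbers (E_1, E_3, E_5, E_7, ...) are H_n = Π_{k=1}^{2n−1} k!. -/
open Finset

section HankelAux
open Matrix

/-- weighted path counts: paths of `n` ±1-steps from `a` to `b`, each step from height `h`
having weight `h`. -/
def pw : ℕ → ℕ → ℕ → ℕ
  | 0, a, b => if a = b then 1 else 0
  | n+1, a, b => a * (pw n (a+1) b + pw n (a-1) b)

lemma pw_zero (a b : ℕ) : pw 0 a b = if a = b then 1 else 0 := rfl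
lemma pw_succ (n a b : ℕ) : pw (n+1) a b = a * (pw n (a+1) b + pw n (a-1) b) := rfl

lemma pw_eq_zero_of_lt (n : ℕ) : ∀ a b, a + n < b → pw n a b = 0 := by
  induction n with
  | zero => intro a b h; rw [pw_zero, if_neg (by omega)]
  | succ n ih =>
    intro a b h
    simp [pw_succ, ih (a+1) b (by omega), ih (a-1) b (by omega)]

lemma pw_eq_zero_of_gt (n : ℕ) : ∀ a b, b + n < a → pw n a b = 0 := by
  induction n with
  | zero => intro a b h; rw [pw_zero, if_neg (by omega)]
  | succ n ih =>
    intro a b h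
    rcases Nat.eq_zero_or_pos a with ha | ha
    · rw [pw_succ, ha]; ring
    · simp [pw_succ, ih (a+1) b (by omega), ih (a-1) b (by omega)]

lemma pw_parity (n : ℕ) : ∀ a b, (a + n) % 2 ≠ b % 2 → pw n a b = 0 := by
  induction n with
  | zero => intro a b h; rw [pw_zero, if_neg (by omega)]
  | succ n ih =>
    intro a b h
    rcases Nat.eq_zero_or_pos a with ha | ha
    · simp [pw_succ, ha]
    · simp [pw_succ, ih (a+1) b (by omega), ih (a-1) b (by omega)]

/-- backward (last-step) recurrence. -/
lemma pw_succ' (n : ℕ) : ∀ a b, pw (n+1) a b = (b+1) * pw n a (b+1) + (b-1) * pw n a (b-1) := by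
  induction n with
  | zero =>
    intro a b
    simp only [pw_succ, pw_zero]
    split_ifs <;> (try ring_nf) <;> omega
  | succ n ih =>
    intro a b
    rw [pw_succ, ih (a+1) b, ih (a-1) b, pw_succ n a (b+1), pw_succ n a (b-1)]
    ring

lemma pw_chapman (m : ℕ) : ∀ n a b, pw (m + n) a b =
    ∑ k ∈ Finset.range (a + m + 1), pw m a k * pw n k b := by
  induction m with
  | zero =>
    intro n a b
    rw [Finset.sum_eq_single a (fun k _ hk => by rw [pw_zero, if_neg (Ne.symm hk)]; ring)
      (fun h => absurd (Finset.mem_range.2 (by omega)) h)]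
    simp [pw_zero]
  | succ m ih =>
    intro n a b
    rcases Nat.eq_zero_or_pos a with ha | ha
    · subst ha
      rw [show m + 1 + n = (m+n) + 1 by ring, pw_succ]
      refine Eq.trans (by ring) (Finset.sum_eq_zero fun k _ => by rw [pw_succ]; ring).symm
    · have key : pw (m + 1 + n) a b = a * (pw (m+n) (a+1) b + pw (m+n) (a-1) b) := by
        rw [show m + 1 + n = (m + n) + 1 by ring, pw_succ]
      rw [key, ih n (a+1) b, ih n (a-1) b]
      -- extend the second sum's range from (a-1+m+1) to (a+1+m+1)
      have hext : ∑ k ∈ Finset.range (a - 1 + m + 1), pw m (a-1) k * pw n k b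
          = ∑ k ∈ Finset.range (a + 1 + m + 1), pw m (a-1) k * pw n k b := by
        apply Finset.sum_subset (Finset.range_subset_range.2 (by omega))
        intro k _ hk
        rw [pw_eq_zero_of_lt m (a-1) k (by simp only [Finset.mem_range] at hk; omega)]
        ring
      rw [hext, ← Finset.sum_add_distrib, Finset.mul_sum]
      have : a + (m + 1) + 1 = a + 1 + m + 1 := by ring
      rw [this]
      apply Finset.sum_congr rfl
      intro k _
      rw [pw_succ]
      ring

/-- all-up diagonal -/
lemma pw_diag_up (n : ℕ) : ∀ a, pw n (a+1) (a+1+n) * a.factorial = (a+n).factorial := by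
  induction n with
  | zero => intro a; simp [pw_zero]
  | succ n ih =>
    intro a
    rw [pw_succ, pw_eq_zero_of_lt n (a+1-1) (a+1+(n+1)) (by omega)]
    have h1 : a + 1 + (n + 1) = (a+1) + 1 + n := by ring
    have h2 : (a+1) * (pw n (a+1+1) (a+1+(n+1)) + 0) * a.factorial
        = pw n ((a+1)+1) ((a+1)+1+n) * (a+1).factorial := by
      rw [h1, Nat.factorial_succ]; ring
    rw [h2, ih (a+1)]
    congr 1
    omega

/-- all-down diagonal -/
lemma pw_diag_down (n : ℕ) : ∀ b, pw n (b+n) b * b.factorial = (b+n).factorial := by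
  induction n with
  | zero => intro b; simp [pw_zero]
  | succ n ih =>
    intro b
    rw [show b + (n+1) = (b+n) + 1 by ring, pw_succ,
      pw_eq_zero_of_gt n (b+n+1+1) b (by omega)]
    simp only [Nat.add_sub_cancel, zero_add]
    rw [mul_assoc, ih b, Nat.factorial_succ]

lemma sum_range_two_mul {M : Type*} [AddCommMonoid M] (n : ℕ) (f : ℕ → M) :
    ∑ k ∈ Finset.range (2 * n), f k = ∑ k ∈ Finset.range n, (f (2*k) + f (2*k+1)) := by
  induction n with
  | zero => simp
  | succ n ih =>
    rw [show 2 * (n+1) = (2*n) + 1 + 1 by ring, Finset.sum_range_succ, Finset.sum_range_succ,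
      ih, Finset.sum_range_succ, add_assoc]

lemma prod_range_two_mul {M : Type*} [CommMonoid M] (n : ℕ) (f : ℕ → M) :
    ∏ k ∈ Finset.range (2 * n), f k = ∏ k ∈ Finset.range n, (f (2*k) * f (2*k+1)) := by
  induction n with
  | zero => simp
  | succ n ih =>
    rw [show 2 * (n+1) = (2*n) + 1 + 1 by ring, Finset.prod_range_succ, Finset.prod_range_succ,
      ih, Finset.prod_range_succ, mul_assoc]

lemma pw_hankel_entry (n i j : ℕ) (hi : i < n) :
    pw (2*(i+j)+1) 1 0 = ∑ k ∈ Finset.range n, pw (2*i) 1 (2*k+1) * pw (2*j+1) (2*k+1) 0 := by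
  rw [show 2*(i+j)+1 = 2*i + (2*j+1) by ring, pw_chapman (2*i) (2*j+1) 1 0]
  rw [Finset.sum_subset (Finset.range_subset_range.2 (show 1 + 2*i + 1 ≤ 2*n by omega))
    (fun k _ hk => by
      rw [pw_eq_zero_of_lt (2*i) 1 k (by simp only [Finset.mem_range] at hk; omega)]; ring)]
  rw [sum_range_two_mul n (fun k => pw (2*i) 1 k * pw (2*j+1) k 0)]
  refine Finset.sum_congr rfl fun k _ => ?_
  rw [pw_parity (2*i) 1 (2*k) (by omega)]
  ring

lemma pw_det (n : ℕ) :
    Matrix.det (fun i j : Fin n => (pw (2*((i:ℕ)+(j:ℕ))+1) 1 0 : ℝ))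
      = ∏ k ∈ Finset.Icc 1 (2*n-1), (Nat.factorial k : ℝ) := by
  set U : Matrix (Fin n) (Fin n) ℝ := fun i k => (pw (2*(i:ℕ)) 1 (2*(k:ℕ)+1) : ℝ) with hU
  set V : Matrix (Fin n) (Fin n) ℝ := fun j k => (pw (2*(j:ℕ)+1) (2*(k:ℕ)+1) 0 : ℝ) with hV
  have hfact : (fun i j : Fin n => (pw (2*((i:ℕ)+(j:ℕ))+1) 1 0 : ℝ)) = U * Vᵀ := by
    ext i j
    rw [Matrix.mul_apply]
    simp only [Matrix.transpose_apply]
    simp only [hU, hV]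
    rw [Fin.sum_univ_eq_sum_range (fun k => ((pw (2*(i:ℕ)) 1 (2*k+1) : ℝ) * (pw (2*(j:ℕ)+1) (2*k+1) 0 : ℝ)))]
    exact_mod_cast pw_hankel_entry n (i:ℕ) (j:ℕ) i.isLt
  rw [hfact, Matrix.det_mul, Matrix.det_transpose]
  have hdU : U.det = ∏ i : Fin n, (Nat.factorial (2*(i:ℕ)) : ℝ) := by
    rw [Matrix.det_of_lowerTriangular U (fun i k hki => by
      simp only [hU]
      rw [pw_eq_zero_of_lt (2*(i:ℕ)) 1 (2*(k:ℕ)+1) (by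
        have : (i:ℕ) < (k:ℕ) := hki
        omega)]
      simp)]
    refine Finset.prod_congr rfl fun i _ => ?_
    simp only [hU]
    congr 1
    have := pw_diag_up (2*(i:ℕ)) 0
    simp only [Nat.factorial_zero, mul_one, zero_add] at this
    rw [show 2*(i:ℕ)+1 = 1 + 2*(i:ℕ) by ring, this]
  have hdV : V.det = ∏ j : Fin n, (Nat.factorial (2*(j:ℕ)+1) : ℝ) := by
    rw [Matrix.det_of_lowerTriangular V (fun j k hkj => by
      simp only [hV]
      rw [pw_eq_zero_of_gt (2*(j:ℕ)+1) (2*(k:ℕ)+1) 0 (by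
        have : (j:ℕ) < (k:ℕ) := hkj
        omega)]
      simp)]
    refine Finset.prod_congr rfl fun j _ => ?_
    simp only [hV]
    congr 1
    have := pw_diag_down (2*(j:ℕ)+1) 0
    simp only [Nat.factorial_zero, mul_one, zero_add] at this
    rw [this]
  rw [hdU, hdV, ← Finset.prod_mul_distrib]
  rw [Fin.prod_univ_eq_prod_range (fun i => (Nat.factorial (2*i) : ℝ) * (Nat.factorial (2*i+1) : ℝ))]
  rw [← prod_range_two_mul n (fun k => (Nat.factorial k : ℝ))]
  -- now: ∏ k in range (2n), (k! : ℝ) = ∏ k in Icc 1 (2n-1), (k! : ℝ)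
  cases n with
  | zero => simp
  | succ m =>
    rw [show (2*(m+1)-1 : ℕ) = 2*m+1 by omega]
    rw [show 2*(m+1) = (2*m+1)+1 by ring, Finset.prod_range_succ']
    rw [show Finset.Icc 1 (2*m+1) = Finset.Ico 1 (2*m+1+1) from (Finset.Ico_add_one_right_eq_Icc 1 _).symm,
      Finset.prod_Ico_eq_prod_range]
    simp [Nat.add_comm]

open Polynomial in
noncomputable def Apoly : ℕ → Polynomial ℝ
  | 0 => X
  | n+1 => (1 + X^2) * derivative (Apoly n)

open Polynomial in
noncomputable def Bpoly : ℕ → Polynomial ℝ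
  | 0 => 1
  | n+1 => (1 + X^2) * derivative (Bpoly n) + X * Bpoly n

open Polynomial in
lemma coeff_aux (q : Polynomial ℝ) (j : ℕ) :
    ((1 + X^2) * derivative q).coeff j
      = q.coeff (j+1) * (j+1) + (if 2 ≤ j then q.coeff (j-1) * ((j-1 : ℕ) : ℝ) else 0) := by
  rw [add_mul, one_mul, Polynomial.coeff_add, coeff_X_pow_mul', coeff_derivative]
  congr 1
  split_ifs with h
  · rw [coeff_derivative, show j-2+1 = j-1 by omega,
      Nat.cast_sub (show 2 ≤ j from h), Nat.cast_sub (show 1 ≤ j by omega)]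
    push_cast
    ring
  · rfl

open Polynomial in
lemma Apoly_coeff (n : ℕ) : ∀ j, (Apoly n).coeff j = (pw n 1 j : ℝ) := by
  induction n with
  | zero =>
    intro j
    rw [show Apoly 0 = X from rfl, coeff_X, pw_zero]
    by_cases h : 1 = j
    · rw [if_pos h, if_pos h]; norm_num
    · rw [if_neg h, if_neg h]; norm_num
  | succ n ih =>
    intro j
    rw [show Apoly (n+1) = (1 + X^2) * derivative (Apoly n) from rfl, coeff_aux,
      pw_succ', ih (j+1)]
    match j with
    | 0 => push_cast; ring
    | 1 => push_cast; ring
    | (k+2) =>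
      rw [if_pos (by omega), show k+2-1 = k+1 from rfl, ih (k+1)]
      push_cast
      ring

open Polynomial in
lemma Bpoly_coeff_parity (n : ℕ) : ∀ j, (j + n) % 2 = 1 → (Bpoly n).coeff j = 0 := by
  induction n with
  | zero =>
    intro j hj
    rw [show Bpoly 0 = 1 from rfl, coeff_one, if_neg (by omega)]
  | succ n ih =>
    intro j hj
    have hXB : ∀ m : ℕ, ((X : Polynomial ℝ) * Bpoly n).coeff m
        = if 1 ≤ m then (Bpoly n).coeff (m-1) else 0 := fun m => by
      rw [← pow_one (X : Polynomial ℝ), coeff_X_pow_mul']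
    rw [show Bpoly (n+1) = (1 + X^2) * derivative (Bpoly n) + X * Bpoly n from rfl,
      Polynomial.coeff_add, coeff_aux, ih (j+1) (by omega), hXB j]
    match j with
    | 0 => simp
    | (k+1) =>
      rw [show k+1-1 = k from rfl, ih k (by omega)]
      split_ifs <;> simp

open Polynomial in
lemma iter_tansec (n : ℕ) : ∀ x : ℝ, Real.cos x ≠ 0 →
    iteratedDeriv n (fun y : ℝ => Real.tan y + (Real.cos y)⁻¹) x
      = (Apoly n).eval (Real.tan x) + (Bpoly n).eval (Real.tan x) * (Real.cos x)⁻¹ := by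
  induction n with
  | zero =>
    intro x hx
    simp [show Apoly 0 = X from rfl, show Bpoly 0 = 1 from rfl]
  | succ n ih =>
    intro x hx
    rw [iteratedDeriv_succ]
    have hs : IsOpen {y : ℝ | Real.cos y ≠ 0} :=
      isOpen_compl_singleton.preimage Real.continuous_cos
    have heq : iteratedDeriv n (fun y : ℝ => Real.tan y + (Real.cos y)⁻¹) =ᶠ[nhds x]
        (fun y => (Apoly n).eval (Real.tan y) + (Bpoly n).eval (Real.tan y) * (Real.cos y)⁻¹) :=
      Filter.eventuallyEq_of_mem (hs.mem_nhds hx) (fun y hy => ih y hy)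
    rw [heq.deriv_eq]
    have hA : HasDerivAt (fun y : ℝ => (Apoly n).eval (Real.tan y))
        ((Apoly n).derivative.eval (Real.tan x) * (1 / Real.cos x ^ 2)) x :=
      ((Apoly n).hasDerivAt (Real.tan x)).comp x (Real.hasDerivAt_tan hx)
    have hB : HasDerivAt (fun y : ℝ => (Bpoly n).eval (Real.tan y))
        ((Bpoly n).derivative.eval (Real.tan x) * (1 / Real.cos x ^ 2)) x :=
      ((Bpoly n).hasDerivAt (Real.tan x)).comp x (Real.hasDerivAt_tan hx)
    have hsec : HasDerivAt (fun y : ℝ => (Real.cos y)⁻¹)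
        (-(-Real.sin x) / Real.cos x ^ 2) x := (Real.hasDerivAt_cos x).inv hx
    rw [(show HasDerivAt (fun y => (Apoly n).eval (Real.tan y) + (Bpoly n).eval (Real.tan y) * (Real.cos y)⁻¹) _ x from hA.add (hB.mul hsec)).deriv]
    rw [show Apoly (n+1) = (1 + X^2) * derivative (Apoly n) from rfl,
      show Bpoly (n+1) = (1 + X^2) * derivative (Bpoly n) + X * Bpoly n from rfl]
    simp only [Polynomial.eval_mul, Polynomial.eval_add, Polynomial.eval_one,
      Polynomial.eval_pow, Polynomial.eval_X]
    have h1 : (1 : ℝ) + Real.tan x ^ 2 = 1 / Real.cos x ^ 2 := by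
      rw [Real.tan_eq_sin_div_cos, div_pow]
      field_simp
      linarith [Real.sin_sq_add_cos_sq x]
    rw [h1, Real.tan_eq_sin_div_cos]
    field_simp

theorem eulerE_eq_pw (m : ℕ) : eulerE (2*m+1) = (pw (2*m+1) 1 0 : ℝ) := by
  rw [eulerE]
  have h0 : Real.cos 0 ≠ 0 := by rw [Real.cos_zero]; norm_num
  rw [iter_tansec (2*m+1) 0 h0, Real.tan_zero,
    ← Polynomial.coeff_zero_eq_eval_zero, ← Polynomial.coeff_zero_eq_eval_zero,
    Apoly_coeff, Bpoly_coeff_parity (2*m+1) 0 (by omega)]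
  ring

end HankelAux

theorem hankel_tangent (n : ℕ) :
    Matrix.det (fun i j : Fin n => eulerE (2 * ((i : ℕ) + (j : ℕ)) + 1))
      = ∏ k ∈ Finset.Icc 1 (2*n-1), (Nat.factorial (k) : ℝ) := by
  rw [show (fun i j : Fin n => eulerE (2 * ((i : ℕ) + (j : ℕ)) + 1))
      = (fun i j : Fin n => (pw (2*((i:ℕ)+(j:ℕ))+1) 1 0 : ℝ)) from
    funext fun i => funext fun j => eulerE_eq_pw _]
  exact pw_det n
end
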